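/- arXiv:1411.6532 — 9 statements merged into one kernel-verified Lean document; each statement's English description precedes it below -/
import Mathlib

section
/- Let G be a simple connected graph on vertex set V = {1,...,n}, let ℓ be a Laplacian eigenvalue of G admitting a nonzero eigenvector X = (x_1,...,x_n)^T whose entries sum to zero, and let λ and μ be real numbers such that every pair of adjacent vertices of G has at least λ common neighbors and every pair of distinct nonadjacent vertices of G has at least μ common neighbors. Then Σ_{i=1}^n [ (d_i − ℓ)² − Σ_{j ∈ G_1(i)} d_j + λℓ + μ(n − ℓ) ] x_i² ≤ 0. -/
open Finset

/-- **Theorem (main inequality).** For a simple connected graph `G` on `{1,...,n}`,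
a nontrivial Laplacian eigenvalue `ℓ` with nonzero eigenvector `X` summing to zero,
and reals `λ ≤ λ(G)`, `μ ≤ μ(G)`:
`∑ i [(d_i − ℓ)² − ∑_{j∈N(i)} d_j + λℓ + μ(n − ℓ)] x_i² ≤ 0`. -/
theorem main_inequality (n : ℕ) (G : SimpleGraph (Fin n)) [DecidableRel G.Adj]
    (hconn : G.Connected)
    (ℓ : ℝ) (X : Fin n → ℝ) (hX : X ≠ 0) (hsum : ∑ i, X i = 0)
    (heig : (G.lapMatrix ℝ).mulVec X = ℓ • X)
    (lam mu : ℝ)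
    (hlam : ∀ i j : Fin n, G.Adj i j →
      lam ≤ ((G.neighborFinset i ∩ G.neighborFinset j).card : ℝ))
    (hmu : ∀ i j : Fin n, i ≠ j → ¬ G.Adj i j →
      mu ≤ ((G.neighborFinset i ∩ G.neighborFinset j).card : ℝ)) :
    ∑ i, (((G.degree i : ℝ) - ℓ) ^ 2 - (∑ j ∈ G.neighborFinset i, (G.degree j : ℝ))
        + lam * ℓ + mu * ((n : ℝ) - ℓ)) * X i ^ 2 ≤ 0 := by
  classical
  set a : Fin n → Fin n → ℝ := fun i j => if G.Adj i j then (1:ℝ) else 0 with ha_def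
  have ha_symm : ∀ i j, a i j = a j i := by
    intro i j
    simp only [ha_def]
    by_cases h : G.Adj i j
    · simp [h, h.symm]
    · rw [if_neg h, if_neg (fun h' : G.Adj j i => h h'.symm)]
  have h_row : ∀ i, ∑ j, a i j = (G.degree i : ℝ) := by
    intro i
    simp only [ha_def]
    rw [Finset.sum_boole]
    norm_cast
    simp [SimpleGraph.degree, SimpleGraph.neighborFinset_eq_filter]
  have h_nbr : ∀ (i : Fin n) (f : Fin n → ℝ),
      ∑ j ∈ G.neighborFinset i, f j = ∑ j, a i j * f j := by
    intro i f
    simp only [ha_def]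
    rw [SimpleGraph.neighborFinset_eq_filter, Finset.sum_filter]
    exact Finset.sum_congr rfl fun j _ => by split <;> simp
  -- eigen equation pointwise
  have h_eig : ∀ i, ∑ j, a i j * X j = ((G.degree i : ℝ) - ℓ) * X i := by
    intro i
    have h1 := congrFun heig i
    rw [SimpleGraph.lapMatrix_mulVec_apply] at h1
    simp only [Pi.smul_apply, smul_eq_mul] at h1
    rw [h_nbr i X] at h1
    linarith
  -- common neighbor counts
  set c : Fin n → Fin n → ℝ := fun j k => ∑ i, a i j * a i k with hc_def
  have h_card : ∀ j k, c j k = ((G.neighborFinset j ∩ G.neighborFinset k).card : ℝ) := by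
    intro j k
    simp only [hc_def, ha_def]
    have key : ∀ i : Fin n, (if G.Adj i j then (1:ℝ) else 0) * (if G.Adj i k then (1:ℝ) else 0)
        = if (G.Adj j i ∧ G.Adj k i) then (1:ℝ) else 0 := by
      intro i
      by_cases h1 : G.Adj i j <;> by_cases h2 : G.Adj i k
      · simp [h1, h2, h1.symm, h2.symm]
      · have : ¬(G.Adj j i ∧ G.Adj k i) := fun h => h2 h.2.symm
        simp [h1, h2, this]
      · have : ¬(G.Adj j i ∧ G.Adj k i) := fun h => h1 h.1.symm
        simp [h1, h2, this]
      · have : ¬(G.Adj j i ∧ G.Adj k i) := fun h => h1 h.1.symm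
        simp [h1, h2, this]
    rw [Finset.sum_congr rfl fun i _ => key i, Finset.sum_boole]
    norm_cast
    congr 1
    ext i
    simp [SimpleGraph.mem_neighborFinset]
  have h_c_diag : ∀ j, c j j = (G.degree j : ℝ) := by
    intro j
    have : ∀ i : Fin n, a i j * a i j = a j i := by
      intro i
      rw [← ha_symm]
      simp only [ha_def]
      split <;> norm_num
    simp only [hc_def]
    rw [Finset.sum_congr rfl fun i _ => this i, h_row]
  have h_c_row : ∀ j, ∑ k, c j k = ∑ i, a j i * (G.degree i : ℝ) := by
    intro j
    simp only [hc_def]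
    rw [Finset.sum_comm]
    refine Finset.sum_congr rfl fun i _ => ?_
    rw [← Finset.mul_sum, h_row, ha_symm]
  -- the comparison matrix b
  set b : Fin n → Fin n → ℝ :=
    fun j k => if j = k then (G.degree j : ℝ) else (if G.Adj j k then lam else mu) with hb_def
  have h_b_decomp : ∀ j k, b j k
      = (if j = k then (G.degree j : ℝ) - mu else 0) + (lam - mu) * a j k + mu := by
    intro j k
    simp only [hb_def, ha_def]
    by_cases h : j = k
    · subst h; simp [G.irrefl]
    · by_cases hadj : G.Adj j k <;> simp [h, hadj] <;> ring
  have h_b_le_c : ∀ j k, j ≠ k → b j k ≤ c j k := by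
    intro j k hjk
    rw [h_card]
    simp only [hb_def, if_neg hjk]
    by_cases hadj : G.Adj j k
    · rw [if_pos hadj]; exact hlam j k hadj
    · rw [if_neg hadj]; exact hmu j k hjk hadj
  have h_b_row : ∀ j, ∑ k, b j k
      = ((G.degree j : ℝ) - mu) + (lam - mu) * (G.degree j : ℝ) + mu * n := by
    intro j
    rw [Finset.sum_congr rfl fun k _ => h_b_decomp j k]
    rw [Finset.sum_add_distrib, Finset.sum_add_distrib, ← Finset.mul_sum, h_row]
    congr 1
    · congr 1
      simp
    · simp [Finset.card_univ, mul_comm]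
  -- key pointwise inequality
  have hkey : ∀ j k, c j k * (X j * X k)
      ≤ b j k * (X j * X k) + (c j k - b j k) * ((X j ^ 2 + X k ^ 2) / 2) := by
    intro j k
    by_cases h : j = k
    · subst h
      have hb : b j j = c j j := by simp only [hb_def, if_pos rfl]; rw [h_c_diag]
      rw [hb, sub_self, zero_mul, add_zero]
    · nlinarith [mul_nonneg (sub_nonneg.2 (h_b_le_c j k h)) (sq_nonneg (X j - X k))]
  -- abbreviations
  set K : ℝ := ∑ i, X i ^ 2 with hK_def
  set Ed : ℝ := ∑ i, (G.degree i : ℝ) * X i ^ 2 with hEd_def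
  set E : ℝ := ∑ j, ∑ k, a j k * (X j * X k) with hE_def
  set T : Fin n → ℝ := fun j => ∑ i, a j i * (G.degree i : ℝ) with hT_def
  set TT : ℝ := ∑ j, T j * X j ^ 2 with hTT_def
  -- E in terms of Ed, K
  have hE : E = Ed - ℓ * K := by
    simp only [hE_def, hEd_def, hK_def]
    rw [Finset.mul_sum, ← Finset.sum_sub_distrib]
    refine Finset.sum_congr rfl fun j _ => ?_
    have : ∑ k, a j k * (X j * X k) = X j * ∑ k, a j k * X k := by
      rw [Finset.mul_sum]
      exact Finset.sum_congr rfl fun k _ => by ring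
    rw [this, h_eig j]
    ring
  -- sum of squares expansion
  have hsq : ∑ i, ((G.degree i : ℝ) - ℓ) ^ 2 * X i ^ 2
      = ∑ j, ∑ k, c j k * (X j * X k) := by
    have step1 : ∀ i : Fin n, ((G.degree i : ℝ) - ℓ) ^ 2 * X i ^ 2
        = (∑ j, a i j * X j) ^ 2 := by
      intro i; rw [h_eig i]; ring
    rw [Finset.sum_congr rfl fun i _ => step1 i]
    have step2 : ∀ i : Fin n, (∑ j, a i j * X j) ^ 2
        = ∑ j, ∑ k, (a i j * X j) * (a i k * X k) := by
      intro i
      rw [sq, Finset.sum_mul_sum]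
    rw [Finset.sum_congr rfl fun i _ => step2 i, Finset.sum_comm]
    refine Finset.sum_congr rfl fun j _ => ?_
    rw [Finset.sum_comm]
    refine Finset.sum_congr rfl fun k _ => ?_
    simp only [hc_def]
    rw [Finset.sum_mul]
    exact Finset.sum_congr rfl fun i _ => by ring
  -- main bound
  have hmain : ∑ j, ∑ k, c j k * (X j * X k)
      ≤ (∑ j, ∑ k, b j k * (X j * X k))
        + ∑ j, ∑ k, (c j k - b j k) * ((X j ^ 2 + X k ^ 2) / 2) := by
    rw [← Finset.sum_add_distrib]
    refine Finset.sum_le_sum fun j _ => ?_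
    rw [← Finset.sum_add_distrib]
    exact Finset.sum_le_sum fun k _ => hkey j k
  -- compute the b-part
  have hP1 : ∑ j, ∑ k, b j k * (X j * X k) = Ed - mu * K + (lam - mu) * E := by
    have inner : ∀ j : Fin n, ∑ k, b j k * (X j * X k)
        = ((G.degree j : ℝ) - mu) * X j ^ 2 + (lam - mu) * ∑ k, a j k * (X j * X k) := by
      intro j
      have e1 : ∀ k : Fin n, b j k * (X j * X k)
          = (if j = k then ((G.degree j : ℝ) - mu) * (X j * X k) else 0)
            + (lam - mu) * (a j k * (X j * X k)) + mu * X j * X k := by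
        intro k
        rw [h_b_decomp j k]
        by_cases h : j = k <;> simp [h] <;> ring
      rw [Finset.sum_congr rfl fun k _ => e1 k, Finset.sum_add_distrib,
        Finset.sum_add_distrib, Finset.sum_ite_eq univ j (fun k => ((G.degree j : ℝ) - mu) * (X j * X k))]
      rw [← Finset.mul_sum, ← Finset.mul_sum]
      rw [hsum]
      simp only [Finset.mem_univ, if_true, mul_zero, add_zero]
      ring
    rw [Finset.sum_congr rfl fun j _ => inner j, Finset.sum_add_distrib,
      ← Finset.mul_sum, ← hE_def]
    have hfold : ∑ x, ((G.degree x : ℝ) - mu) * X x ^ 2 = Ed - mu * K := by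
      simp only [hEd_def, hK_def]
      rw [Finset.mul_sum, ← Finset.sum_sub_distrib]
      exact Finset.sum_congr rfl fun x _ => by ring
    rw [hfold]
  -- compute the error part
  have hP2 : ∑ j, ∑ k, (c j k - b j k) * ((X j ^ 2 + X k ^ 2) / 2)
      = ∑ j, (∑ k, (c j k - b j k)) * X j ^ 2 := by
    have hcb_symm : ∀ j k, c j k - b j k = c k j - b k j := by
      intro j k
      have hc : c j k = c k j := by
        simp only [hc_def]
        exact Finset.sum_congr rfl fun i _ => by ring
      have hb : b j k = b k j := by
        simp only [hb_def]
        by_cases h : j = k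
        · subst h; rfl
        · have h' : ¬ k = j := fun hh => h hh.symm
          rw [if_neg h, if_neg h']
          by_cases hadj : G.Adj j k
          · rw [if_pos hadj, if_pos hadj.symm]
          · rw [if_neg hadj, if_neg (fun hh => hadj hh.symm)]
      rw [hc, hb]
    have split : ∀ j k : Fin n, (c j k - b j k) * ((X j ^ 2 + X k ^ 2) / 2)
        = (c j k - b j k) * (X j ^ 2 / 2) + (c j k - b j k) * (X k ^ 2 / 2) := by
      intro j k; ring
    calc ∑ j, ∑ k, (c j k - b j k) * ((X j ^ 2 + X k ^ 2) / 2)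
        = ∑ j, ∑ k, ((c j k - b j k) * (X j ^ 2 / 2) + (c j k - b j k) * (X k ^ 2 / 2)) :=
          Finset.sum_congr rfl fun j _ => Finset.sum_congr rfl fun k _ => split j k
      _ = (∑ j, ∑ k, (c j k - b j k) * (X j ^ 2 / 2))
            + ∑ j, ∑ k, (c j k - b j k) * (X k ^ 2 / 2) := by
          rw [← Finset.sum_add_distrib]
          exact Finset.sum_congr rfl fun j _ => Finset.sum_add_distrib
      _ = (∑ j, ∑ k, (c j k - b j k) * (X j ^ 2 / 2))
            + ∑ j, ∑ k, (c j k - b j k) * (X j ^ 2 / 2) := by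
          congr 1
          rw [Finset.sum_comm]
          exact Finset.sum_congr rfl fun j _ => Finset.sum_congr rfl fun k _ => by
            rw [hcb_symm j k]
      _ = ∑ j, (∑ k, (c j k - b j k)) * X j ^ 2 := by
          rw [← Finset.sum_add_distrib]
          refine Finset.sum_congr rfl fun j _ => ?_
          rw [← Finset.sum_add_distrib, Finset.sum_mul]
          exact Finset.sum_congr rfl fun k _ => by ring
  -- the error coefficient
  have hR : ∑ j, (∑ k, (c j k - b j k)) * X j ^ 2
      = TT - (1 + (lam - mu)) * Ed + (mu - mu * n) * K := by
    have coeff : ∀ j : Fin n, ∑ k, (c j k - b j k)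
        = T j - (((G.degree j : ℝ) - mu) + (lam - mu) * (G.degree j : ℝ) + mu * n) := by
      intro j
      rw [Finset.sum_sub_distrib, h_c_row, h_b_row, hT_def]
    rw [Finset.sum_congr rfl fun j _ => by rw [coeff j]]
    simp only [hTT_def, hEd_def, hK_def]
    rw [Finset.mul_sum, Finset.mul_sum, ← Finset.sum_sub_distrib, ← Finset.sum_add_distrib]
    exact Finset.sum_congr rfl fun j _ => by ring
  -- combine
  have final : ∑ i, ((G.degree i : ℝ) - ℓ) ^ 2 * X i ^ 2
      ≤ TT - (lam * ℓ + mu * ((n : ℝ) - ℓ)) * K := by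
    have hcalc : (Ed - mu * K + (lam - mu) * E)
        + (TT - (1 + (lam - mu)) * Ed + (mu - mu * n) * K)
        = TT - (lam * ℓ + mu * ((n : ℝ) - ℓ)) * K := by
      rw [hE]; ring
    calc ∑ i, ((G.degree i : ℝ) - ℓ) ^ 2 * X i ^ 2
        = ∑ j, ∑ k, c j k * (X j * X k) := hsq
      _ ≤ (∑ j, ∑ k, b j k * (X j * X k))
            + ∑ j, ∑ k, (c j k - b j k) * ((X j ^ 2 + X k ^ 2) / 2) := hmain
      _ = (Ed - mu * K + (lam - mu) * E)
            + (TT - (1 + (lam - mu)) * Ed + (mu - mu * n) * K) := by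
          rw [hP1, hP2, hR]
      _ = TT - (lam * ℓ + mu * ((n : ℝ) - ℓ)) * K := hcalc
  -- rewrite the goal
  have hgoal : ∑ i, (((G.degree i : ℝ) - ℓ) ^ 2 - (∑ j ∈ G.neighborFinset i, (G.degree j : ℝ))
        + lam * ℓ + mu * ((n : ℝ) - ℓ)) * X i ^ 2
      = (∑ i, ((G.degree i : ℝ) - ℓ) ^ 2 * X i ^ 2) - TT
        + (lam * ℓ + mu * ((n : ℝ) - ℓ)) * K := by
    simp only [hTT_def, hK_def, hT_def]
    rw [Finset.mul_sum, ← Finset.sum_sub_distrib, ← Finset.sum_add_distrib]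
    refine Finset.sum_congr rfl fun i _ => ?_
    rw [h_nbr i (fun j => (G.degree j : ℝ))]
    ring
  rw [hgoal]
  linarith [final]
end

section
/- Let G be a simple connected graph on vertex set V = {1,...,n}, let ℓ be a Laplacian eigenvalue of G admitting a nonzero eigenvector X = (x_1,...,x_n)^T whose entries sum to zero, set λ(G) = min over adjacent pairs of vertices of the number of their common neighbors and μ(G) = min over distinct nonadjacent pairs of vertices of the number of their common neighbors (G not complete). Then equality Σ_{i=1}^n [ (d_i − ℓ)² − Σ_{j ∈ G_1(i)} d_j + λ(G)ℓ + μ(G)(n − ℓ) ] x_i² = 0 holds if and only if for all distinct vertices i, j: (a) if ij is an edge and x_i ≠ x_j then i and j have exactly λ(G) common neighbors, and (b) if ij is not an edge and x_i ≠ x_j then i and j have exactly μ(G) common neighbors. -/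
open Finset

/-- **Theorem (equality condition in the main inequality).** For a simple connected
non-complete graph `G`, a nontrivial Laplacian eigenvalue `ℓ` with nonzero eigenvector
`X` summing to zero, and `λ(G)`, `μ(G)` the minimum numbers of common neighbors over
adjacent resp. distinct nonadjacent pairs, equality
`∑ i [(d_i − ℓ)² − ∑_{j∈N(i)} d_j + λ(G)ℓ + μ(G)(n − ℓ)] x_i² = 0` holds iff
for all distinct `i j`: adjacent with `x_i ≠ x_j` implies exactly `λ(G)` common
neighbors, and nonadjacent with `x_i ≠ x_j` implies exactly `μ(G)` common neighbors. -/
theorem main_equality_condition (n : ℕ) (G : SimpleGraph (Fin n)) [DecidableRel G.Adj]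
    (hconn : G.Connected) (hnotcomplete : G ≠ ⊤)
    (ℓ : ℝ) (X : Fin n → ℝ) (hX : X ≠ 0) (hsum : ∑ i, X i = 0)
    (heig : (G.lapMatrix ℝ).mulVec X = ℓ • X)
    (lamG muG : ℕ)
    (hlamG : IsLeast {m : ℕ | ∃ i j : Fin n, G.Adj i j ∧
      (G.neighborFinset i ∩ G.neighborFinset j).card = m} lamG)
    (hmuG : IsLeast {m : ℕ | ∃ i j : Fin n, i ≠ j ∧ ¬ G.Adj i j ∧
      (G.neighborFinset i ∩ G.neighborFinset j).card = m} muG) :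
    (∑ i, (((G.degree i : ℝ) - ℓ) ^ 2 - (∑ j ∈ G.neighborFinset i, (G.degree j : ℝ))
        + (lamG : ℝ) * ℓ + (muG : ℝ) * ((n : ℝ) - ℓ)) * X i ^ 2 = 0)
    ↔ (∀ i j : Fin n, i ≠ j →
        (G.Adj i j → X i ≠ X j →
          (G.neighborFinset i ∩ G.neighborFinset j).card = lamG) ∧
        (¬ G.Adj i j → X i ≠ X j →
          (G.neighborFinset i ∩ G.neighborFinset j).card = muG)) := by
  classical
  -- abbreviations
  set a : Fin n → Fin n → ℝ := fun i j => if G.Adj i j then 1 else 0 with ha_def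
  set d : Fin n → ℝ := fun i => (G.degree i : ℝ) with hd_def
  set c : Fin n → Fin n → ℝ :=
    fun j k => ((G.neighborFinset j ∩ G.neighborFinset k).card : ℝ) with hc_def
  set w : Fin n → Fin n → ℝ :=
    fun j k => if G.Adj j k then (lamG : ℝ) else (muG : ℝ) with hw_def
  have ha_symm : ∀ i j, a i j = a j i := by
    intro i j; simp only [ha_def]
    by_cases h : G.Adj i j
    · rw [if_pos h, if_pos h.symm]
    · rw [if_neg h, if_neg (fun h' => h h'.symm)]
  have hc_symm : ∀ i j, c i j = c j i := by
    intro i j; simp only [hc_def]; rw [Finset.inter_comm]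
  have hw_symm : ∀ i j, w i j = w j i := by
    intro i j; simp only [hw_def]
    by_cases h : G.Adj i j
    · rw [if_pos h, if_pos h.symm]
    · rw [if_neg h, if_neg (fun h' => h h'.symm)]
  have hNsum : ∀ (i : Fin n) (f : Fin n → ℝ),
      ∑ j ∈ G.neighborFinset i, f j = ∑ j, a i j * f j := by
    intro i f
    rw [SimpleGraph.neighborFinset_eq_filter, Finset.sum_filter]
    refine Finset.sum_congr rfl fun j _ => ?_
    by_cases h : G.Adj i j <;> simp [ha_def, h]
  have hd : ∀ i, d i = ∑ j, a i j := by
    intro i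
    calc d i = ∑ _j ∈ G.neighborFinset i, (1 : ℝ) := by
          show ((G.degree i : ℕ) : ℝ) = _
          rw [SimpleGraph.degree, Finset.card_eq_sum_ones, Nat.cast_sum, Nat.cast_one]
      _ = ∑ j, a i j * 1 := hNsum i _
      _ = ∑ j, a i j := by simp
  have hdc : ∀ i, d i = ∑ j, a j i := by
    intro i; rw [hd i]; exact Finset.sum_congr rfl fun j _ => ha_symm i j
  have hA : ∀ i, ∑ j, a i j * X j = (d i - ℓ) * X i := by
    intro i
    have h := congrFun heig i
    rw [SimpleGraph.lapMatrix_mulVec_apply] at h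
    simp only [Pi.smul_apply, smul_eq_mul] at h
    rw [hNsum i X] at h
    have h' : d i * X i - ∑ j, a i j * X j = ℓ * X i := h
    linear_combination -h'
  have hc_sum : ∀ j k, c j k = ∑ i, a j i * a k i := by
    intro j k
    have hterm : ∀ i, a j i * a k i
        = if i ∈ G.neighborFinset j ∩ G.neighborFinset k then (1 : ℝ) else 0 := by
      intro i
      by_cases h1 : G.Adj j i <;> by_cases h2 : G.Adj k i <;>
        simp [ha_def, h1, h2, SimpleGraph.mem_neighborFinset]
    show ((G.neighborFinset j ∩ G.neighborFinset k).card : ℝ) = _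
    rw [Finset.sum_congr rfl fun i _ => hterm i, Finset.sum_ite_mem, Finset.univ_inter,
      Finset.sum_const, nsmul_eq_mul, mul_one]
  -- Step 1 : quadratic form of A²
  have step1 : ∑ i, (d i - ℓ) ^ 2 * X i ^ 2 = ∑ j, ∑ k, c j k * (X j * X k) := by
    calc ∑ i, (d i - ℓ) ^ 2 * X i ^ 2
        = ∑ i, (∑ j, a i j * X j) * (∑ k, a i k * X k) := by
          refine Finset.sum_congr rfl fun i _ => ?_
          rw [hA i]; ring
      _ = ∑ i, ∑ j, ∑ k, (a i j * X j) * (a i k * X k) := by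
          refine Finset.sum_congr rfl fun i _ => ?_
          rw [Finset.sum_mul_sum]
      _ = ∑ j, ∑ i, ∑ k, (a i j * X j) * (a i k * X k) := Finset.sum_comm
      _ = ∑ j, ∑ k, ∑ i, (a i j * X j) * (a i k * X k) := by
          exact Finset.sum_congr rfl fun j _ => Finset.sum_comm
      _ = ∑ j, ∑ k, c j k * (X j * X k) := by
          refine Finset.sum_congr rfl fun j _ => Finset.sum_congr rfl fun k _ => ?_
          rw [hc_sum j k, Finset.sum_mul]
          refine Finset.sum_congr rfl fun i _ => ?_
          rw [ha_symm j i, ha_symm k i]; ring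
  -- Step 2 : row sums of common-neighbor matrix
  have step2 : ∀ j, ∑ k, a j k * d k = ∑ k, c j k := by
    intro j
    calc ∑ k, a j k * d k = ∑ k, ∑ m, a j k * a k m := by
          refine Finset.sum_congr rfl fun k _ => ?_
          rw [hd k, Finset.mul_sum]
      _ = ∑ m, ∑ k, a j k * a k m := Finset.sum_comm
      _ = ∑ m, c j m := by
          refine Finset.sum_congr rfl fun m _ => ?_
          rw [hc_sum j m]
          exact Finset.sum_congr rfl fun k _ => by rw [ha_symm m k]
  -- Eigenvalue identity over edges
  have hP : ∑ j, ∑ k, a j k * (X j - X k) ^ 2 = 2 * ℓ * ∑ i, X i ^ 2 := by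
    have h1 : ∑ j, ∑ k, a j k * X j ^ 2 = ∑ j, d j * X j ^ 2 := by
      refine Finset.sum_congr rfl fun j _ => ?_
      rw [← Finset.sum_mul, ← hd j]
    have h2 : ∑ j, ∑ k, a j k * X k ^ 2 = ∑ k, d k * X k ^ 2 := by
      rw [Finset.sum_comm]
      refine Finset.sum_congr rfl fun k _ => ?_
      rw [← Finset.sum_mul, ← hdc k]
    have h3 : ∑ j, ∑ k, a j k * (X j * X k) = ∑ j, (d j - ℓ) * X j ^ 2 := by
      refine Finset.sum_congr rfl fun j _ => ?_
      calc ∑ k, a j k * (X j * X k) = X j * ∑ k, a j k * X k := by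
            rw [Finset.mul_sum]; exact Finset.sum_congr rfl fun k _ => by ring
        _ = (d j - ℓ) * X j ^ 2 := by rw [hA j]; ring
    have expand : ∑ j, ∑ k, a j k * (X j - X k) ^ 2
        = ∑ j, ∑ k, (a j k * X j ^ 2 + a j k * X k ^ 2 - 2 * (a j k * (X j * X k))) := by
      refine Finset.sum_congr rfl fun j _ => Finset.sum_congr rfl fun k _ => by ring
    rw [expand]
    simp only [Finset.sum_add_distrib, Finset.sum_sub_distrib, ← Finset.mul_sum]
    rw [h1, h2, h3]
    have : ∑ j, (d j - ℓ) * X j ^ 2 = ∑ j, d j * X j ^ 2 - ℓ * ∑ j, X j ^ 2 := by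
      rw [Finset.mul_sum, ← Finset.sum_sub_distrib]
      exact Finset.sum_congr rfl fun j _ => by ring
    rw [this]; ring
  -- all-pairs identity
  have hQ : ∑ j, ∑ k, (X j - X k) ^ 2 = 2 * (n : ℝ) * ∑ i, X i ^ 2 := by
    have expand : ∑ j, ∑ k, (X j - X k) ^ 2
        = ∑ j, ∑ k, (X j ^ 2 + X k ^ 2 - 2 * (X j * X k)) := by
      refine Finset.sum_congr rfl fun j _ => Finset.sum_congr rfl fun k _ => by ring
    rw [expand]
    simp only [Finset.sum_add_distrib, Finset.sum_sub_distrib]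
    have e1 : ∑ j : Fin n, ∑ _k : Fin n, X j ^ 2 = (n : ℝ) * ∑ j, X j ^ 2 := by
      simp [Finset.sum_const, Finset.mul_sum, mul_comm]
    have e2 : ∑ _j : Fin n, ∑ k : Fin n, X k ^ 2 = (n : ℝ) * ∑ k, X k ^ 2 := by
      simp [Finset.sum_const]
    have e3 : ∑ j, ∑ k, 2 * (X j * X k) = 2 * ((∑ j, X j) * (∑ k, X k)) := by
      rw [Finset.sum_mul_sum, Finset.mul_sum]
      refine Finset.sum_congr rfl fun j _ => ?_
      rw [Finset.mul_sum]
    rw [e1, e2, e3, hsum]; ring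
  -- weighted identity
  have hW : ∑ j, ∑ k, w j k * (X j - X k) ^ 2
      = 2 * ((lamG : ℝ) * ℓ + (muG : ℝ) * ((n : ℝ) - ℓ)) * ∑ i, X i ^ 2 := by
    have hw_split : ∀ j k, w j k * (X j - X k) ^ 2
        = (muG : ℝ) * (X j - X k) ^ 2
          + ((lamG : ℝ) - (muG : ℝ)) * (a j k * (X j - X k) ^ 2) := by
      intro j k
      by_cases h : G.Adj j k <;> simp [hw_def, ha_def, h] <;> ring
    calc ∑ j, ∑ k, w j k * (X j - X k) ^ 2
        = ∑ j, ∑ k, ((muG : ℝ) * (X j - X k) ^ 2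
            + ((lamG : ℝ) - (muG : ℝ)) * (a j k * (X j - X k) ^ 2)) := by
          exact Finset.sum_congr rfl fun j _ => Finset.sum_congr rfl fun k _ => hw_split j k
      _ = (muG : ℝ) * (∑ j, ∑ k, (X j - X k) ^ 2)
            + ((lamG : ℝ) - (muG : ℝ)) * (∑ j, ∑ k, a j k * (X j - X k) ^ 2) := by
          simp only [Finset.sum_add_distrib, ← Finset.mul_sum]
      _ = _ := by rw [hP, hQ]; ring
  -- antisymmetry vanishing
  have hzero : ∑ j, ∑ k, c j k * (X k ^ 2 - X j ^ 2) = 0 := by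
    have hcomm : ∑ j, ∑ k, c j k * (X k ^ 2 - X j ^ 2)
        = ∑ k, ∑ j, c j k * (X k ^ 2 - X j ^ 2) := Finset.sum_comm
    have hneg : ∑ k, ∑ j, c j k * (X k ^ 2 - X j ^ 2)
        = - ∑ j, ∑ k, c j k * (X k ^ 2 - X j ^ 2) := by
      rw [← Finset.sum_neg_distrib]
      refine Finset.sum_congr rfl fun k _ => ?_
      rw [← Finset.sum_neg_distrib]
      refine Finset.sum_congr rfl fun j _ => ?_
      rw [hc_symm j k]; ring
    linarith [hcomm.trans hneg]
  -- split the main sum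
  have split : ∑ i, ((d i - ℓ) ^ 2 - (∑ j ∈ G.neighborFinset i, d j)
        + (lamG : ℝ) * ℓ + (muG : ℝ) * ((n : ℝ) - ℓ)) * X i ^ 2
      = (∑ i, (d i - ℓ) ^ 2 * X i ^ 2) - (∑ i, (∑ k, a i k * d k) * X i ^ 2)
        + ((lamG : ℝ) * ℓ + (muG : ℝ) * ((n : ℝ) - ℓ)) * ∑ i, X i ^ 2 := by
    rw [Finset.mul_sum, ← Finset.sum_sub_distrib, ← Finset.sum_add_distrib]
    refine Finset.sum_congr rfl fun i _ => ?_
    rw [hNsum i d]; ring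
  have T2eq : ∑ i, (∑ k, a i k * d k) * X i ^ 2 = ∑ j, ∑ k, c j k * X j ^ 2 := by
    refine Finset.sum_congr rfl fun i _ => ?_
    rw [step2 i, Finset.sum_mul]
  -- the key identity : E = -(1/2) * S
  have key : ∑ i, ((d i - ℓ) ^ 2 - (∑ j ∈ G.neighborFinset i, d j)
        + (lamG : ℝ) * ℓ + (muG : ℝ) * ((n : ℝ) - ℓ)) * X i ^ 2
      = -(1/2) * ∑ j, ∑ k, (c j k - w j k) * (X j - X k) ^ 2 := by
    rw [split, step1, T2eq]
    have combine : ∑ j, ∑ k, (c j k * (X j * X k) - c j k * X j ^ 2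
          + (1/2) * (w j k * (X j - X k) ^ 2)
          + (1/2) * ((c j k - w j k) * (X j - X k) ^ 2))
        = ∑ j, ∑ k, (1/2) * (c j k * (X k ^ 2 - X j ^ 2)) := by
      refine Finset.sum_congr rfl fun j _ => Finset.sum_congr rfl fun k _ => by ring
    have lhs_distrib : ∑ j, ∑ k, (c j k * (X j * X k) - c j k * X j ^ 2
          + (1/2) * (w j k * (X j - X k) ^ 2)
          + (1/2) * ((c j k - w j k) * (X j - X k) ^ 2))
        = (∑ j, ∑ k, c j k * (X j * X k)) - (∑ j, ∑ k, c j k * X j ^ 2)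
          + (1/2) * (∑ j, ∑ k, w j k * (X j - X k) ^ 2)
          + (1/2) * (∑ j, ∑ k, (c j k - w j k) * (X j - X k) ^ 2) := by
      simp only [Finset.sum_add_distrib, Finset.sum_sub_distrib, ← Finset.mul_sum]
    have rhs_zero : ∑ j, ∑ k, (1/2) * (c j k * (X k ^ 2 - X j ^ 2)) = 0 := by
      simp only [← Finset.mul_sum]
      rw [hzero]; ring
    have := lhs_distrib.symm.trans (combine.trans rhs_zero)
    have hWhalf : (1/2) * (∑ j, ∑ k, w j k * (X j - X k) ^ 2)
        = ((lamG : ℝ) * ℓ + (muG : ℝ) * ((n : ℝ) - ℓ)) * ∑ i, X i ^ 2 := by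
      rw [hW]; ring
    linarith [this, hWhalf]
  -- nonnegative off-diagonal reformulation
  set t : Fin n → Fin n → ℝ :=
    fun j k => if j = k then 0 else (c j k - w j k) * (X j - X k) ^ 2 with ht_def
  have hSt : ∑ j, ∑ k, (c j k - w j k) * (X j - X k) ^ 2 = ∑ j, ∑ k, t j k := by
    refine Finset.sum_congr rfl fun j _ => Finset.sum_congr rfl fun k _ => ?_
    simp only [ht_def]
    by_cases h : j = k
    · subst h; simp
    · rw [if_neg h]
  have hcw_nonneg : ∀ j k, j ≠ k → 0 ≤ c j k - w j k := by
    intro j k hjk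
    simp only [hc_def, hw_def]
    by_cases h : G.Adj j k
    · rw [if_pos h]
      have hm : lamG ≤ (G.neighborFinset j ∩ G.neighborFinset k).card :=
        hlamG.2 ⟨j, k, h, rfl⟩
      have := Nat.cast_le (α := ℝ).2 hm
      linarith
    · rw [if_neg h]
      have hm : muG ≤ (G.neighborFinset j ∩ G.neighborFinset k).card :=
        hmuG.2 ⟨j, k, hjk, h, rfl⟩
      have := Nat.cast_le (α := ℝ).2 hm
      linarith
  have ht_nonneg : ∀ j k, 0 ≤ t j k := by
    intro j k
    simp only [ht_def]
    by_cases h : j = k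
    · rw [if_pos h]
    · rw [if_neg h]
      exact mul_nonneg (hcw_nonneg j k h) (sq_nonneg _)
  -- now the equivalence
  have hiff1 : (∑ i, ((d i - ℓ) ^ 2 - (∑ j ∈ G.neighborFinset i, d j)
        + (lamG : ℝ) * ℓ + (muG : ℝ) * ((n : ℝ) - ℓ)) * X i ^ 2 = 0)
      ↔ ∑ j, ∑ k, t j k = 0 := by
    rw [key, hSt]
    constructor
    · intro h; linarith
    · intro h; rw [h]; ring
  have hiff2 : (∑ j, ∑ k, t j k = 0) ↔ ∀ j k, t j k = 0 := by
    constructor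
    · intro h j k
      have houter := (Finset.sum_eq_zero_iff_of_nonneg
        (fun j _ => Finset.sum_nonneg fun k _ => ht_nonneg j k)).1 h j (Finset.mem_univ j)
      exact (Finset.sum_eq_zero_iff_of_nonneg
        (fun k _ => ht_nonneg j k)).1 houter k (Finset.mem_univ k)
    · intro h
      exact Finset.sum_eq_zero fun j _ => Finset.sum_eq_zero fun k _ => h j k
  rw [hiff1, hiff2]
  constructor
  · intro h i j hij
    have hzero_ij := h i j
    simp only [ht_def, if_neg hij] at hzero_ij
    constructor
    · intro hadj hne
      have hsq : (X i - X j) ^ 2 ≠ 0 := pow_ne_zero _ (sub_ne_zero.2 hne)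
      have hfac : c i j - w i j = 0 := by
        rcases mul_eq_zero.1 hzero_ij with h' | h'
        · exact h'
        · exact absurd h' hsq
      simp only [hc_def, hw_def, if_pos hadj] at hfac
      have : ((G.neighborFinset i ∩ G.neighborFinset j).card : ℝ) = (lamG : ℝ) := by
        linarith
      exact_mod_cast this
    · intro hnadj hne
      have hsq : (X i - X j) ^ 2 ≠ 0 := pow_ne_zero _ (sub_ne_zero.2 hne)
      have hfac : c i j - w i j = 0 := by
        rcases mul_eq_zero.1 hzero_ij with h' | h'
        · exact h'
        · exact absurd h' hsq
      simp only [hc_def, hw_def, if_neg hnadj] at hfac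
      have : ((G.neighborFinset i ∩ G.neighborFinset j).card : ℝ) = (muG : ℝ) := by
        linarith
      exact_mod_cast this
  · intro h j k
    simp only [ht_def]
    by_cases hjk : j = k
    · rw [if_pos hjk]
    · rw [if_neg hjk]
      by_cases hx : X j = X k
      · rw [hx]; ring
      · have hcw : c j k - w j k = 0 := by
          by_cases hadj : G.Adj j k
          · have := (h j k hjk).1 hadj hx
            simp only [hc_def, hw_def, if_pos hadj, this]
            ring
          · have := (h j k hjk).2 hadj hx
            simp only [hc_def, hw_def, if_neg hadj, this]
            ring
        rw [hcw]; ring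
end

section
/- Let G be a simple connected graph on vertex set V = {1,...,n} with at least one pair of distinct nonadjacent vertices, and let λ and μ be real numbers such that every pair of adjacent vertices of G has at least λ common neighbors and every pair of distinct nonadjacent vertices of G has at least μ common neighbors. Then the largest Laplacian eigenvalue satisfies ℓ_1(G) ≤ max_i { ( 2d_i − λ + μ + sqrt( 4 d_i m_i − 4(λ−μ)d_i + (λ−μ)² − 4μn ) ) / 2 }, where the maximum is taken over those vertices i for which the expression under the square root is nonnegative. -/
open Finset

namespace LapAux

variable {n : ℕ} (G : SimpleGraph (Fin n)) [DecidableRel G.Adj]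

/-- real adjacency indicator -/
def a (i j : Fin n) : ℝ := if G.Adj i j then 1 else 0
/-- number of common neighbors, as a real -/
def cc (i j : Fin n) : ℝ := ∑ t, a G i t * a G t j
/-- common-neighbor lower-bound weight -/
def w (lam mu : ℝ) (i j : Fin n) : ℝ := if i = j then 0 else if G.Adj i j then lam else mu

lemma a_symm (i j : Fin n) : a G i j = a G j i := by simp only [a, G.adj_comm]
lemma a_nonneg (i j : Fin n) : 0 ≤ a G i j := by unfold a; split <;> norm_num
lemma sum_a (i : Fin n) : ∑ j, a G i j = (G.degree i : ℝ) := by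
  rw [SimpleGraph.degree_eq_sum_if_adj]; rfl

lemma nsum (f : Fin n → ℝ) (i : Fin n) :
    ∑ j ∈ G.neighborFinset i, f j = ∑ j, a G i j * f j := by
  rw [SimpleGraph.neighborFinset_eq_filter, Finset.sum_filter]
  apply Finset.sum_congr rfl
  intro j _
  unfold a; split <;> simp

lemma cc_card (i j : Fin n) :
    cc G i j = ((G.neighborFinset i ∩ G.neighborFinset j).card : ℝ) := by
  unfold cc
  have h1 : ∀ t, a G i t * a G t j
      = if t ∈ G.neighborFinset i ∩ G.neighborFinset j then (1:ℝ) else 0 := by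
    intro t
    simp only [Finset.mem_inter, SimpleGraph.mem_neighborFinset, a]
    simp only [G.adj_comm t j]
    by_cases h1 : G.Adj i t <;> by_cases h2 : G.Adj j t <;> simp [h1, h2]
  simp_rw [h1]
  rw [Finset.sum_ite_mem, Finset.univ_inter, Finset.sum_const, nsmul_eq_mul, mul_one]

lemma cc_nonneg (i j : Fin n) : 0 ≤ cc G i j :=
  Finset.sum_nonneg fun t _ => mul_nonneg (a_nonneg G i t) (a_nonneg G t j)

lemma cc_symm (i j : Fin n) : cc G i j = cc G j i := by
  unfold cc
  apply Finset.sum_congr rfl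
  intro t _
  rw [a_symm G i t, a_symm G t j, mul_comm]

lemma sum_cc (i : Fin n) :
    ∑ k, cc G i k = ∑ t ∈ G.neighborFinset i, (G.degree t : ℝ) := by
  unfold cc
  rw [Finset.sum_comm, nsum]
  apply Finset.sum_congr rfl
  intro t _
  rw [← Finset.mul_sum]
  congr 1
  exact sum_a G t

lemma w_symm (lam mu : ℝ) (i j : Fin n) : w G lam mu i j = w G lam mu j i := by
  unfold w
  by_cases h : i = j
  · simp [h]
  · have h' : ¬ j = i := fun hc => h hc.symm
    simp only [h, h', if_false, G.adj_comm]

lemma w_eq (lam mu : ℝ) (i j : Fin n) :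
    w G lam mu i j = (lam - mu) * a G i j + mu * (1 - (if i = j then 1 else 0)) := by
  unfold w a
  by_cases h : i = j
  · subst h; simp [G.irrefl]
  · by_cases hadj : G.Adj i j <;> simp [h, hadj]

lemma sum_w (lam mu : ℝ) (j : Fin n) :
    ∑ k, w G lam mu j k = (lam - mu) * (G.degree j : ℝ) + mu * ((n : ℝ) - 1) := by
  simp_rw [w_eq]
  rw [Finset.sum_add_distrib, ← Finset.mul_sum, ← Finset.mul_sum, sum_a,
    Finset.sum_sub_distrib, Finset.sum_const, Finset.sum_ite_eq, if_pos (Finset.mem_univ j)]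
  simp

lemma main_ineq (lam mu : ℝ)
    (hlam' : ∀ i j : Fin n, G.Adj i j → lam ≤ cc G i j)
    (hmu' : ∀ i j : Fin n, i ≠ j → ¬ G.Adj i j → mu ≤ cc G i j)
    (X : Fin n → ℝ) (ℓ : ℝ)
    (hE : ∀ i, ∑ k, a G i k * X k = ((G.degree i : ℝ) - ℓ) * X i)
    (hZ : ∑ i, X i = 0) :
    ∑ i, (((G.degree i : ℝ) - ℓ) * X i) ^ 2 ≤
      ∑ i, ((∑ k, cc G i k) + (mu - lam) * ℓ - mu * (n : ℝ)) * X i ^ 2 := by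
  set u : Fin n → Fin n → ℝ := fun i j => cc G i j - w G lam mu i j with hu_def
  have hu_symm : ∀ i j, u i j = u j i := by
    intro i j; simp only [hu_def, cc_symm G i j, w_symm G lam mu i j]
  have hu_nonneg : ∀ i j, 0 ≤ u i j := by
    intro i j
    simp only [hu_def, w]
    by_cases h : i = j
    · simpa [h] using cc_nonneg G j j
    · by_cases hadj : G.Adj i j
      · simpa [h, hadj] using sub_nonneg.mpr (hlam' i j hadj)
      · simpa [h, hadj] using sub_nonneg.mpr (hmu' i j h hadj)
  have ME : ∑ i, (((G.degree i : ℝ) - ℓ) * X i) ^ 2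
      = ∑ j, ∑ k, cc G j k * (X j * X k) := by
    have e1 : ∀ j k : Fin n, cc G j k * (X j * X k)
        = ∑ t, (a G t j * X j) * (a G t k * X k) := by
      intro j k
      rw [cc, Finset.sum_mul]
      apply Finset.sum_congr rfl
      intro t _
      rw [a_symm G j t]
      ring
    simp_rw [e1]
    have e2 : ∑ j, ∑ k, ∑ t, (a G t j * X j) * (a G t k * X k)
        = ∑ t, ∑ j, ∑ k, (a G t j * X j) * (a G t k * X k) := by
      have h1 : ∑ j, ∑ k, ∑ t, (a G t j * X j) * (a G t k * X k)
          = ∑ j, ∑ t, ∑ k, (a G t j * X j) * (a G t k * X k) :=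
        Finset.sum_congr rfl fun j _ => Finset.sum_comm
      rw [h1, Finset.sum_comm]
    rw [e2]
    apply Finset.sum_congr rfl
    intro t _
    have e3 : ∑ j, ∑ k, (a G t j * X j) * (a G t k * X k)
        = (∑ j, a G t j * X j) * (∑ k, a G t k * X k) := by
      rw [Finset.sum_mul]
      apply Finset.sum_congr rfl
      intro j _
      rw [Finset.mul_sum]
    rw [e3, hE t]
    ring
  rw [ME]
  have split : ∑ j, ∑ k, cc G j k * (X j * X k)
      = (∑ j, ∑ k, w G lam mu j k * (X j * X k))
        + ∑ j, ∑ k, u j k * (X j * X k) := by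
    rw [← Finset.sum_add_distrib]
    apply Finset.sum_congr rfl
    intro j _
    rw [← Finset.sum_add_distrib]
    apply Finset.sum_congr rfl
    intro k _
    simp only [hu_def]
    ring
  rw [split]
  have eA : ∀ j, ∑ k, a G j k * (X j * X k) = ((G.degree j : ℝ) - ℓ) * X j ^ 2 := by
    intro j
    have : ∑ k, a G j k * (X j * X k) = X j * ∑ k, a G j k * X k := by
      rw [Finset.mul_sum]
      apply Finset.sum_congr rfl
      intro k _
      ring
    rw [this, hE j]
    ring
  have hW : ∑ j, ∑ k, w G lam mu j k * (X j * X k)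
      = ∑ j, ((lam - mu) * (((G.degree j : ℝ) - ℓ) * X j ^ 2) - mu * X j ^ 2) := by
    apply Finset.sum_congr rfl
    intro j _
    have e4 : ∀ k, w G lam mu j k * (X j * X k)
        = (lam - mu) * (a G j k * (X j * X k))
          + mu * (X j * X k - (if j = k then X j * X k else 0)) := by
      intro k
      rw [w_eq]
      by_cases h : j = k <;> simp [h] <;> ring
    simp_rw [e4]
    rw [Finset.sum_add_distrib, ← Finset.mul_sum, ← Finset.mul_sum, eA j,
      Finset.sum_sub_distrib, Finset.sum_ite_eq, if_pos (Finset.mem_univ j), ← Finset.mul_sum, hZ]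
    ring
  rw [hW]
  have hU1 : ∑ j, ∑ k, u j k * (X j * X k)
      ≤ ∑ j, ∑ k, u j k * (X j ^ 2 / 2 + X k ^ 2 / 2) := by
    apply Finset.sum_le_sum
    intro j _
    apply Finset.sum_le_sum
    intro k _
    apply mul_le_mul_of_nonneg_left _ (hu_nonneg j k)
    nlinarith [sq_nonneg (X j - X k)]
  have hU2 : ∑ j, ∑ k, u j k * (X j ^ 2 / 2 + X k ^ 2 / 2)
      = ∑ j, (∑ k, u j k) * X j ^ 2 := by
    have e5 : ∑ j, ∑ k, u j k * (X j ^ 2 / 2 + X k ^ 2 / 2)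
        = (∑ j, ∑ k, u j k * (X j ^ 2 / 2)) + ∑ j, ∑ k, u j k * (X k ^ 2 / 2) := by
      rw [← Finset.sum_add_distrib]
      apply Finset.sum_congr rfl
      intro j _
      rw [← Finset.sum_add_distrib]
      apply Finset.sum_congr rfl
      intro k _
      ring
    have e6 : ∑ j, ∑ k, u j k * (X k ^ 2 / 2) = ∑ j, ∑ k, u j k * (X j ^ 2 / 2) := by
      rw [Finset.sum_comm]
      apply Finset.sum_congr rfl
      intro j _
      apply Finset.sum_congr rfl
      intro k _
      rw [hu_symm j k]
    rw [e5, e6, ← Finset.sum_add_distrib]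
    apply Finset.sum_congr rfl
    intro j _
    rw [← Finset.sum_add_distrib, Finset.sum_mul]
    apply Finset.sum_congr rfl
    intro k _
    ring
  have hU3 : ∀ j, ∑ k, u j k
      = (∑ k, cc G j k) - ((lam - mu) * (G.degree j : ℝ) + mu * ((n : ℝ) - 1)) := by
    intro j
    simp only [hu_def]
    rw [Finset.sum_sub_distrib, sum_w]
  calc (∑ j, ((lam - mu) * (((G.degree j : ℝ) - ℓ) * X j ^ 2) - mu * X j ^ 2))
        + ∑ j, ∑ k, u j k * (X j * X k)
      ≤ (∑ j, ((lam - mu) * (((G.degree j : ℝ) - ℓ) * X j ^ 2) - mu * X j ^ 2))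
        + ∑ j, (∑ k, u j k) * X j ^ 2 :=
        add_le_add_right (le_of_le_of_eq hU1 hU2) _
    _ = ∑ i, ((∑ k, cc G i k) + (mu - lam) * ℓ - mu * (n : ℝ)) * X i ^ 2 := by
        rw [← Finset.sum_add_distrib]
        apply Finset.sum_congr rfl
        intro j _
        rw [hU3 j]
        ring

end LapAux

open LapAux

/-- **Corollary (upper bound on the Laplacian index).** For a simple connected
non-complete graph `G` and reals `λ ≤ λ(G)`, `μ ≤ μ(G)`, the largest Laplacian
eigenvalue `ℓ₁(G)` satisfies
`ℓ₁(G) ≤ max_i (2d_i − λ + μ + √(4 d_i m_i − 4(λ−μ)d_i + (λ−μ)² − 4μn))/2`,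
the maximum being over vertices with nonnegative radicand. -/
theorem laplacian_index_upper_bound (n : ℕ) (G : SimpleGraph (Fin n)) [DecidableRel G.Adj]
    (hconn : G.Connected)
    (hnoncomplete : ∃ i j : Fin n, i ≠ j ∧ ¬ G.Adj i j)
    (lam mu : ℝ)
    (hlam : ∀ i j : Fin n, G.Adj i j →
      lam ≤ ((G.neighborFinset i ∩ G.neighborFinset j).card : ℝ))
    (hmu : ∀ i j : Fin n, i ≠ j → ¬ G.Adj i j →
      mu ≤ ((G.neighborFinset i ∩ G.neighborFinset j).card : ℝ))
    (ℓ₁ : ℝ)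
    (hℓ₁ : IsGreatest {l : ℝ | ∃ X : Fin n → ℝ, X ≠ 0 ∧
      (G.lapMatrix ℝ).mulVec X = l • X} ℓ₁) :
    ∃ i : Fin n,
      0 ≤ 4 * (∑ j ∈ G.neighborFinset i, (G.degree j : ℝ))
          - 4 * (lam - mu) * (G.degree i : ℝ) + (lam - mu) ^ 2 - 4 * mu * (n : ℝ) ∧
      ℓ₁ ≤ (2 * (G.degree i : ℝ) - lam + mu
        + Real.sqrt (4 * (∑ j ∈ G.neighborFinset i, (G.degree j : ℝ))
          - 4 * (lam - mu) * (G.degree i : ℝ) + (lam - mu) ^ 2 - 4 * mu * (n : ℝ))) / 2 := by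
  have hPSD := SimpleGraph.posSemidef_lapMatrix ℝ G
  have hH : (G.lapMatrix ℝ).IsHermitian := hPSD.1
  -- the Laplacian is nonzero
  obtain ⟨v1, v2, hne, _⟩ := hnoncomplete
  have hAdjEx : ∃ c, G.Adj v1 c := by
    obtain ⟨wlk⟩ := hconn.preconnected v1 v2
    cases wlk with
    | nil => exact absurd rfl hne
    | cons h _ => exact ⟨_, h⟩
  obtain ⟨cv, hac⟩ := hAdjEx
  have hL0 : G.lapMatrix ℝ ≠ 0 := by
    intro h0
    have h1 : G.lapMatrix ℝ v1 cv = 0 := by rw [h0]; rfl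
    have hne2 : v1 ≠ cv := G.ne_of_adj hac
    simp [SimpleGraph.lapMatrix, SimpleGraph.degMatrix, Matrix.sub_apply,
      Matrix.diagonal_apply_ne _ hne2, hac] at h1
  -- positivity of ℓ₁
  obtain ⟨v, t, ht0, hv0, hvt⟩ := hH.exists_eigenvector_of_ne_zero hL0
  have hge : t ≤ ℓ₁ := hℓ₁.2 ⟨v, hv0, hvt⟩
  have hvv : 0 < dotProduct v v := by
    obtain ⟨i1, hi1⟩ := Function.ne_iff.mp hv0
    have hi1' : v i1 ≠ 0 := by simpa using hi1
    exact Finset.sum_pos' (fun i _ => mul_self_nonneg _)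
      ⟨i1, Finset.mem_univ _, mul_self_pos.mpr hi1'⟩
  have hq := hPSD.dotProduct_mulVec_nonneg v
  rw [hvt] at hq
  have hq' : 0 ≤ t * dotProduct v v := by
    have : dotProduct (star v) (t • v) = t * dotProduct v v := by
      simp [dotProduct_smul, star_trivial]
    rwa [this] at hq
  have ht_nonneg : 0 ≤ t := nonneg_of_mul_nonneg_right (by linarith [hq', mul_comm t (dotProduct v v)]) hvv
  have hl : 0 < ℓ₁ := lt_of_lt_of_le (lt_of_le_of_ne ht_nonneg (Ne.symm ht0)) hge
  -- the eigenvector of ℓ₁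
  obtain ⟨X, hX0, hXe⟩ := hℓ₁.1
  have hE : ∀ i, ∑ k, a G i k * X k = ((G.degree i : ℝ) - ℓ₁) * X i := by
    intro i
    have h1 := congrFun hXe i
    rw [Matrix.mulVec, ← Matrix.mulVec] at h1
    rw [SimpleGraph.lapMatrix_mulVec_apply] at h1
    rw [nsum] at h1
    have h2 : (ℓ₁ • X) i = ℓ₁ * X i := rfl
    rw [h2] at h1
    linear_combination -h1
  -- the eigenvector sums to zero
  have hZ : ∑ i, X i = 0 := by
    have hsum : ∑ i, ∑ k, a G i k * X k = ∑ i, ((G.degree i : ℝ) - ℓ₁) * X i :=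
      Finset.sum_congr rfl fun i _ => hE i
    have hswap : ∑ i, ∑ k, a G i k * X k = ∑ k, (G.degree k : ℝ) * X k := by
      rw [Finset.sum_comm]
      apply Finset.sum_congr rfl
      intro k _
      rw [← Finset.sum_mul]
      congr 1
      rw [Finset.sum_congr rfl fun i _ => a_symm G i k, sum_a]
    have h5 : ∑ i, ((G.degree i : ℝ) - ℓ₁) * X i
        = (∑ i, (G.degree i : ℝ) * X i) - ℓ₁ * ∑ i, X i := by
      rw [Finset.mul_sum, ← Finset.sum_sub_distrib]
      apply Finset.sum_congr rfl
      intro i _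
      ring
    have h6 : ℓ₁ * ∑ i, X i = 0 := by
      rw [hswap] at hsum
      rw [h5] at hsum
      linarith
    rcases mul_eq_zero.mp h6 with h | h
    · exact absurd h (ne_of_gt hl)
    · exact h
  have hlam' : ∀ i j : Fin n, G.Adj i j → lam ≤ cc G i j := by
    intro i j h; rw [cc_card]; exact hlam i j h
  have hmu' : ∀ i j : Fin n, i ≠ j → ¬ G.Adj i j → mu ≤ cc G i j := by
    intro i j h h'; rw [cc_card]; exact hmu i j h h'
  have hmain := main_ineq G lam mu hlam' hmu' X ℓ₁ hE hZ
  -- existence of a good vertex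
  have hkey : ∃ i, ((G.degree i : ℝ) - ℓ₁) ^ 2
      ≤ (∑ k, cc G i k) + (mu - lam) * ℓ₁ - mu * (n : ℝ) := by
    by_contra hcon
    push_neg at hcon
    obtain ⟨i0, hi0⟩ := Function.ne_iff.mp hX0
    have hi0' : X i0 ≠ 0 := by simpa using hi0
    have hlt : ∑ i, ((∑ k, cc G i k) + (mu - lam) * ℓ₁ - mu * (n : ℝ)) * X i ^ 2
        < ∑ i, (((G.degree i : ℝ) - ℓ₁) * X i) ^ 2 := by
      apply Finset.sum_lt_sum
      · intro i _
        rw [mul_pow]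
        exact mul_le_mul_of_nonneg_right (le_of_lt (hcon i)) (sq_nonneg _)
      · refine ⟨i0, Finset.mem_univ _, ?_⟩
        rw [mul_pow]
        exact mul_lt_mul_of_pos_right (hcon i0) (pow_two_pos_of_ne_zero hi0')
    exact absurd hmain (not_le.mpr hlt)
  obtain ⟨i, hkey⟩ := hkey
  rw [sum_cc] at hkey
  refine ⟨i, ?_, ?_⟩
  · nlinarith [hkey, sq_nonneg (2 * ℓ₁ - (2 * (G.degree i : ℝ) - lam + mu))]
  · set r : ℝ := 4 * (∑ j ∈ G.neighborFinset i, (G.degree j : ℝ))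
      - 4 * (lam - mu) * (G.degree i : ℝ) + (lam - mu) ^ 2 - 4 * mu * (n : ℝ) with hr
    have hr0 : 0 ≤ r := by
      nlinarith [hkey, sq_nonneg (2 * ℓ₁ - (2 * (G.degree i : ℝ) - lam + mu))]
    have hs := Real.sq_sqrt hr0
    have hs0 := Real.sqrt_nonneg r
    nlinarith [hkey, hs, hs0,
      sq_nonneg (Real.sqrt r - (2 * ℓ₁ - (2 * (G.degree i : ℝ) - lam + mu)))]
end

section
/- Let G be a simple connected graph on vertex set V = {1,...,n} with at least one pair of distinct nonadjacent vertices, and let λ and μ be real numbers such that every pair of adjacent vertices of G has at least λ common neighbors and every pair of distinct nonadjacent vertices of G has at least μ common neighbors. Then the second-smallest Laplacian eigenvalue satisfies ℓ_{n−1}(G) ≥ min_i { ( 2d_i − λ + μ − sqrt( 4 d_i m_i − 4(λ−μ)d_i + (λ−μ)² − 4μn ) ) / 2 }, where the minimum is taken over those vertices i for which the expression under the square root is nonnegative. -/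
open Finset

lemma aux_exists (n : ℕ) (G : SimpleGraph (Fin n)) [DecidableRel G.Adj]
    (lam mu ℓ : ℝ)
    (hlam : ∀ i j : Fin n, G.Adj i j →
      lam ≤ ((G.neighborFinset i ∩ G.neighborFinset j).card : ℝ))
    (hmu : ∀ i j : Fin n, i ≠ j → ¬ G.Adj i j →
      mu ≤ ((G.neighborFinset i ∩ G.neighborFinset j).card : ℝ))
    (X : Fin n → ℝ) (i₀ : Fin n) (hi₀ : X i₀ ≠ 0) (hsum : ∑ i, X i = 0)
    (heq : ∀ i, ∑ j ∈ G.neighborFinset i, X j = ((G.degree i : ℝ) - ℓ) * X i) :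
    ∃ i : Fin n, ((G.degree i : ℝ) - ℓ)^2 + (lam - mu) * ℓ + mu * n
        ≤ ∑ j ∈ G.neighborFinset i, (G.degree j : ℝ) := by
  classical
  set χ : Fin n → Fin n → ℝ := fun i j => if G.Adj i j then 1 else 0 with hχ
  set c : Fin n → Fin n → ℝ :=
    fun i j => ((G.neighborFinset i ∩ G.neighborFinset j).card : ℝ) with hcdef
  set d : Fin n → ℝ := fun i => ((G.degree i : ℝ)) with hd
  set m : Fin n → ℝ := fun i => ∑ j ∈ G.neighborFinset i, (G.degree j : ℝ) with hm
  -- χ is symmetric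
  have hχs : ∀ i j, χ i j = χ j i := by
    intro i j
    simp only [hχ]
    by_cases h : G.Adj i j
    · rw [if_pos h, if_pos (G.adj_symm h)]
    · rw [if_neg h, if_neg (fun h' => h (G.adj_symm h'))]
  -- filter sums over neighbors
  have hfil : ∀ (i : Fin n) (f : Fin n → ℝ),
      ∑ j, χ i j * f j = ∑ j ∈ G.neighborFinset i, f j := by
    intro i f
    rw [SimpleGraph.neighborFinset_eq_filter, Finset.sum_filter]
    apply Finset.sum_congr rfl
    intro k _
    by_cases h1 : G.Adj i k <;> simp [hχ, h1]
  have hkey : ∀ i, ∑ j, χ i j * X j = (d i - ℓ) * X i := by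
    intro i; rw [hfil i X, heq i]
  have hχd : ∀ i, ∑ j, χ i j = d i := by
    intro i
    have := G.degree_eq_sum_if_adj (R := ℝ) i
    simpa [hχ, hd] using this.symm
  have hc : ∀ i j, c i j = ∑ k, χ i k * χ j k := by
    intro i j
    have h2 : G.neighborFinset i ∩ G.neighborFinset j
        = univ.filter (fun k => G.Adj i k ∧ G.Adj j k) := by
      ext k; simp [SimpleGraph.mem_neighborFinset]
    simp only [hcdef]
    rw [h2, Finset.card_filter]
    push_cast
    apply Finset.sum_congr rfl
    intro k _
    by_cases h1 : G.Adj i k <;> by_cases h3 : G.Adj j k <;> simp [hχ, h1, h3]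
  have hcs : ∀ i j, c i j = c j i := by
    intro i j; simp only [hcdef, Finset.inter_comm]
  have hcd : ∀ i, c i i = d i := by
    intro i
    simp only [hcdef, hd, Finset.inter_self]
    rw [SimpleGraph.card_neighborFinset_eq_degree]
  have hcrow : ∀ i, ∑ j, c i j = m i := by
    intro i
    simp_rw [hc]
    rw [Finset.sum_comm]
    have : ∀ k : Fin n, ∑ j, χ i k * χ j k = χ i k * d k := by
      intro k
      rw [← Finset.mul_sum]
      congr 1
      calc ∑ j, χ j k = ∑ j, χ k j := by apply Finset.sum_congr rfl; intro j _; rw [hχs]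
        _ = d k := hχd k
    simp_rw [this]
    rw [hfil i d]
  have hQA : ∑ i, ∑ j, c i j * (X i * X j) = ∑ k, ((d k - ℓ) * X k)^2 := by
    calc ∑ i, ∑ j, c i j * (X i * X j)
        = ∑ i, ∑ j, ∑ k, (χ i k * X i) * (χ j k * X j) := by
          apply Finset.sum_congr rfl; intro i _
          apply Finset.sum_congr rfl; intro j _
          rw [hc, Finset.sum_mul]
          apply Finset.sum_congr rfl; intro k _; ring
      _ = ∑ i, ∑ k, ∑ j, (χ i k * X i) * (χ j k * X j) := by
          apply Finset.sum_congr rfl; intro i _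
          rw [Finset.sum_comm]
      _ = ∑ k, ∑ i, ∑ j, (χ i k * X i) * (χ j k * X j) := Finset.sum_comm
      _ = ∑ k, (∑ i, χ i k * X i) * (∑ j, χ j k * X j) := by
          apply Finset.sum_congr rfl; intro k _
          rw [Finset.sum_mul_sum]
      _ = ∑ k, ((d k - ℓ) * X k)^2 := by
          apply Finset.sum_congr rfl; intro k _
          have h1 : ∑ i, χ i k * X i = (d k - ℓ) * X k := by
            calc ∑ i, χ i k * X i = ∑ i, χ k i * X i := by
                  apply Finset.sum_congr rfl; intro i _; rw [hχs]
              _ = (d k - ℓ) * X k := hkey k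
          rw [h1, sq]
  -- the matrix B
  set B : Fin n → Fin n → ℝ := fun i j => if i = j
      then d i + (lam - mu) * d i + mu * n - mu - m i
      else c i j - (if G.Adj i j then lam else mu) with hB
  have hBsymm : ∀ i j, B i j = B j i := by
    intro i j
    by_cases h : i = j
    · subst h; rfl
    · simp only [hB, if_neg h, if_neg (Ne.symm h)]
      rw [hcs]
      congr 1
      by_cases a : G.Adj i j
      · rw [if_pos a, if_pos (G.adj_symm a)]
      · rw [if_neg a, if_neg (fun a' => a (G.adj_symm a'))]
  have hBoff : ∀ i j, i ≠ j → 0 ≤ B i j := by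
    intro i j h
    simp only [hB, if_neg h]
    by_cases a : G.Adj i j
    · rw [if_pos a]
      have := hlam i j a
      simp only [hcdef]
      linarith
    · rw [if_neg a]
      have := hmu i j h a
      simp only [hcdef]
      linarith
  have hn1 : 1 ≤ n := i₀.pos
  have hBrow : ∀ i, ∑ j, B i j = 0 := by
    intro i
    have e0 : B i i + ∑ j ∈ univ.erase i, B i j = ∑ j, B i j :=
      Finset.add_sum_erase univ (B i) (Finset.mem_univ i)
    have hce : c i i + ∑ j ∈ univ.erase i, c i j = m i := by
      rw [Finset.add_sum_erase univ (c i) (Finset.mem_univ i)]; exact hcrow i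
    have hχ0 : χ i i = 0 := by simp [hχ]
    have sχsum : ∑ j ∈ univ.erase i, χ i j = d i := by
      rw [Finset.sum_erase _ hχ0, hχd i]
    have scard : (((univ.erase i).card : ℕ) : ℝ) = (n : ℝ) - 1 := by
      rw [Finset.card_erase_of_mem (Finset.mem_univ i), Finset.card_univ, Fintype.card_fin]
      push_cast [Nat.cast_sub hn1]
      ring
    have hB2 : ∀ j ∈ univ.erase i, B i j = c i j - (mu + (lam - mu) * χ i j) := by
      intro j hj
      have hj' : j ≠ i := Finset.ne_of_mem_erase hj
      simp only [hB, hχ, if_neg (Ne.symm hj')]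
      by_cases a : G.Adj i j <;> simp [a]
    have e1 : ∑ j ∈ univ.erase i, B i j
        = (∑ j ∈ univ.erase i, c i j) - (mu * (((univ.erase i).card : ℕ) : ℝ)
          + (lam - mu) * ∑ j ∈ univ.erase i, χ i j) := by
      rw [Finset.sum_congr rfl hB2, Finset.sum_sub_distrib, Finset.sum_add_distrib,
        Finset.sum_const, ← Finset.mul_sum, nsmul_eq_mul]
      ring
    have hBii : B i i = d i + (lam - mu) * d i + mu * n - mu - m i := by
      simp only [hB, if_pos rfl]
    have := hcd i
    rw [← e0, e1, sχsum, scard]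
    rw [hBii]
    linarith
  have hBcol : ∀ j, ∑ i, B i j = 0 := by
    intro j
    calc ∑ i, B i j = ∑ i, B j i := by
          apply Finset.sum_congr rfl; intro i _; rw [hBsymm]
      _ = 0 := hBrow j
  -- the quadratic form is nonpositive
  have hT1 : ∑ i, ∑ j, B i j * (X i * X j) ≤ 0 := by
    have step : ∑ i, ∑ j, B i j * (X i * X j)
        ≤ ∑ i, ∑ j, B i j * ((X i ^ 2 + X j ^ 2) / 2) := by
      apply Finset.sum_le_sum; intro i _
      apply Finset.sum_le_sum; intro j _
      by_cases h : i = j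
      · subst h; apply le_of_eq; ring
      · apply mul_le_mul_of_nonneg_left _ (hBoff i j h)
        nlinarith [sq_nonneg (X i - X j)]
    have z0 : ∑ i, ∑ j, B i j * ((X i ^ 2 + X j ^ 2) / 2) = 0 := by
      have e2 : ∑ i, ∑ j, B i j * ((X i ^ 2 + X j ^ 2) / 2)
          = (∑ i, ∑ j, B i j * (X i ^ 2 / 2)) + (∑ i, ∑ j, B i j * (X j ^ 2 / 2)) := by
        rw [← Finset.sum_add_distrib]
        apply Finset.sum_congr rfl; intro i _
        rw [← Finset.sum_add_distrib]
        apply Finset.sum_congr rfl; intro j _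
        ring
      have z1 : ∑ i, ∑ j, B i j * (X i ^ 2 / 2) = 0 := by
        apply Finset.sum_eq_zero; intro i _
        rw [← Finset.sum_mul, hBrow i, zero_mul]
      have z2 : ∑ i, ∑ j, B i j * (X j ^ 2 / 2) = 0 := by
        rw [Finset.sum_comm]
        apply Finset.sum_eq_zero; intro j _
        rw [← Finset.sum_mul, hBcol j, zero_mul]
      rw [e2, z1, z2, add_zero]
    linarith [step, z0]
  -- evaluation of the quadratic form
  have hsplit : ∀ i j, B i j = c i j - (mu + (lam - mu) * χ i j
      + (if i = j then (m i - (lam - mu) * d i - mu * (n : ℝ)) else 0)) := by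
    intro i j
    by_cases h : i = j
    · subst h
      have hχ0 : χ i i = 0 := by simp [hχ]
      simp only [hB, hχ0, if_pos rfl, eq_self_iff_true, if_true]
      rw [hcd i]
      ring
    · simp only [hB, hχ, if_neg h]
      by_cases a : G.Adj i j <;> simp [a]
  have S2 : ∑ i, ∑ j, X i * X j = 0 := by
    rw [← Finset.sum_mul_sum, hsum, zero_mul]
  have S3 : ∀ i, ∑ j, χ i j * (X i * X j) = (d i - ℓ) * X i ^ 2 := by
    intro i
    calc ∑ j, χ i j * (X i * X j) = X i * ∑ j, χ i j * X j := by
          rw [Finset.mul_sum]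
          apply Finset.sum_congr rfl; intro j _; ring
      _ = (d i - ℓ) * X i ^ 2 := by rw [hkey i]; ring
  have S4 : ∀ i, ∑ j, (if i = j then (m i - (lam - mu) * d i - mu * (n : ℝ)) else 0)
      * (X i * X j) = (m i - (lam - mu) * d i - mu * (n : ℝ)) * X i ^ 2 := by
    intro i
    rw [Finset.sum_eq_single i]
    · rw [if_pos rfl]; ring
    · intro j _ hj; rw [if_neg (Ne.symm hj), zero_mul]
    · intro h; exact absurd (Finset.mem_univ i) h
  have hT2 : ∑ i, ∑ j, B i j * (X i * X j)
      = ∑ i, X i ^ 2 * ((d i - ℓ) ^ 2 + (lam - mu) * ℓ + mu * (n : ℝ) - m i) := by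
    have e3 : ∑ i, ∑ j, B i j * (X i * X j)
        = (∑ i, ∑ j, c i j * (X i * X j)) - mu * (∑ i, ∑ j, X i * X j)
          - (lam - mu) * (∑ i, ∑ j, χ i j * (X i * X j))
          - (∑ i, ∑ j, (if i = j then (m i - (lam - mu) * d i - mu * (n : ℝ)) else 0)
              * (X i * X j)) := by
      rw [Finset.mul_sum, Finset.mul_sum, ← Finset.sum_sub_distrib, ← Finset.sum_sub_distrib,
        ← Finset.sum_sub_distrib]
      apply Finset.sum_congr rfl; intro i _
      rw [Finset.mul_sum, Finset.mul_sum, ← Finset.sum_sub_distrib, ← Finset.sum_sub_distrib,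
        ← Finset.sum_sub_distrib]
      apply Finset.sum_congr rfl; intro j _
      rw [hsplit i j]
      ring
    rw [e3, hQA, S2, mul_zero, sub_zero]
    have e4 : ∑ i, ∑ j, χ i j * (X i * X j) = ∑ i, (d i - ℓ) * X i ^ 2 :=
      Finset.sum_congr rfl (fun i _ => S3 i)
    have e5 : ∑ i, ∑ j, (if i = j then (m i - (lam - mu) * d i - mu * (n : ℝ)) else 0)
        * (X i * X j) = ∑ i, (m i - (lam - mu) * d i - mu * (n : ℝ)) * X i ^ 2 :=
      Finset.sum_congr rfl (fun i _ => S4 i)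
    rw [e4, e5, Finset.mul_sum, ← Finset.sum_sub_distrib, ← Finset.sum_sub_distrib]
    apply Finset.sum_congr rfl; intro i _
    ring
  -- conclude
  by_contra hcon
  push_neg at hcon
  have hgpos : ∀ i, 0 < (d i - ℓ) ^ 2 + (lam - mu) * ℓ + mu * (n : ℝ) - m i := by
    intro i
    have h := hcon i
    simp only [hd, hm]
    linarith
  have hpos : 0 < ∑ i, X i ^ 2 * ((d i - ℓ) ^ 2 + (lam - mu) * ℓ + mu * (n : ℝ) - m i) := by
    apply Finset.sum_pos'
    · intro i _
      exact mul_nonneg (sq_nonneg _) (le_of_lt (hgpos i))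
    · refine ⟨i₀, Finset.mem_univ i₀, ?_⟩
      have hx2 : 0 < X i₀ ^ 2 := by positivity
      exact mul_pos hx2 (hgpos i₀)
  linarith [hT1, hT2, hpos]

/-- **Corollary (lower bound on the algebraic connectivity).** For a simple connected
non-complete graph `G` and reals `λ ≤ λ(G)`, `μ ≤ μ(G)`, the second-smallest Laplacian
eigenvalue `ℓ_{n−1}(G)` (the least nontrivial Laplacian eigenvalue) satisfies
`ℓ_{n−1}(G) ≥ min_i (2d_i − λ + μ − √(4 d_i m_i − 4(λ−μ)d_i + (λ−μ)² − 4μn))/2`,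
the minimum being over vertices with nonnegative radicand. -/
theorem algebraic_connectivity_lower_bound (n : ℕ) (G : SimpleGraph (Fin n))
    [DecidableRel G.Adj]
    (hconn : G.Connected)
    (hnoncomplete : ∃ i j : Fin n, i ≠ j ∧ ¬ G.Adj i j)
    (lam mu : ℝ)
    (hlam : ∀ i j : Fin n, G.Adj i j →
      lam ≤ ((G.neighborFinset i ∩ G.neighborFinset j).card : ℝ))
    (hmu : ∀ i j : Fin n, i ≠ j → ¬ G.Adj i j →
      mu ≤ ((G.neighborFinset i ∩ G.neighborFinset j).card : ℝ))
    (ℓ : ℝ)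
    (hℓ : IsLeast {l : ℝ | ∃ X : Fin n → ℝ, X ≠ 0 ∧ (∑ i, X i) = 0 ∧
      (G.lapMatrix ℝ).mulVec X = l • X} ℓ) :
    ∃ i : Fin n,
      0 ≤ 4 * (∑ j ∈ G.neighborFinset i, (G.degree j : ℝ))
          - 4 * (lam - mu) * (G.degree i : ℝ) + (lam - mu) ^ 2 - 4 * mu * (n : ℝ) ∧
      (2 * (G.degree i : ℝ) - lam + mu
        - Real.sqrt (4 * (∑ j ∈ G.neighborFinset i, (G.degree j : ℝ))
          - 4 * (lam - mu) * (G.degree i : ℝ) + (lam - mu) ^ 2 - 4 * mu * (n : ℝ))) / 2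
        ≤ ℓ := by
  obtain ⟨X, hX0, hsum, heig⟩ := hℓ.1
  have heq : ∀ i, ∑ j ∈ G.neighborFinset i, X j = ((G.degree i : ℝ) - ℓ) * X i := by
    intro i
    have h := congrFun heig i
    rw [SimpleGraph.lapMatrix_mulVec_apply] at h
    simp only [Pi.smul_apply, smul_eq_mul] at h
    have e : ((G.degree i : ℝ) - ℓ) * X i = (G.degree i : ℝ) * X i - ℓ * X i := by ring
    rw [e]; linarith
  obtain ⟨i₀, hi₀⟩ := Function.ne_iff.mp hX0
  obtain ⟨i, hi⟩ := aux_exists n G lam mu ℓ hlam hmu X i₀ hi₀ hsum heq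
  refine ⟨i, ?_, ?_⟩
  · nlinarith [hi, sq_nonneg (2 * ℓ - (2 * (G.degree i : ℝ) - lam + mu))]
  · have hR : ((2 * (G.degree i : ℝ) - lam + mu) - 2 * ℓ) ^ 2
        ≤ 4 * (∑ j ∈ G.neighborFinset i, (G.degree j : ℝ))
          - 4 * (lam - mu) * (G.degree i : ℝ) + (lam - mu) ^ 2 - 4 * mu * (n : ℝ) := by
      nlinarith [hi]
    have h1 : (2 * (G.degree i : ℝ) - lam + mu) - 2 * ℓ
        ≤ Real.sqrt (((2 * (G.degree i : ℝ) - lam + mu) - 2 * ℓ) ^ 2) := by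
      rw [Real.sqrt_sq_eq_abs]; exact le_abs_self _
    have h2 : Real.sqrt (((2 * (G.degree i : ℝ) - lam + mu) - 2 * ℓ) ^ 2)
        ≤ Real.sqrt (4 * (∑ j ∈ G.neighborFinset i, (G.degree j : ℝ))
          - 4 * (lam - mu) * (G.degree i : ℝ) + (lam - mu) ^ 2 - 4 * mu * (n : ℝ)) :=
      Real.sqrt_le_sqrt hR
    linarith
end

section
/- Let G be a simple connected graph on vertex set V = {1,...,n} with at least one pair of distinct nonadjacent vertices, and let λ and μ be real numbers such that every pair of adjacent vertices of G has at least λ common neighbors and every pair of distinct nonadjacent vertices of G has at least μ common neighbors. Then the Laplacian spread satisfies 𝒮_L(G) ≤ max_i { ( 2d_i − λ + μ + sqrt( 4 d_i m_i − 4(λ−μ)d_i + (λ−μ)² − 4μn ) ) / 2 } − min_i { ( 2d_i − λ + μ − sqrt( 4 d_i m_i − 4(λ−μ)d_i + (λ−μ)² − 4μn ) ) / 2 }, where the maximum and minimum are taken over those vertices i for which the expression under the square root is nonnegative. -/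
open Finset

open Matrix

/-- Pure sum-algebra identity behind the eigenvalue bound. -/
lemma quad_ident (n : ℕ) (a : Fin n → Fin n → ℝ) (X : Fin n → ℝ) (d : Fin n → ℝ)
    (ℓ lam mu : ℝ)
    (ha_symm : ∀ i j, a i j = a j i)
    (ha_sum : ∀ i, ∑ j, a i j = d i)
    (hY : ∀ i, ∑ j, a i j * X j = (d i - ℓ) * X i)
    (hsum : ∑ i, X i = 0) :
    ∑ i, ∑ j, ((∑ k, a i k * a j k) - (lam - mu) * a i j - mu) * (X i - X j) ^ 2
      = ∑ i, (-2) * ((ℓ ^ 2 - (2 * d i - lam + mu) * ℓ + d i ^ 2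
          - (∑ k, a i k * d k) + mu * n) * X i ^ 2) := by
  have ha_sum' : ∀ k, ∑ j, a j k = d k := by
    intro k
    rw [← ha_sum k]
    exact Finset.sum_congr rfl fun j _ => ha_symm j k
  have hY' : ∀ k, ∑ j, a j k * X j = (d k - ℓ) * X k := by
    intro k
    rw [← hY k]
    exact Finset.sum_congr rfl fun j _ => by rw [ha_symm j k]
  set w : Fin n → Fin n → ℝ := fun i j => ∑ k, a i k * a j k with hw
  have hw_symm : ∀ i j, w i j = w j i := fun i j =>
    Finset.sum_congr rfl fun k _ => mul_comm _ _
  set c : Fin n → Fin n → ℝ := fun i j => w i j - (lam - mu) * a i j - mu with hc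
  have hc_symm : ∀ i j, c i j = c j i := fun i j => by
    simp only [hc, hw_symm i j, ha_symm i j]
  -- row sums of w
  have hw_row : ∀ i, ∑ j, w i j = ∑ k, a i k * d k := by
    intro i
    rw [Finset.sum_comm]
    exact Finset.sum_congr rfl fun k _ => by
      rw [← Finset.mul_sum, ha_sum' k]
  -- weighted sums of w against X
  have hw_X : ∑ i, ∑ j, w i j * (X i * X j) = ∑ k, ((d k - ℓ) * X k) * ((d k - ℓ) * X k) := by
    have step1 : ∀ i j, w i j * (X i * X j) = ∑ k, (a i k * X i) * (a j k * X j) := by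
      intro i j
      rw [hw, Finset.sum_mul]
      exact Finset.sum_congr rfl fun k _ => by ring
    calc ∑ i, ∑ j, w i j * (X i * X j)
        = ∑ i, ∑ j, ∑ k, (a i k * X i) * (a j k * X j) := by
          exact Finset.sum_congr rfl fun i _ => Finset.sum_congr rfl fun j _ => step1 i j
      _ = ∑ i, ∑ k, ∑ j, (a i k * X i) * (a j k * X j) := by
          exact Finset.sum_congr rfl fun i _ => Finset.sum_comm
      _ = ∑ k, ∑ i, ∑ j, (a i k * X i) * (a j k * X j) := Finset.sum_comm
      _ = ∑ k, ((d k - ℓ) * X k) * ((d k - ℓ) * X k) := by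
          refine Finset.sum_congr rfl fun k _ => ?_
          have : ∀ i : Fin n, ∑ j, (a i k * X i) * (a j k * X j)
              = (a i k * X i) * ((d k - ℓ) * X k) := by
            intro i
            rw [← Finset.mul_sum, hY' k]
          rw [Finset.sum_congr rfl fun i _ => this i, ← Finset.sum_mul, hY' k]
  have ha_X : ∑ i, ∑ j, a i j * (X i * X j) = ∑ i, X i * ((d i - ℓ) * X i) := by
    refine Finset.sum_congr rfl fun i _ => ?_
    rw [← hY i, Finset.mul_sum]
    exact Finset.sum_congr rfl fun j _ => by ring
  have hmu_X : ∑ i, ∑ j, mu * (X i * X j) = 0 := by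
    have : ∀ i : Fin n, ∑ j, mu * (X i * X j) = 0 := by
      intro i
      have : ∑ j, mu * (X i * X j) = mu * X i * ∑ j, X j := by
        rw [Finset.mul_sum]
        exact Finset.sum_congr rfl fun j _ => by ring
      rw [this, hsum, mul_zero]
    simp [this]
  -- cross term
  have hcross : ∑ i, ∑ j, c i j * (X i * X j)
      = (∑ k, ((d k - ℓ) * X k) * ((d k - ℓ) * X k))
        - (lam - mu) * (∑ i, X i * ((d i - ℓ) * X i)) - 0 := by
    rw [← hw_X, ← ha_X, ← hmu_X]
    rw [Finset.mul_sum, ← Finset.sum_sub_distrib, ← Finset.sum_sub_distrib]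
    refine Finset.sum_congr rfl fun i _ => ?_
    rw [Finset.mul_sum, ← Finset.sum_sub_distrib, ← Finset.sum_sub_distrib]
    refine Finset.sum_congr rfl fun j _ => ?_
    simp only [hc]; ring
  -- row sums of c
  have hc_row : ∀ i, ∑ j, c i j = (∑ k, a i k * d k) - (lam - mu) * d i - mu * n := by
    intro i
    simp only [hc]
    rw [Finset.sum_sub_distrib, Finset.sum_sub_distrib, hw_row, ← Finset.mul_sum, ha_sum,
      Finset.sum_const, Finset.card_univ, Fintype.card_fin, nsmul_eq_mul]
    ring
  -- symmetric part
  have hXj : ∑ i, ∑ j, c i j * X j ^ 2 = ∑ i, ∑ j, c i j * X i ^ 2 := by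
    rw [Finset.sum_comm]
    exact Finset.sum_congr rfl fun j _ => Finset.sum_congr rfl fun i _ => by
      rw [hc_symm j i]
  calc ∑ i, ∑ j, c i j * (X i - X j) ^ 2
      = ∑ i, ∑ j, (c i j * X i ^ 2 + c i j * X j ^ 2 - 2 * (c i j * (X i * X j))) := by
        exact Finset.sum_congr rfl fun i _ => Finset.sum_congr rfl fun j _ => by ring
    _ = (∑ i, ∑ j, c i j * X i ^ 2) + (∑ i, ∑ j, c i j * X j ^ 2)
        - 2 * (∑ i, ∑ j, c i j * (X i * X j)) := by
        rw [Finset.mul_sum, ← Finset.sum_add_distrib, ← Finset.sum_sub_distrib]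
        refine Finset.sum_congr rfl fun i _ => ?_
        rw [Finset.mul_sum, ← Finset.sum_add_distrib, ← Finset.sum_sub_distrib]
    _ = 2 * (∑ i, (∑ j, c i j) * X i ^ 2)
        - 2 * (∑ i, ∑ j, c i j * (X i * X j)) := by
        rw [hXj]
        congr 1
        rw [Finset.mul_sum]
        rw [← Finset.sum_add_distrib]
        refine Finset.sum_congr rfl fun i _ => ?_
        rw [Finset.sum_mul]
        ring
    _ = ∑ i, (-2) * ((ℓ ^ 2 - (2 * d i - lam + mu) * ℓ + d i ^ 2
          - (∑ k, a i k * d k) + mu * n) * X i ^ 2) := by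
        rw [hcross, Finset.mul_sum]
        rw [sub_zero, mul_sub, Finset.mul_sum, Finset.mul_sum, Finset.mul_sum]
        rw [← Finset.sum_sub_distrib, ← Finset.sum_sub_distrib]
        refine Finset.sum_congr rfl fun i _ => ?_
        rw [hc_row i]
        ring

lemma root_bounds {b c ℓ : ℝ} (h : ℓ ^ 2 - b * ℓ + c ≤ 0) :
    0 ≤ b ^ 2 - 4 * c ∧ (b - Real.sqrt (b ^ 2 - 4 * c)) / 2 ≤ ℓ ∧
      ℓ ≤ (b + Real.sqrt (b ^ 2 - 4 * c)) / 2 := by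
  have h1 : (2 * ℓ - b) ^ 2 ≤ b ^ 2 - 4 * c := by nlinarith
  have h0 : 0 ≤ b ^ 2 - 4 * c := le_trans (sq_nonneg _) h1
  have h2 : |2 * ℓ - b| ≤ Real.sqrt (b ^ 2 - 4 * c) := Real.abs_le_sqrt h1
  obtain ⟨h3, h4⟩ := abs_le.mp h2
  exact ⟨h0, by linarith, by linarith⟩

lemma key_quadratic {n : ℕ} (G : SimpleGraph (Fin n)) [DecidableRel G.Adj]
    (lam mu : ℝ)
    (hlam : ∀ i j : Fin n, G.Adj i j →
      lam ≤ ((G.neighborFinset i ∩ G.neighborFinset j).card : ℝ))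
    (hmu : ∀ i j : Fin n, i ≠ j → ¬ G.Adj i j →
      mu ≤ ((G.neighborFinset i ∩ G.neighborFinset j).card : ℝ))
    (ℓ : ℝ) (X : Fin n → ℝ) (hX : X ≠ 0) (hsum : ∑ i, X i = 0)
    (heig : (G.lapMatrix ℝ).mulVec X = ℓ • X) :
    ∃ i : Fin n, ℓ ^ 2 - (2 * (G.degree i : ℝ) - lam + mu) * ℓ
      + (G.degree i : ℝ) ^ 2 - (∑ k ∈ G.neighborFinset i, (G.degree k : ℝ)) + mu * n ≤ 0 := by
  classical
  set d : Fin n → ℝ := fun i => (G.degree i : ℝ) with hd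
  set a : Fin n → Fin n → ℝ := fun i j => if G.Adj i j then 1 else 0 with ha
  have ha_symm : ∀ i j, a i j = a j i := by
    intro i j; simp only [ha]
    by_cases h : G.Adj i j
    · rw [if_pos h, if_pos (G.adj_comm i j |>.mp h)]
    · rw [if_neg h, if_neg (fun h' => h ((G.adj_comm i j).mpr h'))]
  have ha_sum : ∀ i, ∑ j, a i j = d i := fun i => (G.degree_eq_sum_if_adj i).symm
  have hY : ∀ i, ∑ j, a i j * X j = (d i - ℓ) * X i := by
    intro i
    have h := congrFun heig i
    rw [G.lapMatrix_mulVec_apply] at h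
    have hnb : ∑ u ∈ G.neighborFinset i, X u = ∑ j, a i j * X j := by
      rw [SimpleGraph.neighborFinset_eq_filter, Finset.sum_filter]
      refine Finset.sum_congr rfl fun j _ => ?_
      by_cases hadj : G.Adj i j <;> simp [ha, hadj]
    rw [hnb] at h
    simp only [Pi.smul_apply, smul_eq_mul] at h
    have hdi : (G.degree i : ℝ) = d i := rfl
    rw [hdi] at h
    linarith [h]
  have hS : ∀ i, (∑ k ∈ G.neighborFinset i, (G.degree k : ℝ)) = ∑ k, a i k * d k := by
    intro i
    rw [SimpleGraph.neighborFinset_eq_filter, Finset.sum_filter]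
    refine Finset.sum_congr rfl fun k _ => ?_
    by_cases hadj : G.Adj i k <;> simp [ha, hd, hadj]
  have hw_card : ∀ i j, (∑ k, a i k * a j k)
      = ((G.neighborFinset i ∩ G.neighborFinset j).card : ℝ) := by
    intro i j
    have : ∀ k, a i k * a j k
        = if k ∈ G.neighborFinset i ∩ G.neighborFinset j then (1 : ℝ) else 0 := by
      intro k
      by_cases h1 : G.Adj i k <;> by_cases h2 : G.Adj j k <;>
        simp [ha, h1, h2, Finset.mem_inter]
    rw [Finset.sum_congr rfl fun k _ => this k, Finset.sum_ite_mem, Finset.univ_inter,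
      Finset.sum_const, nsmul_eq_mul, mul_one]
  -- nonnegativity of the weighted Laplacian quadratic form
  have hpos : 0 ≤ ∑ i, ∑ j, ((∑ k, a i k * a j k) - (lam - mu) * a i j - mu)
      * (X i - X j) ^ 2 := by
    refine Finset.sum_nonneg fun i _ => Finset.sum_nonneg fun j _ => ?_
    rcases eq_or_ne i j with rfl | hij
    · simp
    · refine mul_nonneg ?_ (sq_nonneg _)
      rw [hw_card i j]
      by_cases hadj : G.Adj i j
      · have := hlam i j hadj
        simp only [ha, if_pos hadj]
        linarith
      · have := hmu i j hij hadj
        simp only [ha, if_neg hadj]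
        linarith
  have hident := quad_ident n a X d ℓ lam mu ha_symm ha_sum hY hsum
  rw [hident] at hpos
  -- hence the sum of f i * X i ^ 2 is nonpositive
  by_contra hcon
  push_neg at hcon
  obtain ⟨i0, hi0⟩ := Function.ne_iff.mp hX
  have hterm : ∀ i : Fin n, (-2) * ((ℓ ^ 2 - (2 * d i - lam + mu) * ℓ + d i ^ 2
      - (∑ k, a i k * d k) + mu * n) * X i ^ 2) ≤ 0 := by
    intro i
    have hf : 0 < ℓ ^ 2 - (2 * d i - lam + mu) * ℓ + d i ^ 2
        - (∑ k, a i k * d k) + mu * n := by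
      have := hcon i
      rw [hS i] at this
      linarith
    nlinarith [sq_nonneg (X i)]
  have hterm0 : (-2) * ((ℓ ^ 2 - (2 * d i0 - lam + mu) * ℓ + d i0 ^ 2
      - (∑ k, a i0 k * d k) + mu * n) * X i0 ^ 2) < 0 := by
    have hf : 0 < ℓ ^ 2 - (2 * d i0 - lam + mu) * ℓ + d i0 ^ 2
        - (∑ k, a i0 k * d k) + mu * n := by
      have := hcon i0
      rw [hS i0] at this
      linarith
    have hx2 : 0 < X i0 ^ 2 := by
      have : X i0 ≠ 0 := by simpa using hi0
      positivity
    nlinarith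
  have : ∑ i, (-2) * ((ℓ ^ 2 - (2 * d i - lam + mu) * ℓ + d i ^ 2
      - (∑ k, a i k * d k) + mu * n) * X i ^ 2) < 0 :=
    Finset.sum_neg' (fun i _ => hterm i) ⟨i0, Finset.mem_univ i0, hterm0⟩
  linarith

/-- **Corollary (upper bound on the Laplacian spread).** For a simple connected
non-complete graph `G` and reals `λ ≤ λ(G)`, `μ ≤ μ(G)`, the Laplacian spread
`𝒮_L(G) = ℓ₁(G) − ℓ_{n−1}(G)` satisfies
`𝒮_L(G) ≤ max_i (2d_i − λ + μ + √(rad_i))/2 − min_j (2d_j − λ + μ − √(rad_j))/2`,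
max and min over vertices with nonnegative radicand
`rad_i = 4 d_i m_i − 4(λ−μ)d_i + (λ−μ)² − 4μn`. -/
theorem laplacian_spread_upper_bound (n : ℕ) (G : SimpleGraph (Fin n))
    [DecidableRel G.Adj]
    (hconn : G.Connected)
    (hnoncomplete : ∃ i j : Fin n, i ≠ j ∧ ¬ G.Adj i j)
    (lam mu : ℝ)
    (hlam : ∀ i j : Fin n, G.Adj i j →
      lam ≤ ((G.neighborFinset i ∩ G.neighborFinset j).card : ℝ))
    (hmu : ∀ i j : Fin n, i ≠ j → ¬ G.Adj i j →
      mu ≤ ((G.neighborFinset i ∩ G.neighborFinset j).card : ℝ))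
    (ℓ₁ ℓₙ₁ : ℝ)
    (hℓ₁ : IsGreatest {l : ℝ | ∃ X : Fin n → ℝ, X ≠ 0 ∧
      (G.lapMatrix ℝ).mulVec X = l • X} ℓ₁)
    (hℓₙ₁ : IsLeast {l : ℝ | ∃ X : Fin n → ℝ, X ≠ 0 ∧ (∑ i, X i) = 0 ∧
      (G.lapMatrix ℝ).mulVec X = l • X} ℓₙ₁) :
    ∃ i j : Fin n,
      0 ≤ 4 * (∑ k ∈ G.neighborFinset i, (G.degree k : ℝ))
          - 4 * (lam - mu) * (G.degree i : ℝ) + (lam - mu) ^ 2 - 4 * mu * (n : ℝ) ∧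
      0 ≤ 4 * (∑ k ∈ G.neighborFinset j, (G.degree k : ℝ))
          - 4 * (lam - mu) * (G.degree j : ℝ) + (lam - mu) ^ 2 - 4 * mu * (n : ℝ) ∧
      ℓ₁ - ℓₙ₁ ≤
        (2 * (G.degree i : ℝ) - lam + mu
          + Real.sqrt (4 * (∑ k ∈ G.neighborFinset i, (G.degree k : ℝ))
            - 4 * (lam - mu) * (G.degree i : ℝ) + (lam - mu) ^ 2 - 4 * mu * (n : ℝ))) / 2
        - (2 * (G.degree j : ℝ) - lam + mu
          - Real.sqrt (4 * (∑ k ∈ G.neighborFinset j, (G.degree k : ℝ))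
            - 4 * (lam - mu) * (G.degree j : ℝ) + (lam - mu) ^ 2 - 4 * mu * (n : ℝ))) / 2 := by
  classical
  obtain ⟨v0, v1, hv01, -⟩ := hnoncomplete
  obtain ⟨X2, hX2ne, hX2sum, hX2eig⟩ := hℓₙ₁.1
  -- ℓₙ₁ is nonnegative
  have hpsd := SimpleGraph.posSemidef_lapMatrix ℝ G
  have hxx : 0 < X2 ⬝ᵥ X2 := by
    rcases lt_or_eq_of_le (Finset.sum_nonneg fun i _ => mul_self_nonneg (X2 i)) with h | h
    · exact h
    · exact absurd ((dotProduct_self_eq_zero).mp h.symm) hX2ne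
  have h0le : 0 ≤ ℓₙ₁ := by
    have h := hpsd.dotProduct_mulVec_nonneg X2
    rw [hX2eig] at h
    simp only [dotProduct_smul, smul_eq_mul, star_trivial] at h
    nlinarith
  -- ℓₙ₁ is nonzero
  have hlnz : ℓₙ₁ ≠ 0 := by
    intro h0
    rw [h0, zero_smul] at hX2eig
    have hzero : Matrix.toLin' (G.lapMatrix ℝ) X2 = 0 := by
      rw [Matrix.toLin'_apply, hX2eig]
    have hconst := (G.lapMatrix_mulVec_eq_zero_iff_forall_reachable (x := X2)).mp hzero
    have hXc : ∀ i : Fin n, X2 i = X2 v0 := fun i =>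
      hconst i v0 (hconn.preconnected i v0)
    have : (n : ℝ) * X2 v0 = 0 := by
      rw [← hX2sum]
      rw [Finset.sum_congr rfl fun i _ => hXc i, Finset.sum_const, Finset.card_univ,
        Fintype.card_fin, nsmul_eq_mul]
    have hn : (0 : ℝ) < n := by
      exact_mod_cast Nat.pos_of_ne_zero (fun h => (Fin.pos v0).ne' (by omega))
    have hX20 : X2 v0 = 0 := by
      rcases mul_eq_zero.mp this with h | h
      · exact absurd h hn.ne'
      · exact h
    exact hX2ne (funext fun i => by rw [hXc i, hX20]; rfl)
  have hl2pos : 0 < ℓₙ₁ := lt_of_le_of_ne h0le (Ne.symm hlnz)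
  have hle : ℓₙ₁ ≤ ℓ₁ := hℓ₁.2 ⟨X2, hX2ne, hX2eig⟩
  have hl1pos : 0 < ℓ₁ := lt_of_lt_of_le hl2pos hle
  obtain ⟨X1, hX1ne, hX1eig⟩ := hℓ₁.1
  -- eigenvector of a nonzero eigenvalue sums to zero
  have hX1sum : ∑ i, X1 i = 0 := by
    have hcol : ∑ i, ((G.lapMatrix ℝ).mulVec X1) i = 0 := by
      have hrow : ∀ j : Fin n, ∑ i, G.lapMatrix ℝ j i = 0 := by
        intro j
        have := congrFun (G.lapMatrix_mulVec_const_eq_zero (R := ℝ)) j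
        simpa [Matrix.mulVec, dotProduct] using this
      calc ∑ i, ((G.lapMatrix ℝ).mulVec X1) i
          = ∑ i, ∑ j, G.lapMatrix ℝ i j * X1 j := rfl
        _ = ∑ j, (∑ i, G.lapMatrix ℝ i j) * X1 j := by
            rw [Finset.sum_comm]
            exact Finset.sum_congr rfl fun j _ => (Finset.sum_mul _ _ _).symm
        _ = 0 := by
            refine Finset.sum_eq_zero fun j _ => ?_
            have hsymm : ∀ i : Fin n, G.lapMatrix ℝ i j = G.lapMatrix ℝ j i :=
              fun i => (G.isSymm_lapMatrix (R := ℝ)).apply j i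
            rw [Finset.sum_congr rfl fun i _ => hsymm i, hrow j, zero_mul]
    rw [hX1eig] at hcol
    simp only [Pi.smul_apply, smul_eq_mul, ← Finset.mul_sum] at hcol
    rcases mul_eq_zero.mp hcol with h | h
    · exact absurd h hl1pos.ne'
    · exact h
  obtain ⟨i, hfi⟩ := key_quadratic G lam mu hlam hmu ℓ₁ X1 hX1ne hX1sum hX1eig
  obtain ⟨j, hfj⟩ := key_quadratic G lam mu hlam hmu ℓₙ₁ X2 hX2ne hX2sum hX2eig
  refine ⟨i, j, ?_, ?_, ?_⟩ <;>
  · have hbi := root_bounds (ℓ := ℓ₁) (b := 2 * (G.degree i : ℝ) - lam + mu)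
      (c := (G.degree i : ℝ) ^ 2 - (∑ k ∈ G.neighborFinset i, (G.degree k : ℝ)) + mu * n)
      (by linarith)
    have hbj := root_bounds (ℓ := ℓₙ₁) (b := 2 * (G.degree j : ℝ) - lam + mu)
      (c := (G.degree j : ℝ) ^ 2 - (∑ k ∈ G.neighborFinset j, (G.degree k : ℝ)) + mu * n)
      (by linarith)
    have hri : (2 * (G.degree i : ℝ) - lam + mu) ^ 2
        - 4 * ((G.degree i : ℝ) ^ 2 - (∑ k ∈ G.neighborFinset i, (G.degree k : ℝ)) + mu * n)
        = 4 * (∑ k ∈ G.neighborFinset i, (G.degree k : ℝ))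
          - 4 * (lam - mu) * (G.degree i : ℝ) + (lam - mu) ^ 2 - 4 * mu * (n : ℝ) := by ring
    have hrj : (2 * (G.degree j : ℝ) - lam + mu) ^ 2
        - 4 * ((G.degree j : ℝ) ^ 2 - (∑ k ∈ G.neighborFinset j, (G.degree k : ℝ)) + mu * n)
        = 4 * (∑ k ∈ G.neighborFinset j, (G.degree k : ℝ))
          - 4 * (lam - mu) * (G.degree j : ℝ) + (lam - mu) ^ 2 - 4 * mu * (n : ℝ) := by ring
    rw [hri] at hbi
    rw [hrj] at hbj
    obtain ⟨h1, h2, h3⟩ := hbi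
    obtain ⟨h4, h5, h6⟩ := hbj
    first
    | exact h1
    | exact h4
    | linarith
end

section
/- Let G be a simple connected graph on n ≥ 2 vertices with maximum degree Δ and at least one pair of distinct nonadjacent vertices, and let λ and μ be real numbers such that every pair of adjacent vertices of G has at least λ common neighbors and every pair of distinct nonadjacent vertices of G has at least μ common neighbors. Then the largest Laplacian eigenvalue satisfies ℓ_1(G) ≤ ( 2Δ − λ + μ + sqrt( (2Δ − λ + μ)² − 4μn ) ) / 2. -/
open Finset

private lemma neighbor_sum_eq {n : ℕ} (G : SimpleGraph (Fin n)) [DecidableRel G.Adj]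
    (v : Fin n) (Y : Fin n → ℝ) :
    ∑ w ∈ G.neighborFinset v, Y w = ∑ w : Fin n, (if G.Adj v w then (1:ℝ) else 0) * Y w := by
  rw [G.neighborFinset_eq_filter, Finset.sum_filter]
  simp [ite_mul]

private lemma double_count {n : ℕ} (G : SimpleGraph (Fin n)) [DecidableRel G.Adj]
    (u : Fin n) (Y : Fin n → ℝ) :
    ∑ v ∈ G.neighborFinset u, ∑ w ∈ G.neighborFinset v, Y w
      = ∑ w : Fin n, ((G.neighborFinset u ∩ G.neighborFinset w).card : ℝ) * Y w := by
  simp_rw [neighbor_sum_eq G _ Y]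
  rw [Finset.sum_comm]
  refine Finset.sum_congr rfl fun w _ => ?_
  rw [← Finset.sum_mul]
  congr 1
  have h1 : G.neighborFinset u ∩ G.neighborFinset w
      = (G.neighborFinset u).filter (fun v => G.Adj v w) := by
    ext v
    simp [SimpleGraph.mem_neighborFinset, G.adj_comm w v]
  rw [h1, ← Finset.sum_boole]

private lemma lap_index_pos (n : ℕ) (hn : 2 ≤ n) (G : SimpleGraph (Fin n))
    [DecidableRel G.Adj] (hconn : G.Connected) (ℓ₁ : ℝ)
    (hℓ₁ : IsGreatest {l : ℝ | ∃ X : Fin n → ℝ, X ≠ 0 ∧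
      (G.lapMatrix ℝ).mulVec X = l • X} ℓ₁) : 0 < ℓ₁ := by
  classical
  have hpsd : (G.lapMatrix ℝ).PosSemidef := SimpleGraph.posSemidef_lapMatrix ℝ G
  have he : (G.lapMatrix ℝ).IsHermitian := hpsd.1
  have hmem : ∀ i : Fin n, he.eigenvalues i ∈ {l : ℝ | ∃ X : Fin n → ℝ, X ≠ 0 ∧
      (G.lapMatrix ℝ).mulVec X = l • X} := by
    intro i
    refine ⟨⇑(he.eigenvectorBasis i), ?_, he.mulVec_eigenvectorBasis i⟩
    intro h
    exact he.eigenvectorBasis.orthonormal.ne_zero i (by ext j; exact congrFun h j)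
  have hub : ∀ i, he.eigenvalues i ≤ ℓ₁ := fun i => hℓ₁.2 (hmem i)
  have hnn : ∀ i, 0 ≤ he.eigenvalues i := hpsd.eigenvalues_nonneg
  have i0 : Fin n := ⟨0, by omega⟩
  rcases lt_or_eq_of_le (le_trans (hnn i0) (hub i0)) with h | h
  · exact h
  · exfalso
    have hz : ∀ i, he.eigenvalues i = 0 := fun i => le_antisymm (h ▸ hub i) (hnn i)
    have hLB : ∀ i, (G.lapMatrix ℝ).mulVec ⇑(he.eigenvectorBasis i) = 0 := by
      intro i; rw [he.mulVec_eigenvectorBasis, hz, zero_smul]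
    have hL0 : ∀ x : Fin n → ℝ, (G.lapMatrix ℝ).mulVec x = 0 := by
      intro x
      have hx : (∑ i, he.eigenvectorBasis.repr (WithLp.toLp 2 x) i • ⇑(he.eigenvectorBasis i)) = x := by
        have := congrArg WithLp.ofLp (he.eigenvectorBasis.sum_repr (WithLp.toLp 2 x))
        simpa using this
      calc (G.lapMatrix ℝ).mulVec x
          = (G.lapMatrix ℝ).mulVecLin x := rfl
        _ = (G.lapMatrix ℝ).mulVecLin
            (∑ i, he.eigenvectorBasis.repr (WithLp.toLp 2 x) i • ⇑(he.eigenvectorBasis i)) := by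
            rw [show (∑ i, he.eigenvectorBasis.repr (WithLp.toLp 2 x) i • ⇑(he.eigenvectorBasis i)) = x from hx]
        _ = ∑ i, he.eigenvectorBasis.repr (WithLp.toLp 2 x) i •
              (G.lapMatrix ℝ).mulVecLin ⇑(he.eigenvectorBasis i) := by
            rw [map_sum]; simp_rw [map_smul]
        _ = 0 := by simp [Matrix.mulVecLin_apply, hLB]
    have hne : (⟨0, by omega⟩ : Fin n) ≠ ⟨1, by omega⟩ := by simp [Fin.ext_iff]
    obtain ⟨p⟩ := hconn.preconnected ⟨0, by omega⟩ ⟨1, by omega⟩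
    obtain ⟨v, hv, q, -⟩ :=
      SimpleGraph.Walk.not_nil_iff.mp (SimpleGraph.Walk.not_nil_of_ne hne (p := p))
    have h1 := congrFun (hL0 (Pi.single ⟨0, by omega⟩ 1)) ⟨0, by omega⟩
    rw [SimpleGraph.lapMatrix_mulVec_apply] at h1
    have h2 : ∑ w ∈ G.neighborFinset ⟨0, by omega⟩,
        Pi.single (⟨0, by omega⟩ : Fin n) (1:ℝ) w = 0 := by
      apply Finset.sum_eq_zero
      intro w hw
      have : w ≠ ⟨0, by omega⟩ := by
        rintro rfl
        exact SimpleGraph.notMem_neighborFinset_self _ _ hw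
      simp [Pi.single_apply, this]
    rw [h2, Pi.single_eq_same, mul_one, sub_zero, Pi.zero_apply] at h1
    have h3 : 0 < G.degree (⟨0, by omega⟩ : Fin n) :=
      (SimpleGraph.degree_pos_iff_exists_adj _ _).mpr ⟨v, hv⟩
    rw [show G.degree (⟨0, by omega⟩ : Fin n) = 0 from by exact_mod_cast h1] at h3
    exact lt_irrefl 0 h3

private lemma quad_bound (x b m t : ℝ) (h : x ^ 2 ≤ b * x - m * t) :
    x ≤ (b + Real.sqrt (b ^ 2 - 4 * m * t)) / 2 := by
  have h1 : (2 * x - b) ^ 2 ≤ b ^ 2 - 4 * m * t := by nlinarith [h]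
  have h2 : 2 * x - b ≤ Real.sqrt (b ^ 2 - 4 * m * t) :=
    calc 2 * x - b ≤ |2 * x - b| := le_abs_self _
      _ = Real.sqrt ((2 * x - b) ^ 2) := (Real.sqrt_sq_eq_abs _).symm
      _ ≤ Real.sqrt (b ^ 2 - 4 * m * t) := Real.sqrt_le_sqrt h1
  linarith

/-- **Corollary.** For a simple connected non-complete graph `G` on `n ≥ 2` vertices
with maximum degree `Δ` and reals `λ ≤ λ(G)`, `μ ≤ μ(G)`:
`ℓ₁(G) ≤ (2Δ − λ + μ + √((2Δ − λ + μ)² − 4μn))/2`. -/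
theorem laplacian_index_maxDegree_bound (n : ℕ) (hn : 2 ≤ n)
    (G : SimpleGraph (Fin n)) [DecidableRel G.Adj]
    (hconn : G.Connected)
    (hnoncomplete : ∃ i j : Fin n, i ≠ j ∧ ¬ G.Adj i j)
    (lam mu : ℝ)
    (hlam : ∀ i j : Fin n, G.Adj i j →
      lam ≤ ((G.neighborFinset i ∩ G.neighborFinset j).card : ℝ))
    (hmu : ∀ i j : Fin n, i ≠ j → ¬ G.Adj i j →
      mu ≤ ((G.neighborFinset i ∩ G.neighborFinset j).card : ℝ))
    (ℓ₁ : ℝ)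
    (hℓ₁ : IsGreatest {l : ℝ | ∃ X : Fin n → ℝ, X ≠ 0 ∧
      (G.lapMatrix ℝ).mulVec X = l • X} ℓ₁) :
    ℓ₁ ≤ (2 * (G.maxDegree : ℝ) - lam + mu
      + Real.sqrt ((2 * (G.maxDegree : ℝ) - lam + mu) ^ 2 - 4 * mu * (n : ℝ))) / 2 := by
  classical
  have hlpos : 0 < ℓ₁ := lap_index_pos n hn G hconn ℓ₁ hℓ₁
  obtain ⟨⟨X, hX0, hXeig⟩, -⟩ := hℓ₁
  set Δ : ℝ := (G.maxDegree : ℝ) with hΔdef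
  set d : Fin n → ℝ := fun i => (G.degree i : ℝ) with hddef
  set c : Fin n → Fin n → ℝ :=
    fun i j => ((G.neighborFinset i ∩ G.neighborFinset j).card : ℝ) with hcdef
  -- sum of entries of X is zero
  have hXsum : ∑ i, X i = 0 := by
    have h1 : ∑ i, ((G.lapMatrix ℝ).mulVec X) i = ℓ₁ * ∑ i, X i := by
      rw [hXeig]; simp [Finset.mul_sum]
    have h2 : ∑ i, ((G.lapMatrix ℝ).mulVec X) i = 0 := by
      simp only [Matrix.mulVec, dotProduct]
      rw [Finset.sum_comm]
      apply Finset.sum_eq_zero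
      intro j _
      have hcol : ∀ i, G.lapMatrix ℝ i j = G.lapMatrix ℝ j i := by
        intro i
        have h := G.isSymm_lapMatrix (R := ℝ)
        rw [Matrix.IsSymm] at h
        conv_lhs => rw [← h]
        rfl
      calc ∑ i, G.lapMatrix ℝ i j * X j = (∑ i, G.lapMatrix ℝ j i) * X j := by
            rw [Finset.sum_mul]
            exact Finset.sum_congr rfl fun i _ => by rw [hcol i]
        _ = 0 := by
            have := congrFun (G.lapMatrix_mulVec_const_eq_zero (R := ℝ)) j
            simp only [Matrix.mulVec, dotProduct, mul_one, Pi.zero_apply] at this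
            rw [this, zero_mul]
    have := h1.symm.trans h2
    rcases mul_eq_zero.mp this with h | h
    · exact absurd h (ne_of_gt hlpos)
    · exact h
  -- maximal entry
  obtain ⟨u, -, hmax⟩ := Finset.exists_max_image (univ : Finset (Fin n)) X ⟨⟨0, by omega⟩, mem_univ _⟩
  have hmax' : ∀ i, X i ≤ X u := fun i => hmax i (mem_univ i)
  have hXu : 0 < X u := by
    by_contra hle
    push_neg at hle
    have hnp : ∀ i ∈ (univ : Finset (Fin n)), X i ≤ 0 := fun i _ => le_trans (hmax' i) hle
    have := (Finset.sum_eq_zero_iff_of_nonpos hnp).mp hXsum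
    exact hX0 (funext fun i => this i (mem_univ i))
  set Y : Fin n → ℝ := fun i => (X u)⁻¹ * X i with hYdef
  have hYu : Y u = 1 := inv_mul_cancel₀ (ne_of_gt hXu)
  have hYle : ∀ i, Y i ≤ 1 := by
    intro i
    have h1 : (X u)⁻¹ * X i ≤ (X u)⁻¹ * X u :=
      mul_le_mul_of_nonneg_left (hmax' i) (inv_nonneg.mpr hXu.le)
    rwa [inv_mul_cancel₀ (ne_of_gt hXu)] at h1
  have hYsum : ∑ i, Y i = 0 := by
    simp only [hYdef, ← Finset.mul_sum, hXsum, mul_zero]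
  have hYeig : (G.lapMatrix ℝ).mulVec Y = ℓ₁ • Y := by
    have hYX : Y = (X u)⁻¹ • X := rfl
    rw [hYX, Matrix.mulVec_smul, hXeig, smul_comm]
  -- row expansions
  have hrowY : ∀ i, d i * Y i - ∑ v ∈ G.neighborFinset i, Y v = ℓ₁ * Y i := by
    intro i
    have := congrFun hYeig i
    rw [SimpleGraph.lapMatrix_mulVec_apply] at this
    simpa using this
  have hS : ∑ v ∈ G.neighborFinset u, Y v = d u - ℓ₁ := by
    have := hrowY u
    rw [hYu, mul_one, mul_one] at this
    linarith
  set S : ℝ := ∑ v ∈ G.neighborFinset u, Y v with hSdef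
  set S1 : ℝ := ∑ v ∈ G.neighborFinset u, c u v * Y v with hS1def
  set S2 : ℝ := ∑ v ∈ G.neighborFinset u, d v * Y v with hS2def
  set S3 : ℝ := ∑ v ∈ G.neighborFinset u, d v with hS3def
  set S4 : ℝ := ∑ v ∈ G.neighborFinset u, c u v with hS4def
  -- second-order row expansion at u
  have hL2 : (G.lapMatrix ℝ).mulVec ((G.lapMatrix ℝ).mulVec Y) = (ℓ₁ ^ 2) • Y := by
    rw [hYeig, Matrix.mulVec_smul, hYeig, smul_smul, sq]
  have hmain : ℓ₁ ^ 2 = d u * (d u - S) - S2 + ∑ w : Fin n, c u w * Y w := by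
    have h0 := congrFun hL2 u
    rw [SimpleGraph.lapMatrix_mulVec_apply] at h0
    simp_rw [SimpleGraph.lapMatrix_mulVec_apply] at h0
    rw [Finset.sum_sub_distrib, double_count G u Y] at h0
    simp only [Pi.smul_apply, smul_eq_mul, hYu, mul_one] at h0
    rw [hSdef, hS2def]
    simp only [hddef, hcdef]
    linarith only [h0]
  -- the outside set W
  set W : Finset (Fin n) := univ \ insert u (G.neighborFinset u) with hWdef
  have hsplit : ∀ f : Fin n → ℝ, ∑ w, f w = f u + ∑ w ∈ G.neighborFinset u, f w
      + ∑ w ∈ W, f w := by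
    intro f
    rw [← Finset.sum_sdiff (Finset.subset_univ (insert u (G.neighborFinset u))),
      Finset.sum_insert (SimpleGraph.notMem_neighborFinset_self G u)]
    ring
  have hWmem : ∀ w ∈ W, w ≠ u ∧ ¬ G.Adj u w := by
    intro w hw
    rw [hWdef, Finset.mem_sdiff, Finset.mem_insert] at hw
    push_neg at hw
    exact ⟨hw.2.1, fun h => hw.2.2 ((SimpleGraph.mem_neighborFinset G u w).mpr h)⟩
  have hcuu : c u u = d u := by
    simp only [hcdef, hddef, Finset.inter_self, SimpleGraph.card_neighborFinset_eq_degree]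
  -- value of ∑_{w ∈ W} (1 - Y w)
  have hcard : ∑ w ∈ G.neighborFinset u, (1 - Y w) = d u - S := by
    rw [Finset.sum_sub_distrib, Finset.sum_const, nsmul_eq_mul, mul_one,
      SimpleGraph.card_neighborFinset_eq_degree]
  have hB : ∑ w ∈ W, (1 - Y w) = (n : ℝ) - ℓ₁ := by
    have h1 := hsplit (fun w => 1 - Y w)
    have h2 : ∑ w : Fin n, (1 - Y w) = (n : ℝ) := by
      rw [Finset.sum_sub_distrib, hYsum, sub_zero, Finset.sum_const, nsmul_eq_mul, mul_one,
        Finset.card_univ, Fintype.card_fin]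
    rw [h2, hYu, hcard] at h1
    linarith [h1, hS]
  -- value of ∑_{w ∈ W} c u w
  have htot : ∑ w : Fin n, c u w = S3 := by
    have := double_count G u (fun _ => (1:ℝ))
    simp only [mul_one] at this
    rw [← this, hS3def]
    refine Finset.sum_congr rfl fun v _ => ?_
    rw [Finset.sum_const, nsmul_eq_mul, mul_one, SimpleGraph.card_neighborFinset_eq_degree]
  have hA : ∑ w ∈ W, c u w = S3 - d u - S4 := by
    have h1 := hsplit (c u)
    rw [htot, hcuu] at h1
    linarith [h1, hS4def]
  -- split ∑_w c u w * Y w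
  have hsplitCY : ∑ w : Fin n, c u w * Y w = d u + S1 + ∑ w ∈ W, c u w * Y w := by
    have h1 := hsplit (fun w => c u w * Y w)
    simp only [hcuu, hYu, mul_one] at h1
    linarith [h1, hS1def]
  -- inequality on W
  have hineqW : ∑ w ∈ W, c u w * Y w
      ≤ (∑ w ∈ W, c u w) - mu * ∑ w ∈ W, (1 - Y w) := by
    have hterm : ∀ w ∈ W, c u w * Y w ≤ c u w - mu * (1 - Y w) := by
      intro w hw
      obtain ⟨hwne, hwnadj⟩ := hWmem w hw
      have hmu' : mu ≤ c u w := hmu u w (Ne.symm hwne) hwnadj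
      have h1 : Y w ≤ 1 := hYle w
      nlinarith [mul_nonneg (sub_nonneg.mpr hmu') (sub_nonneg.mpr h1)]
    calc ∑ w ∈ W, c u w * Y w ≤ ∑ w ∈ W, (c u w - mu * (1 - Y w)) :=
          Finset.sum_le_sum hterm
      _ = (∑ w ∈ W, c u w) - mu * ∑ w ∈ W, (1 - Y w) := by
          rw [Finset.sum_sub_distrib, Finset.mul_sum]
  -- inequality on neighbors
  have hexp : ∑ v ∈ G.neighborFinset u, (d v - c u v) * (1 - Y v)
      = S3 - S4 - (S2 - S1) := by
    have hpt : ∀ v ∈ G.neighborFinset u, (d v - c u v) * (1 - Y v)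
        = (d v - c u v) - (d v * Y v - c u v * Y v) := fun v _ => by ring
    rw [Finset.sum_congr rfl hpt]
    simp only [Finset.sum_sub_distrib, hS1def, hS2def, hS3def, hS4def]
  have hineqN : S3 - S4 - (S2 - S1) ≤ (Δ - lam) * ℓ₁ := by
    rw [← hexp]
    have hterm : ∀ v ∈ G.neighborFinset u, (d v - c u v) * (1 - Y v)
        ≤ (Δ - lam) * (1 - Y v) := by
      intro v hv
      have hadj : G.Adj u v := (SimpleGraph.mem_neighborFinset G u v).mp hv
      have hdv : d v ≤ Δ := by
        simp only [hddef, hΔdef]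
        exact_mod_cast G.degree_le_maxDegree v
      have hcv : lam ≤ c u v := hlam u v hadj
      have hY : 0 ≤ 1 - Y v := sub_nonneg.mpr (hYle v)
      apply mul_le_mul_of_nonneg_right _ hY
      linarith
    calc ∑ v ∈ G.neighborFinset u, (d v - c u v) * (1 - Y v)
        ≤ ∑ v ∈ G.neighborFinset u, (Δ - lam) * (1 - Y v) := Finset.sum_le_sum hterm
      _ = (Δ - lam) * (d u - S) := by rw [← Finset.mul_sum, hcard]
      _ = (Δ - lam) * ℓ₁ := by rw [hS]; ring
  -- assemble the quadratic inequality
  have hdu : d u ≤ Δ := by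
    simp only [hddef, hΔdef]
    exact_mod_cast G.degree_le_maxDegree u
  have hq : ℓ₁ ^ 2 ≤ (2 * Δ - lam + mu) * ℓ₁ - mu * n := by
    have h1 : ℓ₁ ^ 2 = d u * ℓ₁ + d u + (S1 - S2) + ∑ w ∈ W, c u w * Y w := by
      rw [hmain, hsplitCY, show (d u - S : ℝ) = ℓ₁ from by linarith [hS]]
      ring
    have h2 : ∑ w ∈ W, c u w * Y w ≤ (S3 - d u - S4) - mu * ((n:ℝ) - ℓ₁) := by
      rw [← hA, ← hB]
      exact hineqW
    have h3 : d u * ℓ₁ ≤ Δ * ℓ₁ := mul_le_mul_of_nonneg_right hdu hlpos.le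
    linarith only [hineqN, h1, h2, h3]
  exact quad_bound ℓ₁ (2 * Δ - lam + mu) mu n hq
end

section
/- Let G be a simple connected graph on n ≥ 2 vertices with minimum degree δ and maximum degree Δ, having at least one pair of distinct nonadjacent vertices, and let λ and μ be real numbers such that every pair of adjacent vertices of G has at least λ common neighbors and every pair of distinct nonadjacent vertices of G has at least μ common neighbors. Then the second-smallest Laplacian eigenvalue satisfies ℓ_{n−1}(G) ≥ ( 2δ − λ + μ − sqrt( (2δ − λ + μ)² − 4μn − 4δ² + 4Δ² ) ) / 2. -/
open Finset


lemma sum5 {α : Type*} (s : Finset α) (f g h p q : α → ℝ) (B mu : ℝ) :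
    ∑ j ∈ s, (f j - g j + h j - B * p j + mu * q j)
    = (∑ j ∈ s, f j) - (∑ j ∈ s, g j) + (∑ j ∈ s, h j)
      - B * (∑ j ∈ s, p j) + mu * (∑ j ∈ s, q j) := by
  simp only [Finset.sum_add_distrib, Finset.sum_sub_distrib, ← Finset.mul_sum]

lemma quad_id {n : ℕ} (X : Fin n → ℝ) (N : Fin n → Fin n → ℝ)
    (hsymm : ∀ i j, N i j = N j i) (hrow : ∀ i, ∑ j, N i j = 0) :
    ∑ i, ∑ j, N i j * X i * X j = -(1/2) * ∑ i, ∑ j, N i j * (X i - X j)^2 := by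
  have h1 : ∑ i, ∑ j, N i j * (X i - X j)^2
      = (∑ i, ∑ j, N i j * X i^2) + (∑ i, ∑ j, N i j * X j^2)
        - 2 * (∑ i, ∑ j, N i j * X i * X j) := by
    rw [Finset.mul_sum, ← Finset.sum_add_distrib, ← Finset.sum_sub_distrib]
    refine Finset.sum_congr rfl fun i _ => ?_
    rw [Finset.mul_sum, ← Finset.sum_add_distrib, ← Finset.sum_sub_distrib]
    refine Finset.sum_congr rfl fun j _ => ?_
    ring
  have h2 : (∑ i, ∑ j, N i j * X j^2) = ∑ i, ∑ j, N i j * X i^2 := by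
    rw [Finset.sum_comm]
    exact Finset.sum_congr rfl fun i _ => Finset.sum_congr rfl fun j _ => by rw [hsymm]
  have h3 : (∑ i, ∑ j, N i j * X i^2) = 0 := by
    simp_rw [← Finset.sum_mul, hrow, zero_mul, Finset.sum_const_zero]
  rw [h1, h2, h3]
  ring

private lemma partA {n : ℕ} (hn : 2 ≤ n) (G : SimpleGraph (Fin n)) [DecidableRel G.Adj]
    (lam mu : ℝ)
    (hlam : ∀ i j : Fin n, G.Adj i j →
      lam ≤ ((G.neighborFinset i ∩ G.neighborFinset j).card : ℝ))
    (hmu : ∀ i j : Fin n, i ≠ j → ¬ G.Adj i j →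
      mu ≤ ((G.neighborFinset i ∩ G.neighborFinset j).card : ℝ))
    (ℓ : ℝ) (X : Fin n → ℝ) (hsum : ∑ i, X i = 0)
    (heig : (G.lapMatrix ℝ).mulVec X = ℓ • X) :
    (ℓ^2 - (2*(G.minDegree : ℝ) - lam + mu)*ℓ + mu*n) * (∑ i, X i^2)
      ≤ (2*((G.maxDegree : ℝ) - (G.minDegree : ℝ))*ℓ) * (∑ i, X i^2) := by
  classical
  set δd : ℝ := (G.minDegree : ℝ) with hδd
  set Δd : ℝ := (G.maxDegree : ℝ) with hΔd
  set B : ℝ := 2*δd - lam + mu with hB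
  set s : ℝ := ∑ i, X i^2 with hs
  set a : Fin n → Fin n → ℝ := fun i j => if G.Adj i j then 1 else 0 with ha
  set d : Fin n → ℝ := fun i => (G.degree i : ℝ) with hd
  have ha_symm : ∀ i j, a i j = a j i := by
    intro i j; simp only [ha]
    by_cases h : G.Adj i j
    · rw [if_pos h, if_pos h.symm]
    · rw [if_neg h, if_neg (fun h' => h h'.symm)]
  have hdeg : ∀ i, ∑ j, a i j = d i := by
    intro i
    simp only [ha, hd]
    rw [Finset.sum_boole, SimpleGraph.degree, SimpleGraph.neighborFinset_eq_filter]
  have hc : ∀ i j, (∑ k, a i k * a k j)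
      = ((G.neighborFinset i ∩ G.neighborFinset j).card : ℝ) := by
    intro i j
    have h1 : ∀ k, a i k * a k j = if (G.Adj i k ∧ G.Adj k j) then (1:ℝ) else 0 := by
      intro k
      by_cases h2 : G.Adj i k <;> by_cases h3 : G.Adj k j <;> simp [ha, h2, h3]
    simp_rw [h1]
    rw [Finset.sum_boole]
    congr 1
    congr 1
    ext k
    simp [SimpleGraph.mem_neighborFinset, G.adj_comm k j]
  -- eigen equation pointwise
  have heigp : ∀ i, d i * X i - ∑ j, a i j * X j = ℓ * X i := by
    intro i
    have h1 := congrFun heig i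
    rw [G.lapMatrix_mulVec_apply] at h1
    have h2 : ∑ u ∈ G.neighborFinset i, X u = ∑ j, a i j * X j := by
      simp only [ha]
      rw [SimpleGraph.neighborFinset_eq_filter, Finset.sum_filter]
      exact Finset.sum_congr rfl fun j _ => by by_cases h : G.Adj i j <;> simp [h]
    rw [h2] at h1
    exact h1
  set N : Fin n → Fin n → ℝ := fun i j =>
    (if i = j then d i^2 else 0) - (d i + d j) * a i j + (∑ k, a i k * a k j)
      - B * ((if i = j then d i else 0) - a i j) + mu * ((if i = j then (n:ℝ) else 0) - 1)
    with hN
  have hNsymm : ∀ i j, N i j = N j i := by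
    intro i j
    by_cases h : i = j
    · subst h; rfl
    · have h' : ¬ (j = i) := fun h2 => h h2.symm
      simp only [hN, if_neg h, if_neg h']
      rw [ha_symm i j]
      have h3 : ∑ k, a i k * a k j = ∑ k, a j k * a k i := by
        refine Finset.sum_congr rfl fun k _ => ?_
        rw [ha_symm i k, ha_symm k j]; ring
      rw [h3]; ring
  have hNrow : ∀ i, ∑ j, N i j = 0 := by
    intro i
    simp only [hN]
    rw [sum5]
    have e1 : ∑ j, (if i = j then d i^2 else 0) = d i ^2 := by
      rw [Finset.sum_ite_eq]; simp
    have e2 : ∑ j, (d i + d j) * a i j = d i * d i + ∑ j, d j * a i j := by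
      have : ∀ j, (d i + d j) * a i j = d i * a i j + d j * a i j := fun j => by ring
      simp_rw [this]
      rw [Finset.sum_add_distrib, ← Finset.mul_sum, hdeg i]
    have e3 : ∑ j, (∑ k, a i k * a k j) = ∑ k, a i k * d k := by
      rw [Finset.sum_comm]
      exact Finset.sum_congr rfl fun k _ => by rw [← Finset.mul_sum, hdeg k]
    have e4 : ∑ j, ((if i = j then d i else 0) - a i j) = 0 := by
      rw [Finset.sum_sub_distrib, Finset.sum_ite_eq, hdeg i]; simp
    have e5 : ∑ j, ((if i = j then (n:ℝ) else 0) - 1) = 0 := by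
      rw [Finset.sum_sub_distrib, Finset.sum_ite_eq]
      simp [Finset.card_univ]
    have e6 : ∑ j, d j * a i j = ∑ k, a i k * d k := by
      refine Finset.sum_congr rfl fun k _ => by rw [mul_comm]
    rw [e1, e2, e3, e4, e5, e6]
    ring
  set S : Fin n → ℝ := fun i => ∑ j, a i j * X j with hS
  have heigS : ∀ i, d i * X i - S i = ℓ * X i := heigp
  -- split the double sum over N
  have hsplit : ∑ i, ∑ j, N i j * X i * X j
      = (∑ i, ∑ j, (if i = j then d i^2 else 0) * X i * X j)
        - (∑ i, ∑ j, (d i + d j) * a i j * X i * X j)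
        + (∑ i, ∑ j, (∑ k, a i k * a k j) * X i * X j)
        - B * (∑ i, ∑ j, ((if i = j then d i else 0) - a i j) * X i * X j)
        + mu * (∑ i, ∑ j, ((if i = j then (n:ℝ) else 0) - 1) * X i * X j) := by
    rw [← sum5 Finset.univ]
    refine Finset.sum_congr rfl fun i _ => ?_
    rw [← sum5 Finset.univ]
    refine Finset.sum_congr rfl fun j _ => ?_
    simp only [hN]
    ring
  have hT1 : ∑ i, ∑ j, (if i = j then d i^2 else 0) * X i * X j
      = ∑ i, d i^2 * X i^2 := by
    refine Finset.sum_congr rfl fun i _ => ?_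
    simp_rw [ite_mul, zero_mul]
    rw [Finset.sum_ite_eq]
    simp [pow_two]
    ring
  have hT2 : ∑ i, ∑ j, (d i + d j) * a i j * X i * X j
      = 2 * ∑ i, d i * X i * S i := by
    have h1 : ∀ i j, (d i + d j) * a i j * X i * X j
        = d i * a i j * X i * X j + d j * a i j * X i * X j := fun i j => by ring
    simp_rw [h1, Finset.sum_add_distrib]
    have h2 : ∑ i, ∑ j, d j * a i j * X i * X j = ∑ i, ∑ j, d i * a i j * X i * X j := by
      rw [Finset.sum_comm]
      refine Finset.sum_congr rfl fun i _ => Finset.sum_congr rfl fun j _ => ?_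
      rw [ha_symm j i]; ring
    rw [h2]
    have h3 : ∀ i, ∑ j, d i * a i j * X i * X j = d i * X i * S i := by
      intro i
      rw [hS, Finset.mul_sum]
      exact Finset.sum_congr rfl fun j _ => by ring
    simp_rw [h3]
    ring
  have hT3 : ∑ i, ∑ j, (∑ k, a i k * a k j) * X i * X j = ∑ k, S k ^ 2 := by
    have h1 : ∀ i j, (∑ k, a i k * a k j) * X i * X j
        = ∑ k, a i k * a k j * X i * X j := fun i j => by rw [Finset.sum_mul, Finset.sum_mul]
    simp_rw [h1]
    rw [Finset.sum_comm]
    have h2 : ∀ j, ∑ i, ∑ k, a i k * a k j * X i * X j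
        = ∑ k, ∑ i, a i k * a k j * X i * X j := by
      intro j; rw [Finset.sum_comm]
    simp_rw [h2]
    rw [Finset.sum_comm]
    refine Finset.sum_congr rfl fun k _ => ?_
    have h3 : ∑ j, ∑ i, a i k * a k j * X i * X j
        = ∑ j, (a k j * X j) * ∑ i, a k i * X i := by
      refine Finset.sum_congr rfl fun j _ => ?_
      rw [Finset.mul_sum]
      refine Finset.sum_congr rfl fun i _ => ?_
      rw [ha_symm i k]; ring
    rw [h3, ← Finset.sum_mul, hS, pow_two]
  have hT4 : ∑ i, ∑ j, ((if i = j then d i else 0) - a i j) * X i * X j = ℓ * s := by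
    have h1 : ∀ i, ∑ j, ((if i = j then d i else 0) - a i j) * X i * X j
        = X i * (ℓ * X i) := by
      intro i
      have h2 : ∀ j, ((if i = j then d i else 0) - a i j) * X i * X j
          = (if i = j then d i * X i * X j else 0) - X i * (a i j * X j) := by
        intro j
        by_cases h : i = j <;> simp [h] <;> ring
      simp_rw [h2]
      rw [Finset.sum_sub_distrib, Finset.sum_ite_eq, ← Finset.mul_sum]
      simp only [Finset.mem_univ, if_pos]
      have h3 : ∑ j, a i j * X j = S i := rfl
      rw [h3, ← heigS i]
      ring
    simp_rw [h1]
    rw [hs, Finset.mul_sum]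
    exact Finset.sum_congr rfl fun i _ => by ring
  have hT5 : ∑ i, ∑ j, ((if i = j then (n:ℝ) else 0) - 1) * X i * X j = (n:ℝ) * s := by
    have h1 : ∀ i, ∑ j, ((if i = j then (n:ℝ) else 0) - 1) * X i * X j
        = (n:ℝ) * X i ^ 2 := by
      intro i
      have h2 : ∀ j, ((if i = j then (n:ℝ) else 0) - 1) * X i * X j
          = (if i = j then (n:ℝ) * X i * X j else 0) - X i * X j := by
        intro j
        by_cases h : i = j <;> simp [h] <;> ring
      simp_rw [h2]
      rw [Finset.sum_sub_distrib, Finset.sum_ite_eq, ← Finset.mul_sum, hsum]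
      simp only [Finset.mem_univ, if_pos]
      ring
    simp_rw [h1]
    rw [hs, Finset.mul_sum]
  have hsum123 : (∑ i, d i^2 * X i^2) - (2 * ∑ i, d i * X i * S i) + (∑ k, S k ^ 2)
      = ℓ^2 * s := by
    rw [Finset.mul_sum, ← Finset.sum_sub_distrib, ← Finset.sum_add_distrib]
    have h1 : ∀ i, d i^2 * X i^2 - 2*(d i * X i * S i) + S i^2 = (ℓ * X i)^2 := by
      intro i
      rw [← heigS i]; ring
    simp_rw [h1]
    rw [hs, Finset.mul_sum]
    exact Finset.sum_congr rfl fun i _ => by ring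
  have hid : ∑ i, ∑ j, N i j * X i * X j = (ℓ^2 - B*ℓ + mu*n) * s := by
    rw [hsplit, hT1, hT2, hT3, hT4, hT5]
    linear_combination hsum123
  -- quadratic form of adjacency: sum over pairs of a i j (X i - X j)^2 = 2 ℓ s
  have hP : ∑ i, ∑ j, a i j * (X i - X j)^2 = 2 * (ℓ * s) := by
    have h1 : ∀ i j, a i j * (X i - X j)^2
        = a i j * X i^2 + a i j * X j^2 - 2 * (a i j * X i * X j) := fun i j => by ring
    have h2 : ∑ i, ∑ j, a i j * (X i - X j)^2
        = (∑ i, ∑ j, a i j * X i^2) + (∑ i, ∑ j, a i j * X j^2)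
          - 2 * (∑ i, ∑ j, a i j * X i * X j) := by
      rw [Finset.mul_sum, ← Finset.sum_add_distrib, ← Finset.sum_sub_distrib]
      refine Finset.sum_congr rfl fun i _ => ?_
      rw [Finset.mul_sum, ← Finset.sum_add_distrib, ← Finset.sum_sub_distrib]
      exact Finset.sum_congr rfl fun j _ => h1 i j
    have h3 : (∑ i, ∑ j, a i j * X j^2) = ∑ i, ∑ j, a i j * X i^2 := by
      rw [Finset.sum_comm]
      exact Finset.sum_congr rfl fun i _ => Finset.sum_congr rfl fun j _ => by
        rw [ha_symm j i]
    have h4 : (∑ i, ∑ j, a i j * X i^2) = ∑ i, d i * X i^2 := by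
      refine Finset.sum_congr rfl fun i _ => ?_
      rw [← Finset.sum_mul, hdeg i]
    have h5 : (∑ i, ∑ j, a i j * X i * X j) = ∑ i, X i * S i := by
      refine Finset.sum_congr rfl fun i _ => ?_
      rw [hS]
      rw [Finset.mul_sum]
      exact Finset.sum_congr rfl fun j _ => by ring
    rw [h2, h3, h4, h5]
    have h6 : ∑ i, d i * X i^2 - ∑ i, X i * S i = ℓ * s := by
      rw [← Finset.sum_sub_distrib, hs, Finset.mul_sum]
      refine Finset.sum_congr rfl fun i _ => ?_
      linear_combination (X i) * heigS i
    linarith [h6]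
  -- degree bounds
  have hdle : ∀ i, d i ≤ Δd := by
    intro i
    show ((G.degree i : ℝ)) ≤ ((G.maxDegree : ℝ))
    exact_mod_cast G.degree_le_maxDegree i
  have hdge : ∀ i, δd ≤ d i := by
    intro i
    show ((G.minDegree : ℝ)) ≤ ((G.degree i : ℝ))
    exact_mod_cast G.minDegree_le_degree i
  have hδΔ : δd ≤ Δd := le_trans (hdge ⟨0, by omega⟩) (hdle ⟨0, by omega⟩)
  -- pointwise bound
  have hpt : ∀ i j, -(N i j) * (X i - X j)^2 ≤ (2*Δd - 2*δd) * (a i j * (X i - X j)^2) := by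
    intro i j
    by_cases h : i = j
    · subst h; simp
    · have hcoef : 0 ≤ N i j + (2*Δd - 2*δd) * a i j := by
        have hNform : N i j = (∑ k, a i k * a k j) - (d i + d j) * a i j + B * a i j - mu := by
          simp only [hN, if_neg h]
          ring
        by_cases hadj : G.Adj i j
        · have haij : a i j = 1 := by simp [ha, hadj]
          have hc1 := hlam i j hadj
          rw [hc i j] at hNform
          rw [hNform, haij, hB]
          have := hdle i
          have := hdle j
          linarith
        · have haij : a i j = 0 := by simp [ha, hadj]
          have hc2 := hmu i j h hadj
          rw [hc i j] at hNform
          rw [hNform, haij]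
          linarith
      have h2 : -(N i j) ≤ (2*Δd - 2*δd) * a i j := by linarith
      calc -(N i j) * (X i - X j)^2 ≤ ((2*Δd - 2*δd) * a i j) * (X i - X j)^2 :=
            mul_le_mul_of_nonneg_right h2 (sq_nonneg _)
        _ = (2*Δd - 2*δd) * (a i j * (X i - X j)^2) := by ring
  -- sum the pointwise bound
  have hsum_pt : ∑ i, ∑ j, -(N i j) * (X i - X j)^2
      ≤ ∑ i, ∑ j, (2*Δd - 2*δd) * (a i j * (X i - X j)^2) := by
    refine Finset.sum_le_sum fun i _ => Finset.sum_le_sum fun j _ => hpt i j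
  have hq := quad_id X N hNsymm hNrow
  rw [hid] at hq
  have hL1 : ∑ i, ∑ j, -(N i j) * (X i - X j)^2
      = -(∑ i, ∑ j, N i j * (X i - X j)^2) := by
    rw [← Finset.sum_neg_distrib]
    refine Finset.sum_congr rfl fun i _ => ?_
    rw [← Finset.sum_neg_distrib]
    exact Finset.sum_congr rfl fun j _ => by ring
  have hL2 : ∑ i, ∑ j, (2*Δd - 2*δd) * (a i j * (X i - X j)^2)
      = (2*Δd - 2*δd) * (2 * (ℓ * s)) := by
    rw [← hP, Finset.mul_sum]
    refine Finset.sum_congr rfl fun i _ => ?_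
    rw [Finset.mul_sum]
  rw [hL1, hL2] at hsum_pt
  -- combine: (ℓ^2 - B ℓ + mu n) s = -(1/2) * ∑∑ N (Xi - Xj)^2
  -- and -∑∑ ≤ (2Δ-2δ)·2ℓs
  rw [hq]
  linarith [hsum_pt]

lemma ray_bound (n : ℕ) (hn : 2 ≤ n) (G : SimpleGraph (Fin n)) [DecidableRel G.Adj]
    (ℓ : ℝ)
    (hℓ : IsLeast {l : ℝ | ∃ X : Fin n → ℝ, X ≠ 0 ∧ (∑ i, X i) = 0 ∧
      (G.lapMatrix ℝ).mulVec X = l • X} ℓ)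
    (Y : Fin n → ℝ) (hY : Y ≠ 0) (hYs : ∑ i, Y i = 0) :
    ℓ * (∑ i, Y i ^ 2) ≤ ∑ i, ((G.lapMatrix ℝ).mulVec Y) i * Y i := by
  classical
  set L : Matrix (Fin n) (Fin n) ℝ := G.lapMatrix ℝ with hL
  let W : Submodule ℝ (EuclideanSpace ℝ (Fin n)) :=
  { carrier := {x : EuclideanSpace ℝ (Fin n) | ∑ i, x i = 0}
    add_mem' := by
      intro a b ha hb
      simp only [Set.mem_setOf_eq] at *
      have : ∀ i, (a + b) i = a i + b i := fun _ => rfl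
      rw [Finset.sum_congr rfl fun i _ => this i, Finset.sum_add_distrib, ha, hb, add_zero]
    zero_mem' := by
      simp only [Set.mem_setOf_eq]
      have : ∀ i, (0 : EuclideanSpace ℝ (Fin n)) i = (0:ℝ) := fun _ => rfl
      rw [Finset.sum_congr rfl fun i _ => this i, Finset.sum_const_zero]
    smul_mem' := by
      intro c a ha
      simp only [Set.mem_setOf_eq] at *
      have : ∀ i, (c • a) i = c * a i := fun _ => rfl
      rw [Finset.sum_congr rfl fun i _ => this i, ← Finset.mul_sum, ha, mul_zero] }
  have hmemW : ∀ x : EuclideanSpace ℝ (Fin n), x ∈ W ↔ (∑ i, x i) = 0 := fun x => Iff.rfl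
  have hsymmL : ∀ i j, L i j = L j i := fun i j => ((G.isSymm_lapMatrix (R := ℝ)).apply j i)
  have hcol : ∀ j, (∑ i, L i j) = 0 := by
    intro j
    have h1 := congrFun (G.lapMatrix_mulVec_const_eq_zero (R := ℝ)) j
    simp only [Matrix.mulVec, dotProduct, mul_one, Pi.zero_apply] at h1
    calc (∑ i, L i j) = ∑ i, L j i := Finset.sum_congr rfl fun i _ => hsymmL i j
      _ = 0 := h1
  let Lmap : EuclideanSpace ℝ (Fin n) →ₗ[ℝ] EuclideanSpace ℝ (Fin n) := Matrix.toEuclideanLin L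
  have hLmap : ∀ x : EuclideanSpace ℝ (Fin n), ∀ i, Lmap x i = (L.mulVec x) i := fun x i => rfl
  have hdotsym : ∀ x y : Fin n → ℝ,
      ∑ i, (L.mulVec x) i * y i = ∑ i, x i * (L.mulVec y) i := by
    intro x y
    simp_rw [Matrix.mulVec, dotProduct, Finset.sum_mul, Finset.mul_sum]
    rw [Finset.sum_comm]
    refine Finset.sum_congr rfl fun i _ => Finset.sum_congr rfl fun j _ => ?_
    rw [hsymmL j i]; ring
  have hmaps : ∀ x ∈ W, Lmap x ∈ W := by
    intro x hx
    rw [hmemW]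
    have h2 : ∑ i, (L.mulVec x) i = ∑ j, (∑ i, L i j) * x j := by
      simp_rw [Matrix.mulVec, dotProduct, Finset.sum_mul]
      rw [Finset.sum_comm]
    simp_rw [hLmap, h2, hcol, zero_mul, Finset.sum_const_zero]
  let T : W →ₗ[ℝ] W := Lmap.restrict hmaps
  have hinner : ∀ x y : EuclideanSpace ℝ (Fin n), (inner ℝ x y) = ∑ i, x i * y i := by
    intro x y; rw [PiLp.inner_apply]; simp [RCLike.inner_apply, mul_comm]
  have hTsymm : (T : Module.End ℝ W).IsSymmetric := by
    intro x y
    have hx : ((T x : W) : EuclideanSpace ℝ (Fin n)) = Lmap (x : EuclideanSpace ℝ (Fin n)) := rfl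
    have hy : ((T y : W) : EuclideanSpace ℝ (Fin n)) = Lmap (y : EuclideanSpace ℝ (Fin n)) := rfl
    rw [Submodule.coe_inner, Submodule.coe_inner, hx, hy, hinner, hinner]
    refine (Finset.sum_congr rfl fun i _ => by rw [hLmap]).trans
      ((hdotsym (x : EuclideanSpace ℝ (Fin n)) (y : EuclideanSpace ℝ (Fin n))).trans
        (Finset.sum_congr rfl fun i _ => by rw [← hLmap]))
  have hYW : (WithLp.toLp 2 Y : EuclideanSpace ℝ (Fin n)) ∈ W := hYs
  haveI : Nontrivial W := ⟨⟨⟨(WithLp.toLp 2 Y : EuclideanSpace ℝ (Fin n)), hYW⟩, 0, by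
    intro h
    exact hY (congrArg (fun z : W => (z : EuclideanSpace ℝ (Fin n)).ofLp) h)⟩⟩
  set m : ℝ := ⨅ x : { x : W // x ≠ 0 }, RCLike.re (inner ℝ (T x) (x : W) : ℝ) / ‖(x : W)‖ ^ 2 with hm
  have heig : Module.End.HasEigenvalue (T : Module.End ℝ W) m :=
    hTsymm.hasEigenvalue_iInf_of_finiteDimensional
  obtain ⟨w, hw⟩ := heig.exists_hasEigenvector
  have hweq : T w = m • w := Module.End.mem_eigenspace_iff.mp hw.1
  have hwne : w ≠ 0 := hw.2
  -- ℓ ≤ m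
  have hlm : ℓ ≤ m := by
    refine hℓ.2 ?_
    refine ⟨((w : W) : EuclideanSpace ℝ (Fin n)), ?_, (hmemW _).mp w.2, ?_⟩
    · intro h0
      exact hwne (Subtype.ext (by simpa using h0))
    · have := congrArg Subtype.val hweq
      have h3 : Lmap ((w : W) : EuclideanSpace ℝ (Fin n)) = m • ((w : W) : EuclideanSpace ℝ (Fin n)) := this
      funext i
      have h4 := congrFun (congrArg (fun (z : EuclideanSpace ℝ (Fin n)) => (z : Fin n → ℝ)) h3) i
      rw [← hLmap]
      exact h4
  -- bddBelow
  have hbdd : BddBelow (Set.range fun x : { x : W // x ≠ 0 } =>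
      RCLike.re (inner ℝ (T x) ((x : W) : W) : ℝ) / ‖((x : W) : W)‖ ^ 2) := by
    refine ⟨0, ?_⟩
    rintro r ⟨x, rfl⟩
    refine div_nonneg ?_ (by positivity)
    have hps := (SimpleGraph.posSemidef_lapMatrix ℝ G).dotProduct_mulVec_nonneg ((x : W) : EuclideanSpace ℝ (Fin n))
    have h5 : (inner ℝ (T (x : W)) ((x : W) : W) : ℝ)
        = ∑ i, (L.mulVec ((x : W) : EuclideanSpace ℝ (Fin n))) i * ((x : W) : EuclideanSpace ℝ (Fin n)) i := by
      rw [Submodule.coe_inner, hinner]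
      refine Finset.sum_congr rfl fun i _ => ?_
      rw [show ((T (x : W) : W) : EuclideanSpace ℝ (Fin n)) = Lmap ((x : W) : EuclideanSpace ℝ (Fin n)) from rfl, hLmap]
    rw [h5]
    simp only [dotProduct, Pi.star_apply, star_trivial] at hps
    simp only [RCLike.re_to_real]
    calc (0:ℝ) ≤ ∑ i, ((x : W) : EuclideanSpace ℝ (Fin n)) i * (L.mulVec ((x : W) : EuclideanSpace ℝ (Fin n))) i := hps
      _ = _ := Finset.sum_congr rfl fun i _ => mul_comm _ _
  -- m ≤ Rayleigh Y
  have hYne : (⟨(WithLp.toLp 2 Y : EuclideanSpace ℝ (Fin n)), hYW⟩ : W) ≠ 0 := by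
    intro h0
    exact hY (congrArg (fun z : W => (z : EuclideanSpace ℝ (Fin n)).ofLp) h0)
  have hmY0 := ciInf_le hbdd (⟨⟨(WithLp.toLp 2 Y : EuclideanSpace ℝ (Fin n)), hYW⟩, hYne⟩ : { x : W // x ≠ 0 })
  rw [← hm] at hmY0
  have hmY : m ≤ RCLike.re (inner ℝ (T ⟨(WithLp.toLp 2 Y : EuclideanSpace ℝ (Fin n)), hYW⟩) (⟨(WithLp.toLp 2 Y : EuclideanSpace ℝ (Fin n)), hYW⟩ : W) : ℝ)
      / ‖(⟨(WithLp.toLp 2 Y : EuclideanSpace ℝ (Fin n)), hYW⟩ : W)‖ ^ 2 := hmY0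
  have hRay : RCLike.re (inner ℝ (T ⟨(WithLp.toLp 2 Y : EuclideanSpace ℝ (Fin n)), hYW⟩) (⟨(WithLp.toLp 2 Y : EuclideanSpace ℝ (Fin n)), hYW⟩ : W) : ℝ)
      = ∑ i, (L.mulVec Y) i * Y i := by
    rw [Submodule.coe_inner, hinner]
    simp only [RCLike.re_to_real]
    refine Finset.sum_congr rfl fun i _ => ?_
    rw [show ((T ⟨(WithLp.toLp 2 Y : EuclideanSpace ℝ (Fin n)), hYW⟩ : W) : EuclideanSpace ℝ (Fin n))
      = Lmap ((⟨(WithLp.toLp 2 Y : EuclideanSpace ℝ (Fin n)), hYW⟩ : W) : EuclideanSpace ℝ (Fin n)) from rfl, hLmap]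
  have hnorm : ‖(⟨(WithLp.toLp 2 Y : EuclideanSpace ℝ (Fin n)), hYW⟩ : W)‖ ^ 2 = ∑ i, Y i ^ 2 := by
    have h6 : ‖(⟨(WithLp.toLp 2 Y : EuclideanSpace ℝ (Fin n)), hYW⟩ : W)‖
        = ‖((⟨(WithLp.toLp 2 Y : EuclideanSpace ℝ (Fin n)), hYW⟩ : W) : EuclideanSpace ℝ (Fin n))‖ := rfl
    rw [h6, ← real_inner_self_eq_norm_sq, hinner]
    refine Finset.sum_congr rfl fun i _ => ?_
    rw [pow_two]
  rw [hRay, hnorm] at hmY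
  -- s > 0
  have hs : 0 < ∑ i, Y i ^ 2 := by
    have : ∃ i, Y i ≠ 0 := by
      by_contra h0
      push_neg at h0
      exact hY (funext h0)
    obtain ⟨i, hi⟩ := this
    refine Finset.sum_pos' (fun j _ => sq_nonneg _) ⟨i, Finset.mem_univ i, by positivity⟩
  have := hlm.trans hmY
  rw [le_div_iff₀ hs] at this
  exact this



set_option maxHeartbeats 1000000 in
/-- **Corollary.** For a simple connected non-complete graph `G` on `n ≥ 2` vertices
with minimum degree `δ`, maximum degree `Δ` and reals `λ ≤ λ(G)`, `μ ≤ μ(G)`: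
`ℓ_{n−1}(G) ≥ (2δ − λ + μ − √((2δ − λ + μ)² − 4μn − 4δ² + 4Δ²))/2`. -/
theorem algebraic_connectivity_degree_bound (n : ℕ) (hn : 2 ≤ n)
    (G : SimpleGraph (Fin n)) [DecidableRel G.Adj]
    (hconn : G.Connected)
    (hnoncomplete : ∃ i j : Fin n, i ≠ j ∧ ¬ G.Adj i j)
    (lam mu : ℝ)
    (hlam : ∀ i j : Fin n, G.Adj i j →
      lam ≤ ((G.neighborFinset i ∩ G.neighborFinset j).card : ℝ))
    (hmu : ∀ i j : Fin n, i ≠ j → ¬ G.Adj i j →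
      mu ≤ ((G.neighborFinset i ∩ G.neighborFinset j).card : ℝ))
    (ℓ : ℝ)
    (hℓ : IsLeast {l : ℝ | ∃ X : Fin n → ℝ, X ≠ 0 ∧ (∑ i, X i) = 0 ∧
      (G.lapMatrix ℝ).mulVec X = l • X} ℓ) :
    (2 * (G.minDegree : ℝ) - lam + mu
      - Real.sqrt ((2 * (G.minDegree : ℝ) - lam + mu) ^ 2 - 4 * mu * (n : ℝ)
        - 4 * (G.minDegree : ℝ) ^ 2 + 4 * (G.maxDegree : ℝ) ^ 2)) / 2 ≤ ℓ := by
  classical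
  obtain ⟨X, hX0, hXsum, hXeig⟩ := hℓ.1
  have hspos : 0 < ∑ i, X i ^ 2 := by
    have h1 : ∃ i, X i ≠ 0 := by
      by_contra h0
      push_neg at h0
      exact hX0 (funext h0)
    obtain ⟨i, hi⟩ := h1
    exact Finset.sum_pos' (fun j _ => sq_nonneg _) ⟨i, Finset.mem_univ i, by positivity⟩
  have hA := partA hn G lam mu hlam hmu ℓ X hXsum hXeig
  have hq1 : ℓ^2 - (2*(G.minDegree : ℝ) - lam + mu)*ℓ + mu*n
      ≤ 2*((G.maxDegree : ℝ) - (G.minDegree : ℝ))*ℓ :=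
    le_of_mul_le_mul_right hA hspos
  -- find a minimum-degree vertex with a non-neighbor
  haveI : Nonempty (Fin n) := ⟨⟨0, by omega⟩⟩
  obtain ⟨v, hv⟩ := G.exists_minimal_degree_vertex
  obtain ⟨i0, j0, hij, hnadj⟩ := hnoncomplete
  have hsub0 : G.neighborFinset i0 ⊆ (Finset.univ.erase i0).erase j0 := by
    intro w hw
    rw [SimpleGraph.mem_neighborFinset] at hw
    rw [Finset.mem_erase, Finset.mem_erase]
    refine ⟨?_, hw.ne', Finset.mem_univ w⟩
    intro h
    exact hnadj (h ▸ hw)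
  have hcard0 : G.degree i0 ≤ n - 2 := by
    have h1 := Finset.card_le_card hsub0
    rw [Finset.card_erase_of_mem, Finset.card_erase_of_mem (Finset.mem_univ i0),
      Finset.card_univ, Fintype.card_fin] at h1
    · have hb : G.degree i0 = (G.neighborFinset i0).card := rfl
      omega
    · rw [Finset.mem_erase]
      exact ⟨fun h => hij h.symm, Finset.mem_univ j0⟩
  have hdegv : G.degree v ≤ n - 2 := by
    rw [← hv]
    exact le_trans (G.minDegree_le_degree i0) hcard0
  have hsub2 : G.neighborFinset v ⊆ Finset.univ.erase v := by
    intro w hw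
    rw [SimpleGraph.mem_neighborFinset] at hw
    rw [Finset.mem_erase]
    exact ⟨hw.ne', Finset.mem_univ w⟩
  have hnsub : ¬ (Finset.univ.erase v ⊆ G.neighborFinset v) := by
    intro h
    have h2 := Finset.card_le_card h
    rw [Finset.card_erase_of_mem (Finset.mem_univ v), Finset.card_univ, Fintype.card_fin] at h2
    have : G.degree v = (G.neighborFinset v).card := rfl
    omega
  obtain ⟨u, hu1, hu2⟩ := Finset.not_subset.mp hnsub
  have huv : u ≠ v := (Finset.mem_erase.mp hu1).1
  have hnadjvu : ¬ G.Adj v u := by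
    intro h
    exact hu2 (SimpleGraph.mem_neighborFinset G v u |>.mpr h)
  -- test vector
  set Y : Fin n → ℝ := fun i => (if v = i then (1:ℝ) else 0) + (if u = i then (-1:ℝ) else 0)
    with hY
  have hYv : Y v = 1 := by
    simp [hY, huv]
  have hYu : Y u = -1 := by
    simp [hY, (Ne.symm huv : v ≠ u)]
  have hYne : Y ≠ 0 := by
    intro h
    have := congrFun h v
    rw [hYv] at this
    simp at this
  have hYsum : ∑ i, Y i = 0 := by
    simp only [hY]
    rw [Finset.sum_add_distrib, Finset.sum_ite_eq, Finset.sum_ite_eq]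
    simp
  have hray := ray_bound n hn G ℓ hℓ Y hYne hYsum
  have hY2 : ∑ i, Y i ^ 2 = 2 := by
    have h1 : ∀ i, Y i ^ 2 = (if v = i then (1:ℝ) else 0) + (if u = i then (1:ℝ) else 0) := by
      intro i
      by_cases h2 : v = i
      · have h3 : ¬ (u = i) := fun h4 => huv (h4.trans h2.symm)
        simp only [hY, if_pos h2, if_neg h3]
        norm_num
      · by_cases h4 : u = i
        · simp only [hY, if_neg h2, if_pos h4]
          norm_num
        · simp only [hY, if_neg h2, if_neg h4]
          norm_num
    simp_rw [h1]
    rw [Finset.sum_add_distrib, Finset.sum_ite_eq, Finset.sum_ite_eq]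
    norm_num
  have hNY : ∀ w, w ∈ G.neighborFinset v → Y w = 0 := by
    intro w hw
    have h2 : w ≠ v := by
      rw [SimpleGraph.mem_neighborFinset] at hw
      exact hw.ne'
    have h3 : w ≠ u := fun h => hu2 (h ▸ hw)
    simp only [hY]
    rw [if_neg (fun h => h2 h.symm), if_neg (fun h => h3 h.symm)]
    ring
  have hNU : ∀ w, w ∈ G.neighborFinset u → Y w = 0 := by
    intro w hw
    rw [SimpleGraph.mem_neighborFinset] at hw
    have h2 : w ≠ u := hw.ne'
    have h3 : w ≠ v := by
      intro h
      subst h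
      exact hnadjvu hw.symm
    simp only [hY]
    rw [if_neg (fun h => h3 h.symm), if_neg (fun h => h2 h.symm)]
    ring
  have hfv : ((G.lapMatrix ℝ).mulVec Y) v = (G.degree v : ℝ) := by
    rw [G.lapMatrix_mulVec_apply]
    rw [Finset.sum_eq_zero hNY, hYv]
    ring
  have hfu : ((G.lapMatrix ℝ).mulVec Y) u = -(G.degree u : ℝ) := by
    rw [G.lapMatrix_mulVec_apply]
    rw [Finset.sum_eq_zero hNU, hYu]
    ring
  have hRHS : ∑ i, ((G.lapMatrix ℝ).mulVec Y) i * Y i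
      = (G.degree v : ℝ) + (G.degree u : ℝ) := by
    have h1 : ∀ i, ((G.lapMatrix ℝ).mulVec Y) i * Y i
        = (if v = i then ((G.lapMatrix ℝ).mulVec Y) i else 0)
          + (if u = i then -(((G.lapMatrix ℝ).mulVec Y) i) else 0) := by
      intro i
      simp only [hY]
      by_cases h2 : v = i
      · have h3 : ¬ (u = i) := fun h4 => huv (h4.trans h2.symm)
        rw [if_pos h2, if_neg h3, if_pos h2, if_neg h3]
        ring
      · by_cases h4 : u = i
        · rw [if_neg h2, if_pos h4, if_neg h2, if_pos h4]
          ring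
        · rw [if_neg h2, if_neg h4, if_neg h2, if_neg h4]
          ring
    simp_rw [h1]
    rw [Finset.sum_add_distrib, Finset.sum_ite_eq, Finset.sum_ite_eq]
    simp only [Finset.mem_univ, if_pos]
    rw [hfv, hfu]
    ring
  rw [hY2, hRHS] at hray
  -- 2ℓ ≤ δ + Δ
  have hdv : (G.degree v : ℝ) = (G.minDegree : ℝ) := by rw [hv]
  have hdu : (G.degree u : ℝ) ≤ (G.maxDegree : ℝ) := by exact_mod_cast G.degree_le_maxDegree u
  have h2l : 2 * ℓ ≤ (G.minDegree : ℝ) + (G.maxDegree : ℝ) := by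
    rw [hdv] at hray
    linarith
  have hδΔ : (G.minDegree : ℝ) ≤ (G.maxDegree : ℝ) := by
    exact_mod_cast le_trans (G.minDegree_le_degree v) (G.degree_le_maxDegree v)
  set B : ℝ := 2*(G.minDegree : ℝ) - lam + mu with hB
  set δd : ℝ := (G.minDegree : ℝ) with hδd
  set Δd : ℝ := (G.maxDegree : ℝ) with hΔd
  have hq2 : ℓ^2 - B*ℓ + mu*n + δd^2 - Δd^2 ≤ 0 := by
    nlinarith [hq1, h2l, hδΔ]
  have hD : (B - 2*ℓ)^2 ≤ B^2 - 4*mu*n - 4*δd^2 + 4*Δd^2 := by nlinarith [hq2]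
  have hsq := Real.sqrt_le_sqrt hD
  rw [Real.sqrt_sq_eq_abs] at hsq
  have habs : B - 2*ℓ ≤ |B - 2*ℓ| := le_abs_self _
  have hfin : B - 2*ℓ ≤ Real.sqrt (B^2 - 4*mu*n - 4*δd^2 + 4*Δd^2) := le_trans habs hsq
  rw [show B^2 - 4*mu*n - 4*δd^2 + 4*Δd^2
    = B^2 - 4*mu*(n:ℝ) - 4*δd^2 + 4*Δd^2 from rfl] at hfin
  linarith [hfin]
end

section
/- Let G be a simple connected graph on n ≥ 2 vertices with minimum degree δ and maximum degree Δ, having at least one pair of distinct nonadjacent vertices, and let λ and μ be real numbers such that every pair of adjacent vertices of G has at least λ common neighbors and every pair of distinct nonadjacent vertices of G has at least μ common neighbors. Then the Laplacian spread satisfies 𝒮_L(G) ≤ Δ − δ + (1/2)[ sqrt( (2Δ − λ + μ)² − 4μn ) + sqrt( (2δ − λ + μ)² − 4μn − 4δ² + 4Δ² ) ]. -/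
open Finset Matrix SimpleGraph

private lemma lap_colsum_zero {n : ℕ} (G : SimpleGraph (Fin n)) [DecidableRel G.Adj]
    (v : Fin n) : ∑ u, G.lapMatrix ℝ u v = 0 := by
  have hsymm : ∀ u : Fin n, G.lapMatrix ℝ u v = G.lapMatrix ℝ v u := by
    intro u
    have h := G.isSymm_lapMatrix (R := ℝ)
    exact congrFun (congrFun h v) u
  have h := congrFun (G.lapMatrix_mulVec_const_eq_zero (R := ℝ)) v
  simp only [mulVec, dotProduct, mul_one, Pi.zero_apply] at h
  calc ∑ u, G.lapMatrix ℝ u v = ∑ u, G.lapMatrix ℝ v u :=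
        Finset.sum_congr rfl fun u _ => hsymm u
    _ = 0 := h

private lemma eigen_sum_zero {n : ℕ} (G : SimpleGraph (Fin n)) [DecidableRel G.Adj]
    {t : ℝ} {X : Fin n → ℝ} (ht : t ≠ 0) (h : (G.lapMatrix ℝ) *ᵥ X = t • X) :
    ∑ i, X i = 0 := by
  have h1 : ∑ u, ((G.lapMatrix ℝ) *ᵥ X) u = t * ∑ i, X i := by
    rw [h]
    simp [Finset.mul_sum]
  have h2 : ∑ u, ((G.lapMatrix ℝ) *ᵥ X) u = 0 := by
    simp only [mulVec, dotProduct]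
    rw [Finset.sum_comm]
    refine Finset.sum_eq_zero fun v _ => ?_
    rw [← Finset.sum_mul, lap_colsum_zero, zero_mul]
  rw [h2] at h1
  exact (mul_eq_zero.mp h1.symm).resolve_left ht

/-- The key pointwise quadratic inequality: every Laplacian eigenvalue whose eigenvector
sums to zero satisfies `ℓ² - (2Δ - λ + μ)ℓ + μn ≤ 0`. -/
private lemma key_quad {n : ℕ} (hn : 0 < n) (G : SimpleGraph (Fin n)) [DecidableRel G.Adj]
    (lam mu : ℝ)
    (hlam : ∀ i j : Fin n, G.Adj i j →
      lam ≤ ((G.neighborFinset i ∩ G.neighborFinset j).card : ℝ))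
    (hmu : ∀ i j : Fin n, i ≠ j → ¬ G.Adj i j →
      mu ≤ ((G.neighborFinset i ∩ G.neighborFinset j).card : ℝ))
    {ℓ : ℝ} {X : Fin n → ℝ} (hX : X ≠ 0) (hsum : ∑ i, X i = 0)
    (heig : (G.lapMatrix ℝ) *ᵥ X = ℓ • X) (hl0 : 0 ≤ ℓ) :
    ℓ ^ 2 - (2 * (G.maxDegree : ℝ) - lam + mu) * ℓ + mu * n ≤ 0 := by
  haveI : Nonempty (Fin n) := ⟨⟨0, hn⟩⟩
  obtain ⟨u, -, hmax⟩ := Finset.exists_max_image Finset.univ X Finset.univ_nonempty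
  have hmax' : ∀ v : Fin n, X v ≤ X u := fun v => hmax v (Finset.mem_univ v)
  -- the maximal entry is positive
  have hXu : 0 < X u := by
    by_contra hle
    push_neg at hle
    have hall : ∀ i ∈ Finset.univ, X i ≤ (0:ℝ) := fun i _ => le_trans (hmax' i) hle
    have hzero : ∀ i ∈ Finset.univ, X i = (0:ℝ) :=
      (Finset.sum_eq_zero_iff_of_nonpos hall).mp hsum
    exact hX (funext fun i => hzero i (Finset.mem_univ i))
  -- eigen equation pointwise
  have heq : ∀ v : Fin n, (G.degree v : ℝ) * X v - ∑ w ∈ G.neighborFinset v, X w = ℓ * X v := by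
    intro v
    have h := congrFun heig v
    rw [G.lapMatrix_mulVec_apply v X] at h
    simpa using h
  -- double counting
  have dc : ∀ f : Fin n → ℝ,
      ∑ v ∈ G.neighborFinset u, ∑ w ∈ G.neighborFinset v, f w
        = ∑ w, ((G.neighborFinset u ∩ G.neighborFinset w).card : ℝ) * f w := by
    intro f
    have h1 : ∀ v : Fin n, ∑ w ∈ G.neighborFinset v, f w
        = ∑ w, if G.Adj v w then f w else 0 := by
      intro v
      rw [neighborFinset_eq_filter, Finset.sum_filter]
    calc ∑ v ∈ G.neighborFinset u, ∑ w ∈ G.neighborFinset v, f w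
        = ∑ v ∈ G.neighborFinset u, ∑ w, if G.Adj v w then f w else 0 :=
          Finset.sum_congr rfl fun v _ => h1 v
      _ = ∑ w, ∑ v ∈ G.neighborFinset u, if G.Adj v w then f w else 0 := Finset.sum_comm
      _ = ∑ w, ((G.neighborFinset u ∩ G.neighborFinset w).card : ℝ) * f w := by
          refine Finset.sum_congr rfl fun w _ => ?_
          rw [← Finset.sum_filter]
          have hfil : (G.neighborFinset u).filter (fun v => G.Adj v w)
              = G.neighborFinset u ∩ G.neighborFinset w := by
            ext v
            simp only [Finset.mem_filter, Finset.mem_inter, mem_neighborFinset]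
            rw [G.adj_comm v w]
          rw [hfil, Finset.sum_const, nsmul_eq_mul]
  -- the second-order identity
  have hid : ℓ ^ 2 * X u
      = (G.degree u : ℝ) * (ℓ * X u) - ∑ v ∈ G.neighborFinset u, (G.degree v : ℝ) * X v
        + ∑ w, ((G.neighborFinset u ∩ G.neighborFinset w).card : ℝ) * X w := by
    have h2 : (G.lapMatrix ℝ) *ᵥ ((G.lapMatrix ℝ) *ᵥ X) = (ℓ * ℓ) • X := by
      rw [heig, mulVec_smul, heig, smul_smul]
    have h3 := congrFun h2 u
    rw [G.lapMatrix_mulVec_apply u ((G.lapMatrix ℝ) *ᵥ X)] at h3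
    have h5 : ((G.lapMatrix ℝ) *ᵥ X) u = ℓ * X u := by rw [heig]; simp
    have h6 : ∑ v ∈ G.neighborFinset u, ((G.lapMatrix ℝ) *ᵥ X) v
        = ∑ v ∈ G.neighborFinset u, (G.degree v : ℝ) * X v
          - ∑ v ∈ G.neighborFinset u, ∑ w ∈ G.neighborFinset v, X w := by
      rw [← Finset.sum_sub_distrib]
      exact Finset.sum_congr rfl fun v _ => G.lapMatrix_mulVec_apply v X
    rw [h5, h6, dc X] at h3
    simp only [Pi.smul_apply, smul_eq_mul] at h3
    nlinarith [h3]
  -- abbreviation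
  set Nu := G.neighborFinset u with hNu
  have hDu : ∑ v ∈ Nu, (X u - X v) = ℓ * X u := by
    rw [Finset.sum_sub_distrib, Finset.sum_const, card_neighborFinset_eq_degree, nsmul_eq_mul]
    linarith [heq u]
  have hSv : ∑ v ∈ Nu, (X v - X u) = -(ℓ * X u) := by
    rw [Finset.sum_sub_distrib, Finset.sum_const, card_neighborFinset_eq_degree, nsmul_eq_mul]
    linarith [heq u]
  -- estimate on the degree sum
  have hA : ∑ v ∈ Nu, (G.degree v : ℝ) * (X u - X v) ≤ (G.maxDegree : ℝ) * (ℓ * X u) := by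
    calc ∑ v ∈ Nu, (G.degree v : ℝ) * (X u - X v)
        ≤ ∑ v ∈ Nu, (G.maxDegree : ℝ) * (X u - X v) := by
          refine Finset.sum_le_sum fun v _ => ?_
          exact mul_le_mul_of_nonneg_right (by exact_mod_cast G.degree_le_maxDegree v)
            (sub_nonneg.mpr (hmax' v))
      _ = (G.maxDegree : ℝ) * ∑ v ∈ Nu, (X u - X v) := by rw [Finset.mul_sum]
      _ = (G.maxDegree : ℝ) * (ℓ * X u) := by rw [hDu]
  have hA' : (∑ v ∈ Nu, (G.degree v : ℝ)) * X u - ∑ v ∈ Nu, (G.degree v : ℝ) * X v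
      ≤ (G.maxDegree : ℝ) * (ℓ * X u) := by
    have hexp : ∑ v ∈ Nu, (G.degree v : ℝ) * (X u - X v)
        = (∑ v ∈ Nu, (G.degree v : ℝ)) * X u - ∑ v ∈ Nu, (G.degree v : ℝ) * X v := by
      simp only [mul_sub]
      rw [Finset.sum_sub_distrib, Finset.sum_mul]
    rw [hexp] at hA
    exact hA
  -- estimate on the adjacent part of the common-neighbor sum
  have hB : ∑ v ∈ Nu, ((G.neighborFinset u ∩ G.neighborFinset v).card : ℝ) * (X v - X u)
      ≤ lam * (-(ℓ * X u)) := by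
    calc ∑ v ∈ Nu, ((G.neighborFinset u ∩ G.neighborFinset v).card : ℝ) * (X v - X u)
        ≤ ∑ v ∈ Nu, lam * (X v - X u) := by
          refine Finset.sum_le_sum fun v hv => ?_
          have hadj : G.Adj u v := (mem_neighborFinset G u v).mp hv
          exact mul_le_mul_of_nonpos_right (hlam u v hadj) (sub_nonpos.mpr (hmax' v))
      _ = lam * ∑ v ∈ Nu, (X v - X u) := by rw [Finset.mul_sum]
      _ = lam * (-(ℓ * X u)) := by rw [hSv]
  -- the non-adjacent part
  have hmemR : ∀ w ∈ Finset.univ \ insert u Nu, w ≠ u ∧ ¬ G.Adj u w := by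
    intro w hw
    rw [Finset.mem_sdiff, Finset.mem_insert, not_or] at hw
    exact ⟨hw.2.1, fun hadj => hw.2.2 ((mem_neighborFinset G u w).mpr hadj)⟩
  have hRsum : ∑ w ∈ Finset.univ \ insert u Nu, (X w - X u) = (ℓ - n) * X u := by
    have hsplit := Finset.sum_sdiff (f := fun w => X w - X u) (Finset.subset_univ (insert u Nu))
    have huniv : ∑ w, (X w - X u) = -((n : ℝ) * X u) := by
      rw [Finset.sum_sub_distrib, hsum, Finset.sum_const, Finset.card_univ, Fintype.card_fin,
        nsmul_eq_mul]
      ring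
    have hins : ∑ w ∈ insert u Nu, (X w - X u) = -(ℓ * X u) := by
      rw [Finset.sum_insert (G.notMem_neighborFinset_self u), hSv]
      ring
    rw [huniv, hins] at hsplit
    linarith [hsplit]
  have hC : ∑ w ∈ Finset.univ \ insert u Nu,
      ((G.neighborFinset u ∩ G.neighborFinset w).card : ℝ) * (X w - X u)
      ≤ mu * ((ℓ - n) * X u) := by
    calc ∑ w ∈ Finset.univ \ insert u Nu,
        ((G.neighborFinset u ∩ G.neighborFinset w).card : ℝ) * (X w - X u)
        ≤ ∑ w ∈ Finset.univ \ insert u Nu, mu * (X w - X u) := by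
          refine Finset.sum_le_sum fun w hw => ?_
          obtain ⟨hwne, hwadj⟩ := hmemR w hw
          exact mul_le_mul_of_nonpos_right (hmu u w (Ne.symm hwne) hwadj)
            (sub_nonpos.mpr (hmax' w))
      _ = mu * ∑ w ∈ Finset.univ \ insert u Nu, (X w - X u) := by rw [Finset.mul_sum]
      _ = mu * ((ℓ - n) * X u) := by rw [hRsum]
  -- splitting the full common-neighbor sum
  have hcsplit : ∑ w, ((G.neighborFinset u ∩ G.neighborFinset w).card : ℝ) * (X w - X u)
      = (∑ w ∈ Finset.univ \ insert u Nu,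
          ((G.neighborFinset u ∩ G.neighborFinset w).card : ℝ) * (X w - X u))
        + ∑ v ∈ Nu, ((G.neighborFinset u ∩ G.neighborFinset v).card : ℝ) * (X v - X u) := by
    have hsplit := Finset.sum_sdiff
      (f := fun w => ((G.neighborFinset u ∩ G.neighborFinset w).card : ℝ) * (X w - X u))
      (Finset.subset_univ (insert u Nu))
    rw [Finset.sum_insert (G.notMem_neighborFinset_self u)] at hsplit
    simp only [sub_self, mul_zero, zero_add] at hsplit
    linarith [hsplit]
  -- total weight of the common-neighbor counts
  have hc1 : ∑ w, ((G.neighborFinset u ∩ G.neighborFinset w).card : ℝ)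
      = ∑ v ∈ Nu, (G.degree v : ℝ) := by
    have hdc1 := dc (fun _ => (1:ℝ))
    simp only [mul_one] at hdc1
    rw [← hdc1]
    refine Finset.sum_congr rfl fun v _ => ?_
    rw [Finset.sum_const, card_neighborFinset_eq_degree, nsmul_eq_mul, mul_one]
  have hcexp : ∑ w, ((G.neighborFinset u ∩ G.neighborFinset w).card : ℝ) * (X w - X u)
      = ∑ w, ((G.neighborFinset u ∩ G.neighborFinset w).card : ℝ) * X w
        - (∑ v ∈ Nu, (G.degree v : ℝ)) * X u := by
    simp only [mul_sub]
    rw [Finset.sum_sub_distrib, ← Finset.sum_mul, hc1]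
  -- assemble
  have hdu : (G.degree u : ℝ) ≤ (G.maxDegree : ℝ) := by exact_mod_cast G.degree_le_maxDegree u
  have hlXu : 0 ≤ ℓ * X u := mul_nonneg hl0 (le_of_lt hXu)
  have t1 : (G.degree u : ℝ) * (ℓ * X u) ≤ (G.maxDegree : ℝ) * (ℓ * X u) :=
    mul_le_mul_of_nonneg_right hdu hlXu
  have hfin : ℓ ^ 2 * X u ≤ ((2 * (G.maxDegree : ℝ) - lam + mu) * ℓ - mu * n) * X u := by
    nlinarith [hid, hA', hB, hC, hcsplit, hcexp, t1]
  have hdiv := le_of_mul_le_mul_right hfin hXu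
  linarith [hdiv]

/-- Rayleigh-quotient bound: using the test vector `e_i - e_j` for a minimum degree vertex `i`
and a non-neighbor `j`, we get `2 ℓₙ₁ ≤ Δ + δ`. -/
private lemma rayleigh_bound {n : ℕ} (hn : 2 ≤ n) (G : SimpleGraph (Fin n)) [DecidableRel G.Adj]
    (hconn : G.Connected) (hnc : ∃ i j : Fin n, i ≠ j ∧ ¬ G.Adj i j) {ℓ : ℝ}
    (hl : IsLeast {l : ℝ | ∃ X : Fin n → ℝ, X ≠ 0 ∧ (∑ i, X i) = 0 ∧
      (G.lapMatrix ℝ).mulVec X = l • X} ℓ) :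
    2 * ℓ ≤ (G.maxDegree : ℝ) + (G.minDegree : ℝ) := by
  haveI : Nonempty (Fin n) := ⟨⟨0, by omega⟩⟩
  obtain ⟨i, hi⟩ := G.exists_minimal_degree_vertex
  -- a minimum-degree vertex has a non-neighbor
  have hexj : ∃ j : Fin n, j ≠ i ∧ ¬ G.Adj i j := by
    by_contra hcon
    push_neg at hcon
    obtain ⟨p, q, hpq, hnadj⟩ := hnc
    have hNi : G.neighborFinset i = Finset.univ.erase i := by
      ext w
      simp only [mem_neighborFinset, Finset.mem_erase, Finset.mem_univ, and_true]
      constructor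
      · intro h; exact (G.ne_of_adj h).symm
      · intro h; exact hcon w h
    have hdi : G.degree i = n - 1 := by
      rw [← card_neighborFinset_eq_degree, hNi, Finset.card_erase_of_mem (Finset.mem_univ i),
        Finset.card_univ, Fintype.card_fin]
    have hsub : G.neighborFinset p ⊆ (Finset.univ.erase p).erase q := by
      intro w hw
      have hadj : G.Adj p w := (mem_neighborFinset G p w).mp hw
      rw [Finset.mem_erase, Finset.mem_erase]
      refine ⟨fun hwq => hnadj (hwq ▸ hadj), (G.ne_of_adj hadj).symm, Finset.mem_univ w⟩
    have hcard : ((Finset.univ.erase p).erase q).card = n - 1 - 1 := by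
      rw [Finset.card_erase_of_mem (Finset.mem_erase.mpr ⟨hpq.symm, Finset.mem_univ q⟩),
        Finset.card_erase_of_mem (Finset.mem_univ p), Finset.card_univ, Fintype.card_fin]
    have hdp : G.degree p ≤ n - 1 - 1 := by
      rw [← card_neighborFinset_eq_degree, ← hcard]
      exact Finset.card_le_card hsub
    have hmin := G.minDegree_le_degree p
    rw [hi, hdi] at hmin
    omega
  obtain ⟨j, hji, hnadj⟩ := hexj
  have hnadj' : ¬ G.Adj j i := fun h => hnadj (G.adj_symm h)
  -- the test vector
  set y : Fin n → ℝ := fun w => (if w = i then (1:ℝ) else 0) - (if w = j then (1:ℝ) else 0)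
    with hy
  have hyi : y i = 1 := by simp [hy, (Ne.symm hji : i ≠ j)]
  have hyj : y j = -1 := by simp [hy, hji]
  have hysum : ∑ w, y w = 0 := by
    simp [hy, Finset.sum_sub_distrib]
  -- spectral decomposition
  have hher : (G.lapMatrix ℝ).IsHermitian := (G.posSemidef_lapMatrix ℝ).1
  set b := hher.eigenvectorBasis with hb
  set ev := hher.eigenvalues with hev
  set z : Fin n → ℝ := fun k => ∑ w, (b k) w * y w with hz
  -- orthogonality relations of the eigenvector matrix
  have hU : ∀ p q : Fin n, ∑ k, (b k) p * (b k) q = if p = q then (1:ℝ) else 0 := by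
    intro p q
    have hmem : (hher.eigenvectorUnitary : Matrix (Fin n) (Fin n) ℝ)
        * star (hher.eigenvectorUnitary : Matrix (Fin n) (Fin n) ℝ) = 1 :=
      Matrix.mem_unitaryGroup_iff.mp hher.eigenvectorUnitary.prop
    have h := congrFun (congrFun hmem p) q
    rw [Matrix.mul_apply] at h
    simp only [Matrix.star_apply, star_trivial] at h
    calc ∑ k, (b k) p * (b k) q
        = ∑ k, (hher.eigenvectorUnitary : Matrix (Fin n) (Fin n) ℝ) p k
          * (hher.eigenvectorUnitary : Matrix (Fin n) (Fin n) ℝ) q k := by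
          refine Finset.sum_congr rfl fun k _ => ?_
          rw [Matrix.IsHermitian.eigenvectorUnitary_apply, Matrix.IsHermitian.eigenvectorUnitary_apply]
      _ = if p = q then (1:ℝ) else 0 := by rw [h, Matrix.one_apply]
  -- expansion of y in the eigenbasis
  have hyexp : ∀ w, ∑ k, z k * (b k) w = y w := by
    intro w
    calc ∑ k, z k * (b k) w = ∑ k, ∑ v, (b k) v * y v * (b k) w := by
          refine Finset.sum_congr rfl fun k _ => ?_
          rw [hz, Finset.sum_mul]
      _ = ∑ v, ∑ k, (b k) v * y v * (b k) w := Finset.sum_comm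
      _ = ∑ v, (∑ k, (b k) v * (b k) w) * y v := by
          refine Finset.sum_congr rfl fun v _ => ?_
          rw [Finset.sum_mul]
          refine Finset.sum_congr rfl fun k _ => by ring
      _ = ∑ v, (if v = w then (1:ℝ) else 0) * y v := by
          refine Finset.sum_congr rfl fun v _ => by rw [hU]
      _ = y w := by simp
  -- norms and quadratic form in eigen-coordinates
  have hnorm2 : ∑ w, y w * y w = ∑ k, z k * z k := by
    calc ∑ w, y w * y w = ∑ w, (∑ k, z k * (b k) w) * y w := by
          refine Finset.sum_congr rfl fun w _ => by rw [hyexp w]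
      _ = ∑ w, ∑ k, z k * (b k) w * y w := by
          refine Finset.sum_congr rfl fun w _ => by rw [Finset.sum_mul]
      _ = ∑ k, ∑ w, z k * (b k) w * y w := Finset.sum_comm
      _ = ∑ k, z k * z k := by
          refine Finset.sum_congr rfl fun k _ => ?_
          rw [hz, Finset.mul_sum]
          refine Finset.sum_congr rfl fun w _ => by ring
  have heigk : ∀ k, (G.lapMatrix ℝ) *ᵥ ⇑(b k) = ev k • ⇑(b k) := fun k =>
    hher.mulVec_eigenvectorBasis k
  have hquad : ∑ w, y w * ((G.lapMatrix ℝ) *ᵥ y) w = ∑ k, ev k * (z k * z k) := by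
    calc ∑ w, y w * ((G.lapMatrix ℝ) *ᵥ y) w
        = ∑ w, (∑ k, z k * (b k) w) * ((G.lapMatrix ℝ) *ᵥ y) w := by
          refine Finset.sum_congr rfl fun w _ => by rw [hyexp w]
      _ = ∑ w, ∑ k, z k * ((b k) w * ((G.lapMatrix ℝ) *ᵥ y) w) := by
          refine Finset.sum_congr rfl fun w _ => by
            rw [Finset.sum_mul]
            exact Finset.sum_congr rfl fun k _ => by ring
      _ = ∑ k, z k * ∑ w, (b k) w * ((G.lapMatrix ℝ) *ᵥ y) w := by
          rw [Finset.sum_comm]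
          exact Finset.sum_congr rfl fun k _ => by rw [Finset.mul_sum]
      _ = ∑ k, ev k * (z k * z k) := by
          refine Finset.sum_congr rfl fun k _ => ?_
          have hdot : ∑ w, (b k) w * ((G.lapMatrix ℝ) *ᵥ y) w
              = (⇑(b k)) ⬝ᵥ ((G.lapMatrix ℝ) *ᵥ y) := rfl
          have hsymm : (⇑(b k)) ᵥ* (G.lapMatrix ℝ) = (G.lapMatrix ℝ) *ᵥ ⇑(b k) := by
            nth_rewrite 1 [← (G.isSymm_lapMatrix (R := ℝ))]
            exact Matrix.vecMul_transpose _ _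
          rw [hdot, Matrix.dotProduct_mulVec, hsymm, heigk k]
          have : (ev k • ⇑(b k)) ⬝ᵥ y = ev k * ((⇑(b k)) ⬝ᵥ y) := by
            rw [smul_dotProduct]; rfl
          rw [this]
          have hzk : (⇑(b k)) ⬝ᵥ y = z k := rfl
          rw [hzk]; ring
  -- termwise comparison
  have hterm : ∀ k, ℓ * (z k * z k) ≤ ev k * (z k * z k) := by
    intro k
    by_cases hzk : z k = 0
    · simp [hzk]
    · have hbk0 : (⇑(b k) : Fin n → ℝ) ≠ 0 := by
        intro h0
        apply hzk
        rw [hz]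
        have hall : ∀ x, b k x = 0 := fun x => congrFun h0 x
        simp [hall]
      have hevk : ev k ≠ 0 := by
        intro h0
        have hker : (G.lapMatrix ℝ) *ᵥ ⇑(b k) = 0 := by rw [heigk k, h0, zero_smul]
        have hconst := (G.lapMatrix_mulVec_eq_zero_iff_forall_reachable).mp
          hker
        have hceq : ∀ w : Fin n, (b k) w = (b k) i :=
          fun w => hconst w i (hconn.preconnected w i)
        apply hzk
        rw [hz]
        calc ∑ w, (b k) w * y w = ∑ w, (b k) i * y w := by
              refine Finset.sum_congr rfl fun w _ => by rw [hceq w]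
          _ = (b k) i * ∑ w, y w := by rw [Finset.mul_sum]
          _ = 0 := by rw [hysum, mul_zero]
      have hmem : ev k ∈ {l : ℝ | ∃ X : Fin n → ℝ, X ≠ 0 ∧ (∑ i, X i) = 0 ∧
          (G.lapMatrix ℝ).mulVec X = l • X} :=
        ⟨⇑(b k), hbk0, eigen_sum_zero G hevk (heigk k), heigk k⟩
      exact mul_le_mul_of_nonneg_right (hl.2 hmem) (mul_self_nonneg (z k))
  -- evaluate the quadratic form on the test vector
  have hLy : ∀ w, ((G.lapMatrix ℝ) *ᵥ y) w
      = (G.degree w : ℝ) * y w - ∑ v ∈ G.neighborFinset w, y v :=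
    fun w => G.lapMatrix_mulVec_apply w y
  have hNisum : ∑ v ∈ G.neighborFinset i, y v = 0 := by
    rw [hy]
    rw [Finset.sum_sub_distrib]
    rw [Finset.sum_ite_eq' (G.neighborFinset i) i (fun _ => (1:ℝ)),
      Finset.sum_ite_eq' (G.neighborFinset i) j (fun _ => (1:ℝ))]
    have h1 : i ∉ G.neighborFinset i := G.notMem_neighborFinset_self i
    have h2 : j ∉ G.neighborFinset i := fun h => hnadj ((mem_neighborFinset G i j).mp h)
    simp [h1, h2]
  have hNjsum : ∑ v ∈ G.neighborFinset j, y v = 0 := by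
    rw [hy]
    rw [Finset.sum_sub_distrib]
    rw [Finset.sum_ite_eq' (G.neighborFinset j) i (fun _ => (1:ℝ)),
      Finset.sum_ite_eq' (G.neighborFinset j) j (fun _ => (1:ℝ))]
    have h1 : j ∉ G.neighborFinset j := G.notMem_neighborFinset_self j
    have h2 : i ∉ G.neighborFinset j := fun h => hnadj' ((mem_neighborFinset G j i).mp h)
    simp [h1, h2]
  have hyLy : ∑ w, y w * ((G.lapMatrix ℝ) *ᵥ y) w = (G.degree i : ℝ) + (G.degree j : ℝ) := by
    have hexp : ∀ w, y w * ((G.lapMatrix ℝ) *ᵥ y) w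
        = (if w = i then ((G.lapMatrix ℝ) *ᵥ y) w else 0)
          - (if w = j then ((G.lapMatrix ℝ) *ᵥ y) w else 0) := by
      intro w
      rw [hy]
      by_cases h1 : w = i
      · subst h1
        simp [(Ne.symm hji : w ≠ j)]
      · by_cases h2 : w = j
        · subst h2
          simp [h1]
        · simp [h1, h2]
    calc ∑ w, y w * ((G.lapMatrix ℝ) *ᵥ y) w
        = ∑ w, ((if w = i then ((G.lapMatrix ℝ) *ᵥ y) w else 0)
          - (if w = j then ((G.lapMatrix ℝ) *ᵥ y) w else 0)) :=
          Finset.sum_congr rfl fun w _ => hexp w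
      _ = ((G.lapMatrix ℝ) *ᵥ y) i - ((G.lapMatrix ℝ) *ᵥ y) j := by
          rw [Finset.sum_sub_distrib]
          rw [Finset.sum_ite_eq' Finset.univ i ((G.lapMatrix ℝ) *ᵥ y),
            Finset.sum_ite_eq' Finset.univ j ((G.lapMatrix ℝ) *ᵥ y)]
          simp
      _ = (G.degree i : ℝ) + (G.degree j : ℝ) := by
          rw [hLy i, hLy j, hNisum, hNjsum, hyi, hyj]
          ring
  have hyy : ∑ w, y w * y w = 2 := by
    have hexp : ∀ w, y w * y w
        = (if w = i then (1:ℝ) else 0) + (if w = j then (1:ℝ) else 0) := by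
      intro w
      rw [hy]
      by_cases h1 : w = i
      · subst h1
        simp [(Ne.symm hji : w ≠ j)]
      · by_cases h2 : w = j
        · subst h2
          simp [h1]
        · simp [h1, h2]
    rw [Finset.sum_congr rfl fun w _ => hexp w]
    rw [Finset.sum_add_distrib]
    rw [Finset.sum_ite_eq' Finset.univ i (fun _ => (1:ℝ)),
      Finset.sum_ite_eq' Finset.univ j (fun _ => (1:ℝ))]
    simp
    norm_num
  -- combine
  have hmain : ℓ * 2 ≤ (G.degree i : ℝ) + (G.degree j : ℝ) := by
    calc ℓ * 2 = ℓ * ∑ w, y w * y w := by rw [hyy]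
      _ = ℓ * ∑ k, z k * z k := by rw [hnorm2]
      _ = ∑ k, ℓ * (z k * z k) := by rw [Finset.mul_sum]
      _ ≤ ∑ k, ev k * (z k * z k) := Finset.sum_le_sum fun k _ => hterm k
      _ = ∑ w, y w * ((G.lapMatrix ℝ) *ᵥ y) w := hquad.symm
      _ = (G.degree i : ℝ) + (G.degree j : ℝ) := hyLy
  have hdi : (G.degree i : ℝ) = (G.minDegree : ℝ) := by
    norm_cast
    exact hi.symm
  have hdj : (G.degree j : ℝ) ≤ (G.maxDegree : ℝ) := by exact_mod_cast G.degree_le_maxDegree j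
  linarith [hmain]


/-- **Corollary.** For a simple connected non-complete graph `G` on `n ≥ 2` vertices
with minimum degree `δ`, maximum degree `Δ` and reals `λ ≤ λ(G)`, `μ ≤ μ(G)`, the
Laplacian spread satisfies
`𝒮_L(G) ≤ Δ − δ + (1/2)[√((2Δ−λ+μ)² − 4μn) + √((2δ−λ+μ)² − 4μn − 4δ² + 4Δ²)]`. -/
theorem laplacian_spread_degree_bound (n : ℕ) (hn : 2 ≤ n)
    (G : SimpleGraph (Fin n)) [DecidableRel G.Adj]
    (hconn : G.Connected)
    (hnoncomplete : ∃ i j : Fin n, i ≠ j ∧ ¬ G.Adj i j)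
    (lam mu : ℝ)
    (hlam : ∀ i j : Fin n, G.Adj i j →
      lam ≤ ((G.neighborFinset i ∩ G.neighborFinset j).card : ℝ))
    (hmu : ∀ i j : Fin n, i ≠ j → ¬ G.Adj i j →
      mu ≤ ((G.neighborFinset i ∩ G.neighborFinset j).card : ℝ))
    (ℓ₁ ℓₙ₁ : ℝ)
    (hℓ₁ : IsGreatest {l : ℝ | ∃ X : Fin n → ℝ, X ≠ 0 ∧
      (G.lapMatrix ℝ).mulVec X = l • X} ℓ₁)
    (hℓₙ₁ : IsLeast {l : ℝ | ∃ X : Fin n → ℝ, X ≠ 0 ∧ (∑ i, X i) = 0 ∧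
      (G.lapMatrix ℝ).mulVec X = l • X} ℓₙ₁) :
    ℓ₁ - ℓₙ₁ ≤ (G.maxDegree : ℝ) - (G.minDegree : ℝ)
      + (1 / 2) * (Real.sqrt ((2 * (G.maxDegree : ℝ) - lam + mu) ^ 2 - 4 * mu * (n : ℝ))
        + Real.sqrt ((2 * (G.minDegree : ℝ) - lam + mu) ^ 2 - 4 * mu * (n : ℝ)
          - 4 * (G.minDegree : ℝ) ^ 2 + 4 * (G.maxDegree : ℝ) ^ 2)) := by
  haveI : Nonempty (Fin n) := ⟨⟨0, by omega⟩⟩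
  have hn0 : 0 < n := by omega
  have hdd : (G.minDegree : ℝ) ≤ (G.maxDegree : ℝ) := by
    have v : Fin n := Classical.arbitrary (Fin n)
    have h1 := G.minDegree_le_degree v
    have h2 := G.degree_le_maxDegree v
    exact_mod_cast le_trans h1 h2
  obtain ⟨Xn, hXn0, hXnsum, hXneig⟩ := hℓₙ₁.1
  -- ℓₙ₁ is nonnegative
  have hpsd := (G.posSemidef_lapMatrix ℝ).dotProduct_mulVec_nonneg Xn
  have hstar : star Xn = Xn := by
    funext i
    simp
  rw [hstar, hXneig] at hpsd
  have hdot : Xn ⬝ᵥ (ℓₙ₁ • Xn) = ℓₙ₁ * (Xn ⬝ᵥ Xn) := by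
    rw [dotProduct_smul]
    rfl
  rw [hdot] at hpsd
  have hxx : 0 < Xn ⬝ᵥ Xn := by
    have hnn : 0 ≤ Xn ⬝ᵥ Xn := Finset.sum_nonneg fun i _ => mul_self_nonneg (Xn i)
    rcases lt_or_eq_of_le hnn with h | h
    · exact h
    · exact absurd (dotProduct_self_eq_zero.mp h.symm) hXn0
  have hln0 : 0 ≤ ℓₙ₁ := by
    have h0 : (0:ℝ) * (Xn ⬝ᵥ Xn) ≤ ℓₙ₁ * (Xn ⬝ᵥ Xn) := by rw [zero_mul]; exact hpsd
    exact le_of_mul_le_mul_right h0 hxx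
  have hrayl := rayleigh_bound hn G hconn hnoncomplete hℓₙ₁
  have qBn := key_quad hn0 G lam mu hlam hmu hXn0 hXnsum hXneig hln0
  by_cases hcase : ℓ₁ ≤ ℓₙ₁
  · have h1 := Real.sqrt_nonneg ((2 * (G.maxDegree : ℝ) - lam + mu) ^ 2 - 4 * mu * (n:ℝ))
    have h2 := Real.sqrt_nonneg ((2 * (G.minDegree : ℝ) - lam + mu) ^ 2 - 4 * mu * (n:ℝ)
      - 4 * (G.minDegree : ℝ) ^ 2 + 4 * (G.maxDegree : ℝ) ^ 2)
    linarith
  · push_neg at hcase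
    have h1pos : 0 < ℓ₁ := lt_of_le_of_lt hln0 hcase
    obtain ⟨X1, hX10, hX1eig⟩ := hℓ₁.1
    have hX1sum := eigen_sum_zero G (ne_of_gt h1pos) hX1eig
    have qB1 := key_quad hn0 G lam mu hlam hmu hX10 hX1sum hX1eig (le_of_lt h1pos)
    have hs1 : 2 * ℓ₁ - (2 * (G.maxDegree : ℝ) - lam + mu)
        ≤ Real.sqrt ((2 * (G.maxDegree : ℝ) - lam + mu) ^ 2 - 4 * mu * (n:ℝ)) := by
      have hsq : (2 * ℓ₁ - (2 * (G.maxDegree : ℝ) - lam + mu)) ^ 2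
          ≤ (2 * (G.maxDegree : ℝ) - lam + mu) ^ 2 - 4 * mu * (n:ℝ) := by
        nlinarith [qB1]
      calc 2 * ℓ₁ - (2 * (G.maxDegree : ℝ) - lam + mu)
          ≤ |2 * ℓ₁ - (2 * (G.maxDegree : ℝ) - lam + mu)| := le_abs_self _
        _ = Real.sqrt ((2 * ℓ₁ - (2 * (G.maxDegree : ℝ) - lam + mu)) ^ 2) :=
            (Real.sqrt_sq_eq_abs _).symm
        _ ≤ _ := Real.sqrt_le_sqrt hsq
    have hqa : ℓₙ₁ ^ 2 - (2 * (G.minDegree : ℝ) - lam + mu) * ℓₙ₁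
        + (mu * (n:ℝ) + (G.minDegree : ℝ) ^ 2 - (G.maxDegree : ℝ) ^ 2) ≤ 0 := by
      nlinarith [qBn, mul_nonneg (sub_nonneg.mpr hdd)
        (by linarith : (0:ℝ) ≤ (G.maxDegree : ℝ) + (G.minDegree : ℝ) - 2 * ℓₙ₁)]
    have hs2 : (2 * (G.minDegree : ℝ) - lam + mu) - 2 * ℓₙ₁
        ≤ Real.sqrt ((2 * (G.minDegree : ℝ) - lam + mu) ^ 2 - 4 * mu * (n:ℝ)
          - 4 * (G.minDegree : ℝ) ^ 2 + 4 * (G.maxDegree : ℝ) ^ 2) := by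
      have hsq : ((2 * (G.minDegree : ℝ) - lam + mu) - 2 * ℓₙ₁) ^ 2
          ≤ (2 * (G.minDegree : ℝ) - lam + mu) ^ 2 - 4 * mu * (n:ℝ)
            - 4 * (G.minDegree : ℝ) ^ 2 + 4 * (G.maxDegree : ℝ) ^ 2 := by
        nlinarith [hqa]
      calc (2 * (G.minDegree : ℝ) - lam + mu) - 2 * ℓₙ₁
          ≤ |(2 * (G.minDegree : ℝ) - lam + mu) - 2 * ℓₙ₁| := le_abs_self _
        _ = Real.sqrt (((2 * (G.minDegree : ℝ) - lam + mu) - 2 * ℓₙ₁) ^ 2) :=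
            (Real.sqrt_sq_eq_abs _).symm
        _ ≤ _ := Real.sqrt_le_sqrt hsq
    linarith [hs1, hs2]
end

section
/- Let G be a simple connected k-regular graph on n ≥ 2 vertices having at least one pair of distinct nonadjacent vertices, and let λ and μ be real numbers such that every pair of adjacent vertices of G has at least λ common neighbors and every pair of distinct nonadjacent vertices of G has at least μ common neighbors. Then the Laplacian spread satisfies 𝒮_L(G) ≤ sqrt( (2k − λ + μ)² − 4μn ). -/
open Finset

lemma aux_quad {n : ℕ} (C : Fin n → Fin n → ℝ) (hsym : ∀ i j, C i j = C j i)
    (hpos : ∀ i j, 0 ≤ C i j) (r : ℝ) (hrow : ∀ i, ∑ j, C i j = r) (X : Fin n → ℝ) :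
    ∑ i, ∑ j, C i j * (X i * X j) ≤ r * ∑ i, X i ^ 2 := by
  have h1 : ∑ i, ∑ j, C i j * (X i * X j) ≤ ∑ i, ∑ j, C i j * ((X i ^ 2 + X j ^ 2)/2) := by
    apply Finset.sum_le_sum; intro i _; apply Finset.sum_le_sum; intro j _
    apply mul_le_mul_of_nonneg_left _ (hpos i j)
    nlinarith [sq_nonneg (X i - X j)]
  refine h1.trans_eq ?_
  have e1 : ∑ i, ∑ j, C i j * (X i ^ 2) = r * ∑ i, X i ^ 2 := by
    rw [Finset.mul_sum]
    refine Finset.sum_congr rfl fun i _ => ?_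
    rw [← Finset.sum_mul, hrow i]
  have e2 : ∑ i, ∑ j, C i j * (X j ^ 2) = r * ∑ i, X i ^ 2 := by
    rw [Finset.sum_comm, Finset.mul_sum]
    refine Finset.sum_congr rfl fun j _ => ?_
    simp_rw [fun i => hsym i j]
    rw [← Finset.sum_mul, hrow j]
  have e3 : ∑ i, ∑ j, C i j * ((X i ^ 2 + X j ^ 2)/2)
      = (∑ i, ∑ j, C i j * (X i ^ 2))/2 + (∑ i, ∑ j, C i j * (X j ^ 2))/2 := by
    simp_rw [Finset.sum_div, ← Finset.sum_add_distrib]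
    refine Finset.sum_congr rfl fun i _ => Finset.sum_congr rfl fun j _ => by ring
  rw [e3, e1, e2]; ring

lemma eig_quad (n k : ℕ) (G : SimpleGraph (Fin n)) [DecidableRel G.Adj]
    (hreg : G.IsRegularOfDegree k) (lam mu : ℝ)
    (hlam : ∀ i j : Fin n, G.Adj i j →
      lam ≤ ((G.neighborFinset i ∩ G.neighborFinset j).card : ℝ))
    (hmu : ∀ i j : Fin n, i ≠ j → ¬ G.Adj i j →
      mu ≤ ((G.neighborFinset i ∩ G.neighborFinset j).card : ℝ))
    (ℓ : ℝ) (X : Fin n → ℝ) (hX0 : X ≠ 0) (hsum : ∑ i, X i = 0)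
    (heig : (G.lapMatrix ℝ).mulVec X = ℓ • X) :
    ℓ ^ 2 - (2 * k - lam + mu) * ℓ + mu * n ≤ 0 := by
  set θ : ℝ := k - ℓ with hθ
  set S : ℝ := ∑ i, X i ^ 2 with hSdef
  have hS : 0 < S := by
    rcases Function.ne_iff.mp hX0 with ⟨i, hi⟩
    have hlt : (0:ℝ) < X i ^ 2 :=
      lt_of_le_of_ne (sq_nonneg _) (Ne.symm (pow_ne_zero 2 hi))
    exact hlt.trans_le (Finset.single_le_sum (f := fun i => X i ^ 2)
      (fun j _ => sq_nonneg _) (Finset.mem_univ i))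
  have hA : ∀ v, ∑ u ∈ G.neighborFinset v, X u = θ * X v := by
    intro v
    have h1 := congrFun heig v
    rw [SimpleGraph.lapMatrix_mulVec_apply, hreg v] at h1
    simp only [Pi.smul_apply, smul_eq_mul] at h1
    rw [hθ]; linarith
  set a : Fin n → Fin n → ℝ := fun i j => if G.Adj i j then 1 else 0 with ha
  have ha_symm : ∀ i j, a i j = a j i := by
    intro i j; simp only [ha]
    exact if_congr (G.adj_comm i j) rfl rfl
  have ha_sum : ∀ i, ∑ j, a i j = k := by
    intro i
    simp only [ha]
    simp_rw [← SimpleGraph.mem_neighborFinset]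
    rw [Finset.sum_ite_mem, Finset.univ_inter, Finset.sum_const, nsmul_eq_mul, mul_one]
    norm_cast
    exact hreg i
  have haX : ∀ i, ∑ j, a i j * X j = θ * X i := by
    intro i
    rw [← hA i]
    simp only [ha]
    simp_rw [← SimpleGraph.mem_neighborFinset, ite_mul, one_mul, zero_mul]
    rw [Finset.sum_ite_mem, Finset.univ_inter]
  have hcommon : ∀ i j, ((G.neighborFinset i ∩ G.neighborFinset j).card : ℝ)
      = ∑ v, a i v * a j v := by
    intro i j
    have e : ∀ v, a i v * a j v
        = if v ∈ G.neighborFinset i ∩ G.neighborFinset j then (1:ℝ) else 0 := by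
      intro v
      by_cases h1 : G.Adj i v <;> by_cases h2 : G.Adj j v <;>
        simp [ha, h1, h2, Finset.mem_inter, SimpleGraph.mem_neighborFinset]
    simp_rw [e]
    rw [Finset.sum_ite_mem, Finset.univ_inter, Finset.sum_const, nsmul_eq_mul, mul_one]
  set C : Fin n → Fin n → ℝ := fun i j =>
    ((G.neighborFinset i ∩ G.neighborFinset j).card : ℝ) - (lam - mu) * a i j - mu
      + (if i = j then (mu - k) else 0) with hC
  set r : ℝ := (k:ℝ)^2 - (lam - mu)*k - mu*n + mu - k with hr
  have hCsymm : ∀ i j, C i j = C j i := by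
    intro i j
    simp only [hC, Finset.inter_comm, ha_symm i j, eq_comm]
  have hCpos : ∀ i j, 0 ≤ C i j := by
    intro i j
    rcases eq_or_ne i j with rfl | hij
    · simp only [hC, if_pos rfl, Finset.inter_self,
        SimpleGraph.card_neighborFinset_eq_degree, hreg i, ha, if_neg (G.loopless.irrefl i)]
      norm_num
    · by_cases hadj : G.Adj i j
      · have := hlam i j hadj
        simp only [hC, ha, if_pos hadj, if_neg hij]
        linarith
      · have := hmu i j hij hadj
        simp only [hC, ha, if_neg hadj, if_neg hij]
        linarith
  have hCrow : ∀ i, ∑ j, C i j = r := by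
    intro i
    have c1 : ∑ j, ((G.neighborFinset i ∩ G.neighborFinset j).card : ℝ) = (k:ℝ)^2 := by
      calc ∑ j, ((G.neighborFinset i ∩ G.neighborFinset j).card : ℝ)
          = ∑ j, ∑ v, a i v * a j v := by simp_rw [hcommon]
        _ = ∑ v, ∑ j, a i v * a j v := Finset.sum_comm
        _ = ∑ v, a i v * (k:ℝ) := by
            refine Finset.sum_congr rfl fun v _ => ?_
            rw [← Finset.mul_sum]
            congr 1
            simp_rw [fun j => ha_symm j v]
            exact ha_sum v
        _ = (k:ℝ)^2 := by rw [← Finset.sum_mul, ha_sum i]; ring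
    simp only [hC]
    rw [Finset.sum_add_distrib, Finset.sum_sub_distrib, Finset.sum_sub_distrib, c1,
      ← Finset.mul_sum, ha_sum i, Finset.sum_const, Finset.sum_ite_eq]
    simp only [Finset.card_univ, Fintype.card_fin, nsmul_eq_mul, Finset.mem_univ, if_pos]
    rw [hr]; ring
  have key := aux_quad C hCsymm hCpos r hCrow X
  -- compute the quadratic form
  have hY2 : ∀ v, ∑ i, a i v * X i = θ * X v := by
    intro v
    simp_rw [fun i => ha_symm i v]
    exact haX v
  have hT1 : ∑ i, ∑ j, ((G.neighborFinset i ∩ G.neighborFinset j).card : ℝ) * (X i * X j)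
      = θ^2 * S := by
    have e : ∀ i j, ((G.neighborFinset i ∩ G.neighborFinset j).card : ℝ) * (X i * X j)
        = ∑ v, (a i v * X i) * (a j v * X j) := by
      intro i j
      rw [hcommon, Finset.sum_mul]
      exact Finset.sum_congr rfl fun v _ => by ring
    calc ∑ i, ∑ j, ((G.neighborFinset i ∩ G.neighborFinset j).card : ℝ) * (X i * X j)
        = ∑ i, ∑ j, ∑ v, (a i v * X i) * (a j v * X j) := by simp_rw [e]
      _ = ∑ i, ∑ v, ∑ j, (a i v * X i) * (a j v * X j) :=
          Finset.sum_congr rfl fun i _ => Finset.sum_comm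
      _ = ∑ v, ∑ i, ∑ j, (a i v * X i) * (a j v * X j) := Finset.sum_comm
      _ = ∑ v, (∑ i, a i v * X i) * (∑ j, a j v * X j) :=
          Finset.sum_congr rfl fun v _ => (Finset.sum_mul_sum _ _ _ _).symm
      _ = ∑ v, (θ * X v) * (θ * X v) := by simp_rw [hY2]
      _ = θ^2 * S := by rw [hSdef, Finset.mul_sum]; exact Finset.sum_congr rfl fun v _ => by ring
  have hT2 : ∑ i, ∑ j, a i j * (X i * X j) = θ * S := by
    calc ∑ i, ∑ j, a i j * (X i * X j) = ∑ i, X i * (∑ j, a i j * X j) := by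
          refine Finset.sum_congr rfl fun i _ => ?_
          rw [Finset.mul_sum]
          exact Finset.sum_congr rfl fun j _ => by ring
      _ = ∑ i, X i * (θ * X i) := by simp_rw [haX]
      _ = θ * S := by rw [hSdef, Finset.mul_sum]; exact Finset.sum_congr rfl fun i _ => by ring
  have hT3 : ∑ i, ∑ j, (X i * X j) = 0 := by
    simp_rw [← Finset.mul_sum, ← Finset.sum_mul, hsum, zero_mul]
  have hT4 : ∑ i, ∑ j, (if i = j then (mu - (k:ℝ)) else 0) * (X i * X j) = (mu - k) * S := by
    have e : ∀ i, ∑ j, (if i = j then (mu - (k:ℝ)) else 0) * (X i * X j)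
        = (mu - k) * X i ^ 2 := by
      intro i
      simp_rw [ite_mul, zero_mul]
      rw [Finset.sum_ite_eq]
      simp [sq]
    simp_rw [e]
    rw [hSdef, Finset.mul_sum]
  have hQ : ∑ i, ∑ j, C i j * (X i * X j)
      = θ^2 * S - (lam - mu) * (θ * S) - mu * 0 + (mu - k) * S := by
    calc ∑ i, ∑ j, C i j * (X i * X j)
        = (∑ i, ∑ j, ((G.neighborFinset i ∩ G.neighborFinset j).card : ℝ) * (X i * X j))
          - (lam - mu) * (∑ i, ∑ j, a i j * (X i * X j))
          - mu * (∑ i, ∑ j, (X i * X j))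
          + (∑ i, ∑ j, (if i = j then (mu - (k:ℝ)) else 0) * (X i * X j)) := by
          rw [Finset.mul_sum, Finset.mul_sum, ← Finset.sum_sub_distrib,
            ← Finset.sum_sub_distrib, ← Finset.sum_add_distrib]
          refine Finset.sum_congr rfl fun i _ => ?_
          rw [Finset.mul_sum, Finset.mul_sum, ← Finset.sum_sub_distrib,
            ← Finset.sum_sub_distrib, ← Finset.sum_add_distrib]
          exact Finset.sum_congr rfl fun j _ => by simp only [hC]; ring
      _ = θ^2 * S - (lam - mu) * (θ * S) - mu * 0 + (mu - k) * S := by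
          rw [hT1, hT2, hT3, hT4]
  rw [hQ] at key
  have h2 : θ^2 - (lam - mu) * θ + (mu - (k:ℝ)) ≤ r := by
    have h3 : (θ^2 - (lam - mu) * θ + (mu - (k:ℝ))) * S ≤ r * S := by
      calc (θ^2 - (lam - mu) * θ + (mu - (k:ℝ))) * S
          = θ^2 * S - (lam - mu) * (θ * S) - mu * 0 + (mu - k) * S := by ring
        _ ≤ r * S := key
    exact le_of_mul_le_mul_right h3 hS
  rw [hθ] at h2
  rw [hr] at h2
  nlinarith [h2]

/-- **Corollary.** For a simple connected non-complete `k`-regular graph `G` on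
`n ≥ 2` vertices and reals `λ ≤ λ(G)`, `μ ≤ μ(G)`, the Laplacian spread satisfies
`𝒮_L(G) ≤ √((2k − λ + μ)² − 4μn)`. -/
theorem laplacian_spread_regular_bound (n k : ℕ) (hn : 2 ≤ n)
    (G : SimpleGraph (Fin n)) [DecidableRel G.Adj]
    (hconn : G.Connected)
    (hreg : G.IsRegularOfDegree k)
    (hnoncomplete : ∃ i j : Fin n, i ≠ j ∧ ¬ G.Adj i j)
    (lam mu : ℝ)
    (hlam : ∀ i j : Fin n, G.Adj i j →
      lam ≤ ((G.neighborFinset i ∩ G.neighborFinset j).card : ℝ))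
    (hmu : ∀ i j : Fin n, i ≠ j → ¬ G.Adj i j →
      mu ≤ ((G.neighborFinset i ∩ G.neighborFinset j).card : ℝ))
    (ℓ₁ ℓₙ₁ : ℝ)
    (hℓ₁ : IsGreatest {l : ℝ | ∃ X : Fin n → ℝ, X ≠ 0 ∧
      (G.lapMatrix ℝ).mulVec X = l • X} ℓ₁)
    (hℓₙ₁ : IsLeast {l : ℝ | ∃ X : Fin n → ℝ, X ≠ 0 ∧ (∑ i, X i) = 0 ∧
      (G.lapMatrix ℝ).mulVec X = l • X} ℓₙ₁) :
    ℓ₁ - ℓₙ₁ ≤ Real.sqrt ((2 * (k : ℝ) - lam + mu) ^ 2 - 4 * mu * (n : ℝ)) := by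
  obtain ⟨⟨Y, hY0, hYsum, hYeig⟩, -⟩ := hℓₙ₁
  obtain ⟨⟨X, hX0, hXeig⟩, hgreat⟩ := hℓ₁
  have hord : ℓₙ₁ ≤ ℓ₁ := hgreat ⟨Y, hY0, hYeig⟩
  set c : ℝ := 2 * (k:ℝ) - lam + mu with hc
  set s : ℝ := c^2 - 4*mu*(n:ℝ) with hs
  have hq1 : ℓₙ₁^2 - c*ℓₙ₁ + mu*n ≤ 0 :=
    eig_quad n k G hreg lam mu hlam hmu ℓₙ₁ Y hY0 hYsum hYeig
  have hsq1 : (2*ℓₙ₁ - c)^2 ≤ s := by rw [hs]; nlinarith [hq1]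
  have hb1 : |2*ℓₙ₁ - c| ≤ Real.sqrt s := by
    rw [← Real.sqrt_sq_eq_abs]
    exact Real.sqrt_le_sqrt hsq1
  -- column sums of the Laplacian are zero
  have hcol : ∀ j, ∑ i, (G.lapMatrix ℝ) i j = 0 := by
    intro j
    have h1 := congrFun (G.lapMatrix_mulVec_const_eq_zero (R := ℝ)) j
    simp only [Matrix.mulVec, dotProduct, mul_one, Pi.zero_apply] at h1
    calc ∑ i, (G.lapMatrix ℝ) i j = ∑ i, (G.lapMatrix ℝ) j i :=
          Finset.sum_congr rfl fun i _ => (G.isSymm_lapMatrix (R := ℝ)).apply j i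
      _ = 0 := h1
  have hXcase : ℓ₁ = 0 ∨ ∑ i, X i = 0 := by
    have h1 : ∑ i, (G.lapMatrix ℝ).mulVec X i = ℓ₁ * ∑ i, X i := by
      rw [hXeig]
      simp only [Pi.smul_apply, smul_eq_mul]
      rw [Finset.mul_sum]
    have h2 : ∑ i, (G.lapMatrix ℝ).mulVec X i = 0 := by
      simp only [Matrix.mulVec, dotProduct]
      rw [Finset.sum_comm]
      refine Finset.sum_eq_zero fun j _ => ?_
      rw [← Finset.sum_mul, hcol j, zero_mul]
    rw [h2] at h1
    rcases mul_eq_zero.mp h1.symm with h | h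
    · exact Or.inl h
    · exact Or.inr h
  rcases hXcase with h0 | hXsum
  · -- ℓ₁ = 0, so ℓₙ₁ ≥ 0 by positive semidefiniteness
    have hSY : 0 < ∑ i, Y i ^ 2 := by
      rcases Function.ne_iff.mp hY0 with ⟨i, hi⟩
      have hlt : (0:ℝ) < Y i ^ 2 :=
        lt_of_le_of_ne (sq_nonneg _) (Ne.symm (pow_ne_zero 2 hi))
      exact hlt.trans_le (Finset.single_le_sum (f := fun i => Y i ^ 2)
        (fun j _ => sq_nonneg _) (Finset.mem_univ i))
    have hpsd := (SimpleGraph.posSemidef_lapMatrix ℝ G).dotProduct_mulVec_nonneg Y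
    rw [hYeig] at hpsd
    have : (0:ℝ) ≤ ℓₙ₁ * ∑ i, Y i ^ 2 := by
      refine le_trans hpsd (le_of_eq ?_)
      simp only [dotProduct, Pi.smul_apply, smul_eq_mul, star_trivial]
      rw [Finset.mul_sum]
      exact Finset.sum_congr rfl fun i _ => by ring
    rw [mul_comm] at this
    have hnn : 0 ≤ ℓₙ₁ := nonneg_of_mul_nonneg_right this hSY
    have : ℓ₁ - ℓₙ₁ ≤ 0 := by rw [h0]; linarith
    exact this.trans (Real.sqrt_nonneg _)
  · have hq2 : ℓ₁^2 - c*ℓ₁ + mu*n ≤ 0 :=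
      eig_quad n k G hreg lam mu hlam hmu ℓ₁ X hX0 hXsum hXeig
    have hsq2 : (2*ℓ₁ - c)^2 ≤ s := by rw [hs]; nlinarith [hq2]
    have hb2 : |2*ℓ₁ - c| ≤ Real.sqrt s := by
      rw [← Real.sqrt_sq_eq_abs]
      exact Real.sqrt_le_sqrt hsq2
    have h1 := abs_le.mp hb1
    have h2 := abs_le.mp hb2
    rw [hs, hc] at *
    linarith [h1.1, h2.2]
end
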